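/- arXiv:1101.4292 — 4 statements merged into one kernel-verified Lean document; each statement's English description precedes it below -/
import Mathlib

section
/- For every d ≥ 4 there exists a lattice d-polytope P ⊂ ℝ^d such that P is hollow, P is not properly contained in any hollow lattice d-polytope, but P is properly contained in some hollow compact convex set K ⊂ ℝ^d (so P is maximal as a hollow lattice polytope but not maximal as a hollow convex body). -/
open MeasureTheory
open scoped ENNReal

/-- The set of integer lattice points of `ℝ^d`. -/
def intPts (d : ℕ) : Set (Fin d → ℝ) := {x | ∀ i, ∃ a : ℤ, x i = a}

/-- The set of points of `s·ℤ^d` inside `ℝ^d`. -/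
def sPts (s d : ℕ) : Set (Fin d → ℝ) := {x | ∀ i, ∃ a : ℤ, x i = (s : ℝ) * a}

/-- A lattice polytope: the convex hull of a nonempty finite set of lattice points. -/
def IsLatticePolytope {d : ℕ} (P : Set (Fin d → ℝ)) : Prop :=
  ∃ V : Set (Fin d → ℝ), V.Finite ∧ V.Nonempty ∧ V ⊆ intPts d ∧ P = convexHull ℝ V

/-- Full-dimensionality: the affine span is everything. -/
def IsFullDim {d : ℕ} (P : Set (Fin d → ℝ)) : Prop :=
  affineSpan ℝ P = ⊤

/-- A set is hollow if its interior contains no lattice point. -/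
def Hollow {d : ℕ} (P : Set (Fin d → ℝ)) : Prop :=
  interior P ∩ intPts d = ∅

/-- A set is `s`-hollow if its interior contains no point of `s·ℤ^d`. -/
def SHollow (s : ℕ) {d : ℕ} (P : Set (Fin d → ℝ)) : Prop :=
  interior P ∩ sPts s d = ∅

/-- Unimodular equivalence: an affine bijection of `ℝ^d` preserving `ℤ^d` maps `P` onto `Q`. -/
def UnimodEquiv {d : ℕ} (P Q : Set (Fin d → ℝ)) : Prop :=
  ∃ T : (Fin d → ℝ) ≃ᵃ[ℝ] (Fin d → ℝ), T '' intPts d = intPts d ∧ T '' P = Q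

/-- Lattice width: infimum over nonzero integer directions `u` of `max ⟨u,·⟩ - min ⟨u,·⟩`
(with value `∞` if there is no direction). -/
noncomputable def latticeWidth {n : ℕ} (K : Set (Fin n → ℝ)) : ℝ≥0∞ :=
  ⨅ u : {u : Fin n → ℤ // u ≠ 0},
    ENNReal.ofReal
      (sSup ((fun x => ∑ i, (u.1 i : ℝ) * x i) '' K) -
       sInf ((fun x => ∑ i, (u.1 i : ℝ) * x i) '' K))

/-- `α = 1/(2^(d-2) - 1)`. -/
noncomputable def alphaConst (d : ℕ) : ℝ := 1 / (2 ^ (d - 2) - 1)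

/-- The coefficient of `x_{i+1}` in the defining inequality of the simplex `Δ(d)`:
`x_1/2 + x_2/4 + ⋯ + x_{d-2}/2^{d-2} + x_{d-1}/(2^{d-1}-1) + x_d/(2^{d-1}+1+α) ≤ 1`. -/
noncomputable def coef (d : ℕ) (i : Fin d) : ℝ :=
  if (i : ℕ) < d - 2 then 1 / 2 ^ ((i : ℕ) + 1)
  else if (i : ℕ) = d - 2 then 1 / (2 ^ (d - 1) - 1)
  else 1 / (2 ^ (d - 1) + 1 + alphaConst d)

/-- The simplex `Δ(d)` of Definition 3.1. -/
noncomputable def DeltaPoly (d : ℕ) : Set (Fin d → ℝ) :=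
  {x | (∀ i, 0 ≤ x i) ∧ ∑ i, coef d i * x i ≤ 1}

/-- The coefficient of `x_{i+1}` in the extra inequality
`x_1/2 + ⋯ + x_{d-3}/2^{d-3} + (2x_{d-2} + x_{d-1} + x_d)/(2^{d-1}+1) ≤ 1`. -/
noncomputable def coef2 (d : ℕ) (i : Fin d) : ℝ :=
  if (i : ℕ) < d - 3 then 1 / 2 ^ ((i : ℕ) + 1)
  else if (i : ℕ) = d - 3 then 2 / (2 ^ (d - 1) + 1)
  else 1 / (2 ^ (d - 1) + 1)


open Set Finset

namespace NZaux

/-- generic linear functional given by coefficients -/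
noncomputable def SF {n : ℕ} (co x : Fin n → ℝ) : ℝ := ∑ i, co i * x i

variable (m : ℕ)

noncomputable def NR : ℝ := 2 ^ (m + 1)

def i0 : Fin (m + 2) := ⟨0, by omega⟩
def i1 : Fin (m + 2) := ⟨1, by omega⟩
def iL : Fin (m + 2) := ⟨m + 1, by omega⟩

noncomputable def cc : Fin (m + 2) → ℝ := fun i =>
  if i = i0 m then (NR m - 2) / (NR m * (NR m - 1))
  else if i = i1 m then 1 / (NR m - 1)
  else (1 / 2) ^ ((i : ℕ) - 1)

noncomputable def bb : ℝ := 2 / (NR m * (NR m - 1) * (NR m + 1))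

noncomputable def hcc : Fin (m + 2) → ℝ := fun i => cc m i + (if i = i0 m then bb m else 0)

lemma NR_ge (hm : 2 ≤ m) : (8 : ℝ) ≤ NR m := by
  have : (2:ℝ)^3 ≤ 2 ^ (m+1) := by
    apply pow_le_pow_right₀ (by norm_num)
    omega
  norm_num at this
  simpa [NR] using this

lemma NR_pos : (0:ℝ) < NR m := by unfold NR; positivity

lemma halfpow : (1/2 : ℝ) ^ m = 2 / NR m := by
  have h2 : (0:ℝ) < 2^m := by positivity
  rw [NR, pow_succ, div_pow, one_pow, div_eq_div_iff (ne_of_gt h2) (by positivity)]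
  ring

lemma iL_ne_i0 : iL m ≠ i0 m := by simp [iL, i0, Fin.ext_iff]
lemma iL_ne_i1 (hm : 2 ≤ m) : iL m ≠ i1 m := by simp [iL, i1, Fin.ext_iff]; omega

lemma cc_iL (hm : 2 ≤ m) : cc m (iL m) = 2 / NR m := by
  rw [cc, if_neg (iL_ne_i0 m), if_neg (iL_ne_i1 m hm)]
  have : ((iL m : ℕ)) - 1 = m := by simp [iL]
  rw [this, halfpow]

lemma cc_i0 : cc m (i0 m) = (NR m - 2) / (NR m * (NR m - 1)) := by simp [cc]

lemma cc_i1 (hm : 2 ≤ m) : cc m (i1 m) = 1 / (NR m - 1) := by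
  have : i1 m ≠ i0 m := by simp [i1, i0, Fin.ext_iff]
  rw [cc, if_neg this, if_pos rfl]

lemma cc_pos (hm : 2 ≤ m) : ∀ i, 0 < cc m i := by
  intro i
  have h8 := NR_ge m hm
  rw [cc]
  split_ifs
  · apply div_pos <;> nlinarith
  · apply div_pos <;> nlinarith
  · positivity

lemma cc_le_half (hm : 2 ≤ m) : ∀ i, cc m i ≤ 1 / 2 := by
  intro i
  have h8 := NR_ge m hm
  rw [cc]
  split_ifs with h1 h2
  · rw [div_le_iff₀ (by nlinarith)]; nlinarith
  · rw [div_le_iff₀ (by nlinarith)]; nlinarith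
  · have hk0 : (i:ℕ) ≠ 0 := by
      intro h; exact h1 (by simp [i0, Fin.ext_iff, h])
    have hk1 : (i:ℕ) ≠ 1 := by
      intro h; exact h2 (by simp [i1, Fin.ext_iff, h])
    have hi1 : 1 ≤ (i:ℕ) - 1 := by omega
    calc ((1:ℝ)/2) ^ ((i:ℕ) - 1) ≤ (1/2) ^ 1 := by
          apply pow_le_pow_of_le_one (by norm_num) (by norm_num) hi1
      _ = 1/2 := pow_one _
lemma prod_pos (hm : 2 ≤ m) : 0 < NR m * (NR m - 1) * (NR m + 1) := by
  have h8 := NR_ge m hm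
  apply mul_pos (mul_pos (by linarith) (by linarith)) (by linarith)

lemma bb_pos (hm : 2 ≤ m) : 0 < bb m := by
  unfold bb; exact div_pos (by norm_num) (prod_pos m hm)

lemma hcc_i0 (hm : 2 ≤ m) : hcc m (i0 m) = 1 / (NR m + 1) := by
  have h8 := NR_ge m hm
  have hN0 : NR m ≠ 0 := by linarith
  have hN1 : NR m - 1 ≠ 0 := by linarith
  have hN2 : NR m + 1 ≠ 0 := by linarith
  rw [hcc, if_pos rfl, cc_i0, bb]
  field_simp
  ring

lemma hcc_eq {i : Fin (m+2)} (h : i ≠ i0 m) : hcc m i = cc m i := by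
  rw [hcc, if_neg h, add_zero]

lemma hcc_lb (hm : 2 ≤ m) : ∀ i, 1 / (NR m + 1) ≤ hcc m i := by
  intro i
  have h8 := NR_ge m hm
  by_cases h : i = i0 m
  · rw [h, hcc_i0 m hm]
  · rw [hcc_eq m h, cc]
    rw [if_neg h]
    split_ifs
    · rw [div_le_div_iff₀ (by nlinarith) (by nlinarith)]; nlinarith
    · have : (2:ℝ) / NR m ≤ (1/2) ^ ((i:ℕ) - 1) := by
        rw [← halfpow]
        apply pow_le_pow_of_le_one (by norm_num) (by norm_num)
        have := i.isLt; omega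
      have h2 : (1:ℝ) / (NR m + 1) ≤ 2 / NR m := by
        rw [div_le_div_iff₀ (by nlinarith) (by nlinarith)]; nlinarith
      linarith

lemma hcc_pos (hm : 2 ≤ m) : ∀ i, 0 < hcc m i := by
  intro i
  have h8 := NR_ge m hm
  have := hcc_lb m hm i
  have : (0:ℝ) < 1 / (NR m + 1) := by positivity
  linarith [hcc_lb m hm i]

lemma cc_le_hcc (hm : 2 ≤ m) : ∀ i, cc m i ≤ hcc m i := by
  intro i
  rw [hcc]
  split_ifs with h
  · have : 0 ≤ bb m := le_of_lt (bb_pos m hm)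
    linarith
  · simp

lemma hcc_le_half (hm : 2 ≤ m) : ∀ i, hcc m i ≤ 1 / 2 := by
  intro i
  have h8 := NR_ge m hm
  by_cases h : i = i0 m
  · rw [h, hcc_i0 m hm, div_le_div_iff₀ (by nlinarith) (by norm_num)]; nlinarith
  · rw [hcc_eq m h]; exact cc_le_half m hm i

lemma geom (n : ℕ) : ∑ k ∈ Finset.range n, ((1:ℝ)/2) ^ (k+1) = 1 - (1/2)^n := by
  induction n with
  | zero => simp
  | succ n ih => rw [Finset.sum_range_succ, ih, pow_succ]; ring

lemma sum_cc (hm : 2 ≤ m) : ∑ i, cc m i = 1 := by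
  have h8 := NR_ge m hm
  have hf : ∀ i : Fin (m+2), cc m i =
      (fun n : ℕ => if n = 0 then (NR m - 2) / (NR m * (NR m - 1))
        else if n = 1 then 1 / (NR m - 1) else (1/2:ℝ) ^ (n - 1)) (i : ℕ) := by
    intro i
    rw [cc]
    have h0 : (i = i0 m) ↔ ((i:ℕ) = 0) := by rw [Fin.ext_iff]; exact Iff.rfl
    have h1 : (i = i1 m) ↔ ((i:ℕ) = 1) := by simp [i1, Fin.ext_iff]
    simp only [h0, h1]
  calc ∑ i, cc m i = ∑ n ∈ Finset.range (m+2), (fun n : ℕ => if n = 0 then (NR m - 2) / (NR m * (NR m - 1))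
        else if n = 1 then 1 / (NR m - 1) else (1/2:ℝ) ^ (n - 1)) n := by
        rw [← Fin.sum_univ_eq_sum_range]
        exact Finset.sum_congr rfl (fun i _ => hf i)
    _ = 1 := by
        rw [Finset.sum_range_succ', Finset.sum_range_succ']
        simp only [if_neg (by omega : ¬ (_:ℕ) + 1 + 1 = 0), if_neg (by omega : ¬ (_:ℕ)+1+1 = 1)]
        have : ∀ k : ℕ, k + 1 + 1 - 1 = k + 1 := fun k => by omega
        rw [Finset.sum_congr rfl (fun k _ => by rw [this k])]
        rw [geom]
        rw [halfpow]
        simp only [if_neg (by omega : ¬ (0:ℕ)+1 = 0), if_pos rfl, if_pos rfl, if_true]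
        have hN0 : NR m ≠ 0 := by linarith
        have hN1 : NR m - 1 ≠ 0 := by linarith
        field_simp
        ring

lemma sum_hcc (hm : 2 ≤ m) : ∑ i, hcc m i = 1 + bb m := by
  unfold hcc
  rw [Finset.sum_add_distrib, sum_cc m hm, Finset.sum_ite_eq' Finset.univ (i0 m) (fun _ => bb m)]
  simp

lemma SF_add {n : ℕ} (co x y : Fin n → ℝ) : SF co (x + y) = SF co x + SF co y := by
  unfold SF
  rw [← Finset.sum_add_distrib]
  exact Finset.sum_congr rfl (fun i _ => by simp [mul_add])

lemma SF_smul {n : ℕ} (co x : Fin n → ℝ) (a : ℝ) : SF co (a • x) = a * SF co x := by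
  unfold SF
  rw [Finset.mul_sum]
  exact Finset.sum_congr rfl (fun i _ => by simp; ring)

lemma SF_comb {n : ℕ} (co w v : Fin n → ℝ) (s : ℝ) :
    SF co ((1-s)⁻¹ • (w + (-s) • v)) = (1-s)⁻¹ * (SF co w - s * SF co v) := by
  rw [SF_smul, SF_add, SF_smul]
  ring

lemma SF_abs_le {n : ℕ} (co v : Fin n → ℝ) (C : ℝ) (h : ∀ i, |co i| ≤ C) :
    |SF co v| ≤ C * ∑ i, |v i| := by
  calc |SF co v| ≤ ∑ i, |co i * v i| := Finset.abs_sum_le_sum_abs _ _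
    _ ≤ ∑ i, C * |v i| := by
        apply Finset.sum_le_sum
        intro i _
        rw [abs_mul]
        exact mul_le_mul_of_nonneg_right (h i) (abs_nonneg _)
    _ = C * ∑ i, |v i| := by rw [Finset.mul_sum]

lemma SF_cont {n : ℕ} (co : Fin n → ℝ) : Continuous (fun x : Fin n → ℝ => SF co x) := by
  unfold SF
  exact continuous_finset_sum _ (fun i _ => (continuous_const.mul (continuous_apply i)))

/-- the hollow body -/
def KK : Set (Fin (m+2) → ℝ) := {x | (∀ i, 0 ≤ x i) ∧ SF (cc m) x ≤ 1}

/-- its lattice points -/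
def VV : Set (Fin (m+2) → ℝ) := KK m ∩ intPts (m+2)

/-- the lattice polytope -/
noncomputable def PP : Set (Fin (m+2) → ℝ) := convexHull ℝ (VV m)

lemma KK_convex : Convex ℝ (KK m) := by
  intro x hx y hy a b ha hb hab
  constructor
  · intro i
    have := hx.1 i; have := hy.1 i
    simp only [Pi.add_apply, Pi.smul_apply, smul_eq_mul]
    nlinarith [hx.1 i, hy.1 i]
  · have : SF (cc m) (a • x + b • y) = a * SF (cc m) x + b * SF (cc m) y := by
      rw [SF_add, SF_smul, SF_smul]
    rw [this]
    nlinarith [hx.2, hy.2]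

lemma KK_closed : IsClosed (KK m) := by
  have : KK m = (⋂ i, {x : Fin (m+2) → ℝ | 0 ≤ x i}) ∩ {x | SF (cc m) x ≤ 1} := by
    ext x; simp [KK, Set.mem_iInter]
  rw [this]
  exact IsClosed.inter
    (isClosed_iInter (fun i => isClosed_le continuous_const (continuous_apply i)))
    (isClosed_le (SF_cont _) continuous_const)

lemma cc_lb (hm : 2 ≤ m) : ∀ i, 1 / (NR m + 2) ≤ cc m i := by
  intro i
  have h8 := NR_ge m hm
  rw [cc]
  split_ifs
  · rw [div_le_div_iff₀ (by linarith) (by nlinarith)]; nlinarith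
  · rw [div_le_div_iff₀ (by linarith) (by linarith)]; nlinarith
  · have : (2:ℝ) / NR m ≤ (1/2) ^ ((i:ℕ) - 1) := by
      rw [← halfpow]
      apply pow_le_pow_of_le_one (by norm_num) (by norm_num)
      have := i.isLt; omega
    have h2 : (1:ℝ) / (NR m + 2) ≤ 2 / NR m := by
      rw [div_le_div_iff₀ (by linarith) (by linarith)]; nlinarith
    linarith

lemma KK_coord_le (hm : 2 ≤ m) {x : Fin (m+2) → ℝ} (hx : x ∈ KK m) (i : Fin (m+2)) :
    x i ≤ NR m + 2 := by
  have h8 := NR_ge m hm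
  have h1 : cc m i * x i ≤ 1 := by
    refine le_trans ?_ hx.2
    unfold SF
    apply Finset.single_le_sum (f := fun j => cc m j * x j) ?_ (Finset.mem_univ i)
    intro j _
    exact mul_nonneg (le_of_lt (cc_pos m hm j)) (hx.1 j)
  have h2 := cc_lb m hm i
  have h4 : 1/(NR m + 2) * x i ≤ 1 := le_trans (mul_le_mul_of_nonneg_right h2 (hx.1 i)) h1
  rw [one_div_mul_eq_div, div_le_one (by linarith : (0:ℝ) < NR m + 2)] at h4
  exact h4

lemma KK_compact (hm : 2 ≤ m) : IsCompact (KK m) := by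
  apply IsCompact.of_isClosed_subset
    (isCompact_univ_pi (fun i : Fin (m+2) => isCompact_Icc (a := (0:ℝ)) (b := NR m + 2)))
    (KK_closed m)
  intro x hx
  simp only [Set.mem_pi, Set.mem_univ, Set.mem_Icc, forall_true_left]
  intro i
  exact ⟨hx.1 i, KK_coord_le m hm hx i⟩

lemma KK_hollow (hm : 2 ≤ m) : interior (KK m) ∩ intPts (m+2) = ∅ := by
  have h8 := NR_ge m hm
  rw [Set.eq_empty_iff_forall_notMem]
  rintro z ⟨hzint, hzlat⟩
  rw [mem_interior_iff_mem_nhds, Metric.mem_nhds_iff] at hzint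
  obtain ⟨ε, hε, hball⟩ := hzint
  -- each coordinate is ≥ 1
  have hcoord : ∀ i, 1 ≤ z i := by
    intro i
    obtain ⟨a, ha⟩ := hzlat i
    have hmem : (fun k => if k = i then z k - ε/2 else z k) ∈ KK m := by
      apply hball
      rw [Metric.mem_ball]
      have : dist (fun k => if k = i then z k - ε/2 else z k) z ≤ ε/2 := by
        rw [dist_pi_le_iff (by linarith)]
        intro b
        by_cases hb : b = i
        · rw [if_pos hb, Real.dist_eq,
            show z b - ε/2 - z b = -(ε/2) by ring, abs_neg, abs_of_nonneg (by linarith)]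
        · simp only [if_neg hb, Real.dist_eq, sub_self, abs_zero]
          linarith
      linarith
    have h0 : (0:ℝ) ≤ z i - ε/2 := by
      have := hmem.1 i
      simpa using this
    have hza : 0 < z i := by linarith
    rw [ha] at hza ⊢
    have : 0 < a := by exact_mod_cast hza
    exact_mod_cast this
  -- SF cc z < 1
  have hlt : SF (cc m) z < 1 := by
    have hz' : (fun k => if k = i0 m then z k + ε/2 else z k) ∈ KK m := by
      apply hball
      rw [Metric.mem_ball]
      have : dist (fun k => if k = i0 m then z k + ε/2 else z k) z ≤ ε/2 := by
        rw [dist_pi_le_iff (by linarith)]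
        intro b
        by_cases hb : b = i0 m
        · rw [if_pos hb, Real.dist_eq,
            show z b + ε/2 - z b = ε/2 by ring, abs_of_nonneg (by linarith)]
        · simp only [if_neg hb, Real.dist_eq, sub_self, abs_zero]
          linarith
      linarith
    have h2 := hz'.2
    have h3 : SF (cc m) (fun k => if k = i0 m then z k + ε/2 else z k)
        = SF (cc m) z + cc m (i0 m) * (ε/2) := by
      unfold SF
      have hpt : ∀ i : Fin (m+2), cc m i * (if i = i0 m then z i + ε/2 else z i)
          = cc m i * z i + (if i = i0 m then cc m (i0 m) * (ε/2) else 0) := by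
        intro i
        by_cases hi : i = i0 m
        · rw [if_pos hi, if_pos hi, hi]; ring
        · simp only [if_neg hi, add_zero]
      rw [Finset.sum_congr rfl (fun i _ => hpt i), Finset.sum_add_distrib,
        Finset.sum_ite_eq' Finset.univ (i0 m) (fun _ => cc m (i0 m) * (ε/2))]
      simp
    rw [h3] at h2
    have : 0 < cc m (i0 m) * (ε/2) := mul_pos (cc_pos m hm _) (by linarith)
    linarith
  have hge : 1 ≤ SF (cc m) z := by
    rw [← sum_cc m hm]
    unfold SF
    apply Finset.sum_le_sum
    intro i _
    nlinarith [cc_pos m hm i, hcoord i]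
  linarith
lemma SF_single' {n : ℕ} (i : Fin n) (a : ℝ) (x : Fin n → ℝ) :
    SF (fun k => if k = i then a else 0) x = a * x i := by
  unfold SF
  rw [Finset.sum_congr rfl (fun k _ => show (if k = i then a else 0) * x k
      = if k = i then a * x i else 0 by by_cases h : k = i <;> simp [h])]
  rw [Finset.sum_ite_eq' Finset.univ i (fun _ => a * x i)]
  simp

lemma SF_pair' {n : ℕ} {i j : Fin n} (hij : i ≠ j) (a b : ℝ) (x : Fin n → ℝ) :
    SF (fun k => if k = i then a else if k = j then b else 0) x = a * x i + b * x j := by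
  unfold SF
  rw [Finset.sum_congr rfl (fun k _ => show (if k = i then a else if k = j then b else 0) * x k
      = (if k = i then a * x i else 0) + (if k = j then b * x j else 0) by
        by_cases h1 : k = i
        · subst h1; rw [if_pos rfl, if_pos rfl, if_neg hij, add_zero]
        · by_cases h2 : k = j
          · subst h2; rw [if_neg h1, if_pos rfl, if_pos rfl, if_neg h1, zero_add]
          · simp [h1, h2])]
  rw [Finset.sum_add_distrib, Finset.sum_ite_eq' Finset.univ i (fun _ => a * x i),
    Finset.sum_ite_eq' Finset.univ j (fun _ => b * x j)]
  simp

lemma SF_single {n : ℕ} (co : Fin n → ℝ) (i : Fin n) (a : ℝ) :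
    SF co (fun k => if k = i then a else 0) = co i * a := by
  unfold SF
  rw [Finset.sum_congr rfl (fun k _ => show co k * (if k = i then a else 0)
      = if k = i then co i * a else 0 by by_cases h : k = i <;> simp [h])]
  rw [Finset.sum_ite_eq' Finset.univ i (fun _ => co i * a)]
  simp

lemma SF_pair {n : ℕ} (co : Fin n → ℝ) {i j : Fin n} (hij : i ≠ j) (a b : ℝ) :
    SF co (fun k => if k = i then a else if k = j then b else 0) = co i * a + co j * b := by
  unfold SF
  rw [Finset.sum_congr rfl (fun k _ => show co k * (if k = i then a else if k = j then b else 0)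
      = (if k = i then co i * a else 0) + (if k = j then co j * b else 0) by
        by_cases h1 : k = i
        · subst h1; rw [if_pos rfl, if_pos rfl, if_neg hij, add_zero]
        · by_cases h2 : k = j
          · subst h2; rw [if_neg h1, if_pos rfl, if_pos rfl, if_neg h1, zero_add]
          · simp [h1, h2])]
  rw [Finset.sum_add_distrib, Finset.sum_ite_eq' Finset.univ i (fun _ => co i * a),
    Finset.sum_ite_eq' Finset.univ j (fun _ => co j * b)]
  simp

/-- scaled basis vertices of the polytope -/
noncomputable def vert : Fin (m+2) → (Fin (m+2) → ℝ) := fun i k => if k = i then (hcc m i)⁻¹ else 0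

/-- the extra slant vertex -/
noncomputable def qq : Fin (m+2) → ℝ := fun k =>
  if k = i0 m then NR m - 1 else if k = iL m then 1 else 0

/-- base points of the simplex T -/
noncomputable def bp : Fin (m+2) → (Fin (m+2) → ℝ) := fun j => if j = i0 m then qq m else vert m j

/-- barycentric coefficient functionals for T -/
noncomputable def tco : Fin (m+2) → Fin (m+2) → ℝ := fun j k =>
  if j = i0 m then (if k = i0 m then 1/(NR m - 1) else 0)
  else if j = iL m then (if k = iL m then cc m (iL m) else if k = i0 m then -(cc m (iL m))/(NR m - 1) else 0)
  else (if k = j then cc m j else 0)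

noncomputable def TW (x : Fin (m+2) → ℝ) (j : Fin (m+2)) : ℝ := SF (tco m j) x

lemma Ncast : NR m = ((2^(m+1) : ℤ) : ℝ) := by rw [NR]; push_cast; ring

/-- the integer values of the reciprocals -/
def MInt : Fin (m+2) → ℤ := fun i =>
  if i = i0 m then 2^(m+1) + 1 else if i = i1 m then 2^(m+1) - 1 else 2^((i:ℕ)-1)

lemma hcc_inv_int (hm : 2 ≤ m) (i : Fin (m+2)) : (hcc m i)⁻¹ = ((MInt m i : ℤ) : ℝ) := by
  have h8 := NR_ge m hm
  rw [MInt]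
  by_cases h0 : i = i0 m
  · rw [if_pos h0, h0, hcc_i0 m hm, one_div, inv_inv]
    push_cast; rw [NR]
  · rw [if_neg h0, hcc_eq m h0]
    by_cases h1 : i = i1 m
    · rw [if_pos h1, h1, cc_i1 m hm, one_div, inv_inv]
      push_cast; rw [NR]
    · rw [if_neg h1, cc, if_neg h0, if_neg h1]
      rw [div_pow, one_pow, one_div, inv_inv]
      push_cast; ring

lemma zero_mem : (0 : Fin (m+2) → ℝ) ∈ VV m := by
  refine ⟨⟨fun i => le_refl _, ?_⟩, fun i => ⟨0, by norm_num⟩⟩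
  unfold SF
  simp

lemma vert_mem (hm : 2 ≤ m) (i : Fin (m+2)) : vert m i ∈ VV m := by
  have hpos := hcc_pos m hm i
  refine ⟨⟨?_, ?_⟩, ?_⟩
  · intro k
    simp only [vert]
    split_ifs
    · positivity
    · exact le_refl 0
  · have hs : SF (cc m) (vert m i) = cc m i * (hcc m i)⁻¹ := SF_single (cc m) i _
    rw [hs]
    have h1 : cc m i * (hcc m i)⁻¹ ≤ hcc m i * (hcc m i)⁻¹ :=
      mul_le_mul_of_nonneg_right (cc_le_hcc m hm i) (by positivity)
    rw [mul_inv_cancel₀ (ne_of_gt hpos)] at h1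
    exact h1
  · intro k
    simp only [vert]
    split_ifs
    · exact ⟨MInt m i, hcc_inv_int m hm i⟩
    · exact ⟨0, by norm_num⟩

lemma i0_ne_iL : i0 m ≠ iL m := by simp [i0, iL, Fin.ext_iff]

lemma qq_mem (hm : 2 ≤ m) : qq m ∈ VV m := by
  have h8 := NR_ge m hm
  refine ⟨⟨?_, ?_⟩, ?_⟩
  · intro k
    simp only [qq]
    split_ifs <;> linarith
  · have hs : SF (cc m) (qq m) = cc m (i0 m) * (NR m - 1) + cc m (iL m) * 1 :=
      SF_pair (cc m) (i0_ne_iL m) _ _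
    rw [hs, cc_i0, cc_iL m hm]
    have hN0 : NR m ≠ 0 := by linarith
    have hN1 : NR m - 1 ≠ 0 := by linarith
    rw [show (NR m - 2)/(NR m * (NR m -1)) * (NR m -1) + 2/NR m * 1
        = (NR m - 2)/NR m + 2/NR m by field_simp]
    rw [← add_div, div_le_one (by linarith)]
    linarith
  · intro k
    simp only [qq]
    split_ifs
    · exact ⟨2^(m+1) - 1, by push_cast; rw [NR]⟩
    · exact ⟨1, by norm_num⟩
    · exact ⟨0, by norm_num⟩

lemma PP_subset_KK : PP m ⊆ KK m :=
  convexHull_min Set.inter_subset_left (KK_convex m)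

lemma mem_PP (x : Fin (m+2) → ℝ) (wA : ℝ) (w : Fin (m+2) → ℝ) (zB : Fin (m+2) → Fin (m+2) → ℝ)
    (hA : 0 ≤ wA) (hw : ∀ j, 0 ≤ w j) (hz : ∀ j, zB j ∈ VV m)
    (hsum : wA + ∑ j, w j = 1) (hx : ∀ k, ∑ j, w j * zB j k = x k) : x ∈ PP m := by
  classical
  set ww : Option (Fin (m+2)) → ℝ := fun o => o.elim wA w with hww
  set zz : Option (Fin (m+2)) → (Fin (m+2) → ℝ) := fun o => o.elim 0 zB with hzz
  have hsum' : ∑ o : Option (Fin (m+2)), ww o = 1 := by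
    rw [Fintype.sum_option]; exact hsum
  have hmem : Finset.univ.centerMass ww zz ∈ convexHull ℝ (VV m) := by
    apply Finset.centerMass_mem_convexHull
    · intro o _
      cases o
      · exact hA
      · exact hw _
    · rw [hsum']; norm_num
    · intro o _
      cases o
      · exact zero_mem m
      · exact hz _
  rw [Finset.centerMass_eq_of_sum_1 _ _ hsum'] at hmem
  have hvec : ∑ o : Option (Fin (m+2)), ww o • zz o = x := by
    rw [Fintype.sum_option]
    funext k
    simp only [Pi.add_apply, Finset.sum_apply, Pi.smul_apply, smul_eq_mul]
    have h1 : ww none * zz none k = 0 := by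
      show wA * ((0 : Fin (m+2) → ℝ) k) = 0
      simp
    have h2 : ∀ j, ww (some j) * zz (some j) k = w j * zB j k := fun j => rfl
    rw [h1, zero_add, Finset.sum_congr rfl (fun j _ => h2 j)]
    exact hx k
  rwa [hvec] at hmem
lemma iL_ne_i0' : iL m ≠ i0 m := fun h => i0_ne_iL m h.symm

lemma tco_i0 : tco m (i0 m) = fun k => if k = i0 m then 1/(NR m - 1) else 0 := by
  funext k; simp [tco]

lemma tco_iL (hm : 2 ≤ m) : tco m (iL m) = fun k =>
    if k = iL m then cc m (iL m) else if k = i0 m then -(cc m (iL m))/(NR m - 1) else 0 := by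
  funext k; simp [tco, iL_ne_i0' m]

lemma tco_mid {j : Fin (m+2)} (h0 : j ≠ i0 m) (hL : j ≠ iL m) :
    tco m j = fun k => if k = j then cc m j else 0 := by
  funext k; simp [tco, h0, hL]

lemma TW_i0 (x : Fin (m+2) → ℝ) : TW m x (i0 m) = (1/(NR m - 1)) * x (i0 m) := by
  rw [TW, tco_i0, SF_single']

lemma TW_iL (hm : 2 ≤ m) (x : Fin (m+2) → ℝ) :
    TW m x (iL m) = cc m (iL m) * x (iL m) + (-(cc m (iL m))/(NR m - 1)) * x (i0 m) := by
  rw [TW, tco_iL m hm, SF_pair' (iL_ne_i0' m)]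

lemma TW_mid {j : Fin (m+2)} (h0 : j ≠ i0 m) (hL : j ≠ iL m) (x : Fin (m+2) → ℝ) :
    TW m x j = cc m j * x j := by
  rw [TW, tco_mid m h0 hL, SF_single']

lemma tco_abs (hm : 2 ≤ m) : ∀ j k, |tco m j k| ≤ 1 := by
  have h8 := NR_ge m hm
  intro j k
  rw [tco]
  have hcl := cc_le_half m hm
  have hcp := cc_pos m hm
  split_ifs
  · rw [abs_of_nonneg (div_nonneg (by norm_num) (by linarith) : (0:ℝ) ≤ 1/(NR m -1))]
    rw [div_le_one (by linarith)]; linarith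
  · simp
  · rw [abs_of_nonneg (le_of_lt (hcp _))]; linarith [hcl (iL m), hcp (iL m)]
  · rw [abs_of_nonpos (by
      apply div_nonpos_of_nonpos_of_nonneg
      · linarith [hcp (iL m)]
      · linarith), neg_div, neg_neg]
    rw [div_le_one (by linarith)]
    linarith [hcl (iL m)]
  · simp
  · rw [abs_of_nonneg (le_of_lt (hcp _))]; linarith [hcl j]
  · simp

lemma TW_abs_le (hm : 2 ≤ m) (v : Fin (m+2) → ℝ) (j : Fin (m+2)) :
    |TW m v j| ≤ ∑ i, |v i| := by
  have := SF_abs_le (tco m j) v 1 (tco_abs m hm j)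
  rw [one_mul] at this
  exact this

lemma cc_lb' (hm : 2 ≤ m) {j : Fin (m+2)} (h0 : j ≠ i0 m) : 1/NR m ≤ cc m j := by
  have h8 := NR_ge m hm
  rw [cc, if_neg h0]
  split_ifs
  · rw [div_le_div_iff₀ (by linarith) (by linarith)]; linarith
  · have : (2:ℝ) / NR m ≤ (1/2) ^ ((j:ℕ) - 1) := by
      rw [← halfpow]
      apply pow_le_pow_of_le_one (by norm_num) (by norm_num)
      have := j.isLt; omega
    have h2 : (1:ℝ)/NR m ≤ 2/NR m := by
      rw [div_le_div_iff₀ (by linarith) (by linarith)]; linarith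
    linarith

lemma onev_lb (hm : 2 ≤ m) (j : Fin (m+2)) : 1/NR m ≤ TW m (fun _ => 1) j := by
  have h8 := NR_ge m hm
  by_cases h0 : j = i0 m
  · rw [h0, TW_i0]
    rw [mul_one, div_le_div_iff₀ (by linarith) (by linarith)]; linarith
  · by_cases hL : j = iL m
    · rw [hL, TW_iL m hm, cc_iL m hm]
      have hN0 : NR m ≠ 0 := by linarith
      have hN1 : NR m - 1 ≠ 0 := by linarith
      rw [mul_one, div_le_iff₀ (by linarith : (0:ℝ) < NR m)]
      rw [show 2/NR m + -(2/NR m)/(NR m -1) * 1 = 2*(NR m - 2)/(NR m * (NR m -1)) by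
        field_simp; ring]
      rw [div_mul_eq_mul_div, le_div_iff₀ (by nlinarith)]
      nlinarith
    · rw [TW_mid m h0 hL, mul_one]
      exact cc_lb' m hm h0

lemma TWsum (hm : 2 ≤ m) (x : Fin (m+2) → ℝ) : ∑ j, TW m x j = SF (cc m) x := by
  have h8 := NR_ge m hm
  have hpt : ∀ j, TW m x j = cc m j * x j
      + ((if j = i0 m then (1/(NR m -1) - cc m (i0 m)) * x (i0 m) else 0)
        + (if j = iL m then -(cc m (iL m))/(NR m -1) * x (i0 m) else 0)) := by
    intro j
    by_cases h0 : j = i0 m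
    · rw [h0, TW_i0, if_pos rfl, if_neg (i0_ne_iL m)]
      ring
    · by_cases hL : j = iL m
      · rw [hL, TW_iL m hm, if_neg (iL_ne_i0' m), if_pos rfl]
        ring
      · rw [TW_mid m h0 hL, if_neg h0, if_neg hL]
        ring
  rw [Finset.sum_congr rfl (fun j _ => hpt j), Finset.sum_add_distrib, Finset.sum_add_distrib,
    Finset.sum_ite_eq' Finset.univ (i0 m), Finset.sum_ite_eq' Finset.univ (iL m)]
  simp only [Finset.mem_univ, if_true]
  have hz : (1/(NR m -1) - cc m (i0 m)) * x (i0 m) + -(cc m (iL m))/(NR m -1) * x (i0 m) = 0 := by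
    rw [cc_i0, cc_iL m hm]
    have hN0 : NR m ≠ 0 := by linarith
    have hN1 : NR m - 1 ≠ 0 := by linarith
    field_simp
    ring
  have hS : ∑ j, cc m j * x j = SF (cc m) x := rfl
  linarith [hz, hS]

lemma bp_mem (hm : 2 ≤ m) (j : Fin (m+2)) : bp m j ∈ VV m := by
  rw [bp]
  split_ifs
  · exact qq_mem m hm
  · exact vert_mem m hm j

lemma qq_i0 : qq m (i0 m) = NR m - 1 := by simp [qq]
lemma qq_iL : qq m (iL m) = 1 := by simp [qq, iL_ne_i0' m]
lemma qq_other {k : Fin (m+2)} (h0 : k ≠ i0 m) (hL : k ≠ iL m) : qq m k = 0 := by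
  simp [qq, h0, hL]

lemma bp_i0k (k : Fin (m+2)) : bp m (i0 m) k = qq m k := by rw [bp, if_pos rfl]

lemma bp_vk (hm : 2 ≤ m) {j : Fin (m+2)} (h0 : j ≠ i0 m) (k : Fin (m+2)) :
    bp m j k = if k = j then (cc m j)⁻¹ else 0 := by
  rw [bp, if_neg h0]
  show (if k = j then (hcc m j)⁻¹ else 0) = _
  rw [hcc_eq m h0]

lemma TWvec (hm : 2 ≤ m) (x : Fin (m+2) → ℝ) (k : Fin (m+2)) :
    ∑ j, TW m x j * bp m j k = x k := by
  have h8 := NR_ge m hm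
  have hN1 : NR m - 1 ≠ 0 := by linarith
  by_cases hk0 : k = i0 m
  · have hpt : ∀ j, TW m x j * bp m j k = (if k = j then x k else 0) := by
      intro j
      by_cases h0 : j = i0 m
      · rw [h0, hk0, bp_i0k, qq_i0, TW_i0, if_pos rfl]
        field_simp
      · rw [bp_vk m hm h0 k, if_neg (fun h : k = j => h0 (h ▸ hk0)),
          if_neg (fun h : k = j => h0 (h ▸ hk0)), mul_zero]
    rw [Finset.sum_congr rfl (fun j _ => hpt j), Finset.sum_ite_eq]
    simp
  · by_cases hkL : k = iL m
    · have hpt : ∀ j, TW m x j * bp m j k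
          = (if j = i0 m then (1/(NR m -1)) * x (i0 m) else 0)
            + (if j = iL m then x (iL m) - (1/(NR m - 1)) * x (i0 m) else 0) := by
        intro j
        by_cases h0 : j = i0 m
        · rw [if_pos h0, if_neg (fun h : j = iL m => (i0_ne_iL m) (h0.symm.trans h)),
            h0, bp_i0k, hkL, qq_iL, TW_i0]
          ring
        · rw [if_neg h0]
          by_cases hL : j = iL m
          · rw [if_pos hL, bp_vk m hm h0 k, if_pos (hkL.trans hL.symm), hL,
              TW_iL m hm]
            have hcL : cc m (iL m) ≠ 0 := ne_of_gt (cc_pos m hm _)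
            field_simp
            ring
          · rw [if_neg hL, bp_vk m hm h0 k,
              if_neg (fun h : k = j => hL (h ▸ hkL)), mul_zero]
            norm_num
      rw [Finset.sum_congr rfl (fun j _ => hpt j), Finset.sum_add_distrib,
        Finset.sum_ite_eq' Finset.univ (i0 m), Finset.sum_ite_eq' Finset.univ (iL m)]
      simp only [Finset.mem_univ, if_true]
      rw [hkL]
      ring
    · have hpt : ∀ j, TW m x j * bp m j k = (if k = j then x k else 0) := by
        intro j
        by_cases h0 : j = i0 m
        · rw [h0, bp_i0k, qq_other m hk0 hkL, mul_zero, if_neg hk0]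
        · rw [bp_vk m hm h0 k]
          by_cases hjk : k = j
          · rw [if_pos hjk, if_pos hjk,
              TW_mid m h0 (fun h : j = iL m => hkL (hjk.trans h))]
            have : cc m j ≠ 0 := ne_of_gt (cc_pos m hm _)
            rw [hjk]
            field_simp
          · rw [if_neg hjk, if_neg hjk, mul_zero]
      rw [Finset.sum_congr rfl (fun j _ => hpt j), Finset.sum_ite_eq]
      simp

/-- open set inside the axis simplex -/
def OS : Set (Fin (m+2) → ℝ) := {x | (∀ i, 0 < x i) ∧ SF (hcc m) x < 1}

/-- open set inside the slant simplex -/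
def OT : Set (Fin (m+2) → ℝ) := {x | (∀ j, 0 < TW m x j) ∧ SF (cc m) x < 1}

lemma OS_open : IsOpen (OS m) := by
  have : OS m = (⋂ i, {x : Fin (m+2) → ℝ | 0 < x i}) ∩ {x | SF (hcc m) x < 1} := by
    ext x; simp [OS, Set.mem_iInter]
  rw [this]
  exact IsOpen.inter
    (isOpen_iInter_of_finite (fun i => isOpen_lt continuous_const (continuous_apply i)))
    (isOpen_lt (SF_cont _) continuous_const)

lemma OT_open : IsOpen (OT m) := by
  have : OT m = (⋂ j, {x : Fin (m+2) → ℝ | 0 < TW m x j}) ∩ {x | SF (cc m) x < 1} := by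
    ext x; simp [OT, Set.mem_iInter]
  rw [this]
  exact IsOpen.inter
    (isOpen_iInter_of_finite (fun j => isOpen_lt continuous_const (SF_cont _)))
    (isOpen_lt (SF_cont _) continuous_const)

lemma OS_subset_PP (hm : 2 ≤ m) : OS m ⊆ PP m := by
  rintro x ⟨hpos, hlt⟩
  apply mem_PP m x (1 - SF (hcc m) x) (fun j => hcc m j * x j) (vert m)
  · linarith
  · intro j
    exact le_of_lt (mul_pos (hcc_pos m hm j) (hpos j))
  · exact fun j => vert_mem m hm j
  · rw [show ∑ j, hcc m j * x j = SF (hcc m) x from rfl]; ring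
  · intro k
    have hpt : ∀ j, (hcc m j * x j) * vert m j k = (if k = j then x k else 0) := by
      intro j
      simp only [vert]
      by_cases h : k = j
      · rw [if_pos h, if_pos h, h]
        field_simp [ne_of_gt (hcc_pos m hm j)]
      · rw [if_neg h, if_neg h, mul_zero]
    rw [Finset.sum_congr rfl (fun j _ => hpt j), Finset.sum_ite_eq]
    simp

lemma OT_subset_PP (hm : 2 ≤ m) : OT m ⊆ PP m := by
  rintro x ⟨hpos, hlt⟩
  apply mem_PP m x (1 - SF (cc m) x) (TW m x) (bp m)
  · linarith
  · exact fun j => le_of_lt (hpos j)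
  · exact fun j => bp_mem m hm j
  · rw [TWsum m hm]; ring
  · exact TWvec m hm x
lemma block {Q O : Set (Fin (m+2) → ℝ)} (hQ : Convex ℝ Q) (hO : IsOpen O) (hOQ : O ⊆ Q)
    {v w : Fin (m+2) → ℝ} (hv : v ∈ Q) {s : ℝ} (hs0 : 0 < s) (hs1 : s < 1)
    (hx : (1-s)⁻¹ • (w + (-s) • v) ∈ O) : w ∈ interior Q := by
  have hxint : (1-s)⁻¹ • (w + (-s) • v) ∈ interior Q := interior_maximal hOQ hO hx
  have h1s : (1-s) ≠ 0 := by intro h; rw [sub_eq_zero] at h; linarith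
  have hw : (1-s) • ((1-s)⁻¹ • (w + (-s) • v)) + s • v = w := by
    rw [smul_smul, mul_inv_cancel₀ h1s, one_smul, add_assoc, ← add_smul]
    simp
  have hseg : w ∈ openSegment ℝ ((1-s)⁻¹ • (w + (-s) • v)) v :=
    ⟨1-s, s, by linarith, hs0, by ring, hw⟩
  exact hQ.openSegment_interior_closure_subset_interior hxint (subset_closure hv) hseg

lemma VV_finite (hm : 2 ≤ m) : (VV m).Finite := by
  have hsub : VV m ⊆ (fun a : Fin (m+2) → ℤ => fun i => ((a i : ℤ) : ℝ)) ''
      ((Fintype.piFinset (fun _ : Fin (m+2) => Finset.Icc (0:ℤ) (2^(m+1)+2))) :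
        Set (Fin (m+2) → ℤ)) := by
    rintro x ⟨hxK, hxlat⟩
    choose a ha using hxlat
    refine ⟨a, ?_, funext (fun i => (ha i).symm)⟩
    simp only [Finset.coe_sort_coe, Finset.mem_coe, Fintype.mem_piFinset, Finset.mem_Icc]
    intro i
    constructor
    · have := hxK.1 i
      rw [ha i] at this
      exact_mod_cast this
    · have h1 := KK_coord_le m hm hxK i
      rw [ha i] at h1
      have h2 : NR m + 2 = ((2^(m+1) + 2 : ℤ) : ℝ) := by push_cast; rw [NR]
      rw [h2] at h1
      exact_mod_cast h1
  exact Set.Finite.subset (Set.Finite.image _ (Finset.finite_toSet _)) hsub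

lemma VV_coord0_le (hm : 2 ≤ m) {z : Fin (m+2) → ℝ} (hz : z ∈ VV m) :
    z (i0 m) ≤ NR m + 1 := by
  have h8 := NR_ge m hm
  obtain ⟨⟨hznn, hzle⟩, hzlat⟩ := hz
  have h1 : cc m (i0 m) * z (i0 m) ≤ 1 := by
    refine le_trans ?_ hzle
    unfold SF
    apply Finset.single_le_sum (f := fun j => cc m j * z j) ?_ (Finset.mem_univ (i0 m))
    intro j _
    exact mul_nonneg (le_of_lt (cc_pos m hm j)) (hznn j)
  rw [cc_i0] at h1
  have hd : (0:ℝ) < NR m - 2 := by linarith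
  have h5 : (NR m - 2) * z (i0 m) ≤ NR m * (NR m - 1) := by
    rw [div_mul_eq_mul_div, div_le_one (by nlinarith)] at h1
    linarith
  have h2 : z (i0 m) < NR m + 2 := by nlinarith
  obtain ⟨a, ha⟩ := hzlat (i0 m)
  rw [ha] at h2 ⊢
  have h3 : NR m + 2 = ((2^(m+1) + 2 : ℤ) : ℝ) := by push_cast; rw [NR]
  have h4 : NR m + 1 = ((2^(m+1) + 1 : ℤ) : ℝ) := by push_cast; rw [NR]
  rw [h3] at h2
  rw [h4]
  have : a < 2^(m+1) + 2 := by exact_mod_cast h2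
  have : a ≤ 2^(m+1) + 1 := by omega
  exact_mod_cast this

lemma PP_ssubset_KK (hm : 2 ≤ m) : PP m ⊂ KK m := by
  have h8 := NR_ge m hm
  rw [Set.ssubset_iff_of_subset (PP_subset_KK m)]
  refine ⟨fun k => if k = i0 m then NR m * (NR m - 1)/(NR m - 2) else 0, ?_, ?_⟩
  · constructor
    · intro k
      show (0:ℝ) ≤ if k = i0 m then NR m * (NR m - 1)/(NR m - 2) else 0
      split_ifs
      · apply div_nonneg (by nlinarith) (by linarith)
      · exact le_refl 0
    · have heq : SF (cc m) (fun k => if k = i0 m then NR m * (NR m - 1)/(NR m - 2) else 0)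
          = cc m (i0 m) * (NR m * (NR m - 1)/(NR m - 2)) := SF_single (cc m) _ _
      rw [heq, cc_i0]
      have hN0 : NR m ≠ 0 := by linarith
      have hN1 : NR m - 1 ≠ 0 := by linarith
      have hN2 : NR m - 2 ≠ 0 := by linarith
      rw [show (NR m - 2)/(NR m * (NR m -1)) * (NR m * (NR m -1)/(NR m -2)) = 1 by
        field_simp]
  · intro hmem
    have hhalf : PP m ⊆ {x : Fin (m+2) → ℝ | x (i0 m) ≤ NR m + 1} := by
      apply convexHull_min
      · intro z hz
        exact VV_coord0_le m hm hz
      · intro x hx y hy a b ha hb hab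
        simp only [Set.mem_setOf_eq, Pi.add_apply, Pi.smul_apply, smul_eq_mul] at *
        nlinarith
    have h9 : NR m * (NR m - 1)/(NR m - 2) ≤ NR m + 1 := by simpa using hhalf hmem
    have hgt : NR m + 1 < NR m * (NR m - 1)/(NR m - 2) := by
      rw [lt_div_iff₀ (by linarith : (0:ℝ) < NR m - 2)]
      nlinarith
    linarith

lemma PP_hollow (hm : 2 ≤ m) : interior (PP m) ∩ intPts (m+2) = ∅ := by
  have h1 : interior (PP m) ⊆ interior (KK m) := interior_mono (PP_subset_KK m)
  rw [Set.eq_empty_iff_forall_notMem]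
  rintro x ⟨hx1, hx2⟩
  have := KK_hollow m hm
  rw [Set.eq_empty_iff_forall_notMem] at this
  exact this x ⟨h1 hx1, hx2⟩

lemma PP_span (hm : 2 ≤ m) : affineSpan ℝ (PP m) = ⊤ := by
  have h0 : (0 : Fin (m+2) → ℝ) ∈ PP m := subset_convexHull ℝ _ (zero_mem m)
  have hv : ∀ i, vert m i ∈ PP m := fun i => subset_convexHull ℝ _ (vert_mem m hm i)
  rw [AffineSubspace.affineSpan_eq_top_iff_vectorSpan_eq_top_of_nonempty ℝ (Fin (m+2) → ℝ) (Fin (m+2) → ℝ) ⟨0, h0⟩]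
  rw [eq_top_iff]
  intro y _
  have hy : y = ∑ i, (y i * hcc m i) • vert m i := by
    funext k
    rw [Finset.sum_apply]
    have hpt : ∀ i, ((y i * hcc m i) • vert m i) k = (if k = i then y k else 0) := by
      intro i
      simp only [Pi.smul_apply, smul_eq_mul, vert]
      by_cases h : k = i
      · rw [if_pos h, if_pos h, h]
        field_simp [ne_of_gt (hcc_pos m hm i)]
      · rw [if_neg h, if_neg h, mul_zero]
    rw [Finset.sum_congr rfl (fun i _ => hpt i), Finset.sum_ite_eq]
    simp
  rw [hy]
  apply Submodule.sum_mem
  intro i _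
  apply Submodule.smul_mem
  have : vert m i -ᵥ (0 : Fin (m+2) → ℝ) ∈ vectorSpan ℝ (PP m) :=
    vsub_mem_vectorSpan ℝ (hv i) h0
  simpa using this
lemma SF_cc_one (hm : 2 ≤ m) : SF (cc m) (fun _ => (1:ℝ)) = 1 := by
  unfold SF
  rw [Finset.sum_congr rfl (fun i _ => mul_one (cc m i))]
  exact sum_cc m hm

lemma smul_coord (s : ℝ) (w v : Fin (m+2) → ℝ) (k : Fin (m+2)) :
    ((1-s)⁻¹ • (w + (-s) • v)) k = (1-s)⁻¹ * (w k + (-s) * v k) := by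
  simp [Pi.smul_apply, Pi.add_apply]

lemma sum_abs_bounds (v : Fin (m+2) → ℝ) (k : Fin (m+2)) :
    |v k| ≤ (∑ i, |v i|) + 2 := by
  have h1 : |v k| ≤ ∑ i, |v i| :=
    Finset.single_le_sum (fun i _ => abs_nonneg (v i)) (Finset.mem_univ k)
  linarith

lemma case_pos (hm : 2 ≤ m) {Q : Set (Fin (m+2) → ℝ)} (hQconv : Convex ℝ Q)
    (hPQ : PP m ⊆ Q) {v : Fin (m+2) → ℝ} (hvQ : v ∈ Q)
    (hSFv : 1 < SF (cc m) v) : (fun _ => (1:ℝ)) ∈ interior Q := by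
  have h8 := NR_ge m hm
  set B : ℝ := (∑ i, |v i|) + 2 with hBdef
  have hB2 : 2 ≤ B := by
    have : 0 ≤ ∑ i, |v i| := Finset.sum_nonneg (fun i _ => abs_nonneg _)
    rw [hBdef]; linarith
  have hBpos : 0 < B := by linarith
  set s : ℝ := 1/(2 * NR m * B) with hsdef
  have hs0 : 0 < s := by rw [hsdef]; apply div_pos one_pos; nlinarith
  have hs1 : s < 1 := by
    rw [hsdef, div_lt_one (by nlinarith)]; nlinarith
  have h1s : (0:ℝ) < 1 - s := by linarith
  have hsB : s * B = 1/(2 * NR m) := by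
    rw [hsdef]
    field_simp
  apply block m hQconv (OT_open m) (subset_trans (OT_subset_PP m hm) hPQ) hvQ hs0 hs1
  constructor
  · intro j
    show 0 < SF (tco m j) ((1-s)⁻¹ • ((fun _ => (1:ℝ)) + (-s) • v))
    rw [SF_comb]
    apply mul_pos (inv_pos.mpr h1s)
    have h1 := onev_lb m hm j
    have h3 : TW m v j ≤ B := by
      have h2 := (abs_le.mp (TW_abs_le m hm v j)).2
      linarith [hBdef]
    have h4 : s * TW m v j ≤ s * B := mul_le_mul_of_nonneg_left h3 (le_of_lt hs0)
    rw [hsB] at h4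
    have h5 : 1/(2 * NR m) < 1 / NR m := by
      rw [div_lt_div_iff₀ (by nlinarith) (by linarith)]; nlinarith
    have hTWw : TW m (fun _ => (1:ℝ)) j = SF (tco m j) (fun _ => (1:ℝ)) := rfl
    have hTWv : TW m v j = SF (tco m j) v := rfl
    rw [← hTWw, ← hTWv]
    linarith
  · show SF (cc m) ((1-s)⁻¹ • ((fun _ => (1:ℝ)) + (-s) • v)) < 1
    rw [SF_comb, SF_cc_one m hm]
    have hX : 1 - s * SF (cc m) v < 1 - s := by nlinarith
    calc (1-s)⁻¹ * (1 - s * SF (cc m) v) < (1-s)⁻¹ * (1-s) :=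
          mul_lt_mul_of_pos_left hX (inv_pos.mpr h1s)
      _ = 1 := inv_mul_cancel₀ (ne_of_gt h1s)

lemma SF_hcc_w (hm : 2 ≤ m) (i' : Fin (m+2)) :
    SF (hcc m) (fun k => if k = i' then (0:ℝ) else 1) = (1 + bb m) - hcc m i' := by
  unfold SF
  have hpt : ∀ k : Fin (m+2), hcc m k * (if k = i' then (0:ℝ) else 1)
      = hcc m k - (if k = i' then hcc m i' else 0) := by
    intro k
    by_cases h : k = i'
    · rw [if_pos h, if_pos h, h, mul_zero, sub_self]
    · rw [if_neg h, if_neg h, mul_one, sub_zero]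
  rw [Finset.sum_congr rfl (fun k _ => hpt k), Finset.sum_sub_distrib,
    Finset.sum_ite_eq' Finset.univ i' (fun _ => hcc m i'), sum_hcc m hm]
  simp

lemma case_neg (hm : 2 ≤ m) {Q : Set (Fin (m+2) → ℝ)} (hQconv : Convex ℝ Q)
    (hPQ : PP m ⊆ Q) {v : Fin (m+2) → ℝ} (hvQ : v ∈ Q) {i' : Fin (m+2)}
    (hvi : v i' ≤ -1) : (fun k => if k = i' then (0:ℝ) else 1) ∈ interior Q := by
  have h8 := NR_ge m hm
  have hbb := bb_pos m hm
  set B : ℝ := (∑ i, |v i|) + 2 with hBdef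
  have hB2 : 2 ≤ B := by
    have : 0 ≤ ∑ i, |v i| := Finset.sum_nonneg (fun i _ => abs_nonneg _)
    rw [hBdef]; linarith
  have hBpos : 0 < B := by linarith
  set a0 : ℝ := 1/(NR m + 1) - bb m with ha0def
  have ha0 : 0 < a0 := by
    rw [ha0def, bb, sub_pos, div_lt_div_iff₀ (prod_pos m hm) (by linarith)]
    have h56 : 56 ≤ NR m * (NR m - 1) := by nlinarith
    have hp1 : (0:ℝ) < NR m + 1 := by linarith
    nlinarith [mul_le_mul_of_nonneg_right h56 (le_of_lt hp1)]
  have hmin : 0 < min a0 1 := lt_min ha0 one_pos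
  have hmin1 : min a0 1 ≤ 1 := min_le_right _ _
  have hmina : min a0 1 ≤ a0 := min_le_left _ _
  set s : ℝ := min a0 1 / (2*B) with hsdef
  have hs0 : 0 < s := by rw [hsdef]; exact div_pos hmin (by linarith)
  have hsB : s * B = min a0 1 / 2 := by
    rw [hsdef]; field_simp
  have hs1 : s < 1 := by
    rw [hsdef, div_lt_one (by linarith)]; linarith
  have h1s : (0:ℝ) < 1 - s := by linarith
  apply block m hQconv (OS_open m) (subset_trans (OS_subset_PP m hm) hPQ) hvQ hs0 hs1
  constructor
  · intro k
    rw [smul_coord]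
    apply mul_pos (inv_pos.mpr h1s)
    by_cases h : k = i'
    · rw [if_pos h]
      have : v k ≤ -1 := by rw [h]; exact hvi
      nlinarith
    · rw [if_neg h]
      have h1 : |v k| ≤ B - 2 := by
        have := Finset.single_le_sum (fun i (_ : i ∈ Finset.univ) => abs_nonneg (v i)) (Finset.mem_univ k)
        linarith [hBdef]
      have h2 : s * v k ≤ s * |v k| := mul_le_mul_of_nonneg_left (le_abs_self _) (le_of_lt hs0)
      have h3 : s * |v k| ≤ s * B := mul_le_mul_of_nonneg_left (by linarith) (le_of_lt hs0)
      rw [hsB] at h3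
      nlinarith
  · show SF (hcc m) ((1-s)⁻¹ • ((fun k => if k = i' then (0:ℝ) else 1) + (-s) • v)) < 1
    rw [SF_comb, SF_hcc_w m hm i']
    have habs : |SF (hcc m) v| ≤ (1/2) * (B - 2) := by
      have h0 := SF_abs_le (hcc m) v (1/2) (fun i => by
        rw [abs_of_pos (hcc_pos m hm i)]; exact hcc_le_half m hm i)
      linarith [hBdef]
    have hlb := hcc_lb m hm i'
    have key : ((1 + bb m) - hcc m i') - s * SF (hcc m) v < 1 - s := by
      have h4 : s * SF (hcc m) v ≥ -(s * (B/2)) := by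
        have := (abs_le.mp habs).1
        nlinarith
      have h5 : s + s * (B/2) ≤ s * B := by nlinarith
      have h6 : s * B < min a0 1 := by rw [hsB]; linarith
      have h7 : min a0 1 ≤ hcc m i' - bb m := by
        rw [ha0def] at hmina; linarith
      linarith
    calc (1-s)⁻¹ * (((1 + bb m) - hcc m i') - s * SF (hcc m) v)
        < (1-s)⁻¹ * (1-s) := mul_lt_mul_of_pos_left key (inv_pos.mpr h1s)
      _ = 1 := inv_mul_cancel₀ (ne_of_gt h1s)

end NZaux

/-- For every `d ≥ 4` there is a lattice `d`-polytope that is maximal as a hollow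
lattice polytope but not maximal as a hollow convex body. -/
theorem exists_maximal_lattice_not_maximal_body (d : ℕ) (hd : 4 ≤ d) :
    ∃ P : Set (Fin d → ℝ), IsLatticePolytope P ∧ IsFullDim P ∧ Hollow P ∧
      (∀ Q : Set (Fin d → ℝ), IsLatticePolytope Q → IsFullDim Q → Hollow Q → ¬ P ⊂ Q) ∧
      ∃ K : Set (Fin d → ℝ), IsCompact K ∧ Convex ℝ K ∧ Hollow K ∧ P ⊂ K := by
  obtain ⟨m, rfl⟩ : ∃ m, d = m + 2 := ⟨d - 2, by omega⟩
  have hm : 2 ≤ m := by omega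
  refine ⟨NZaux.PP m,
    ⟨NZaux.VV m, NZaux.VV_finite m hm, ⟨0, NZaux.zero_mem m⟩, Set.inter_subset_right, rfl⟩,
    NZaux.PP_span m hm, NZaux.PP_hollow m hm, ?_,
    NZaux.KK m, NZaux.KK_compact m hm, NZaux.KK_convex m, NZaux.KK_hollow m hm,
    NZaux.PP_ssubset_KK m hm⟩
  rintro Q ⟨W, hWfin, hWne, hWlat, hQeq⟩ hQfull hQhollow hPQ
  have hQconv : Convex ℝ Q := hQeq ▸ convex_convexHull ℝ W
  have hPsubQ : NZaux.PP m ⊆ Q := hPQ.subset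
  have hex : ∃ v ∈ W, v ∉ NZaux.PP m := by
    by_contra h
    push_neg at h
    have hQP : Q ⊆ NZaux.PP m := by
      rw [hQeq]
      exact convexHull_min h (convex_convexHull ℝ _)
    exact hPQ.not_subset hQP
  obtain ⟨v, hvW, hvnP⟩ := hex
  have hvQ : v ∈ Q := by rw [hQeq]; exact subset_convexHull ℝ W hvW
  have hvlat : v ∈ intPts (m+2) := hWlat hvW
  have hQhollow' : ∀ x, ¬ (x ∈ interior Q ∩ intPts (m+2)) :=
    Set.eq_empty_iff_forall_notMem.mp hQhollow
  by_cases hneg : ∃ i, v i < 0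
  · obtain ⟨i', hi'⟩ := hneg
    have hvi : v i' ≤ -1 := by
      obtain ⟨a, ha⟩ := hvlat i'
      rw [ha] at hi' ⊢
      have h1 : a < 0 := by exact_mod_cast hi'
      have h2 : a ≤ -1 := by omega
      exact_mod_cast h2
    have hw := NZaux.case_neg m hm hQconv hPsubQ hvQ hvi
    have hwlat : (fun k => if k = i' then (0:ℝ) else 1) ∈ intPts (m+2) := by
      intro k
      by_cases h : k = i'
      · exact ⟨0, by simp [h]⟩
      · exact ⟨1, by simp [h]⟩
    exact hQhollow' _ ⟨hw, hwlat⟩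
  · push_neg at hneg
    have hSFv : 1 < NZaux.SF (NZaux.cc m) v := by
      by_contra h
      push_neg at h
      exact hvnP (subset_convexHull ℝ _ ⟨⟨hneg, h⟩, hvlat⟩)
    have hw := NZaux.case_pos m hm hQconv hPsubQ hvQ hSFv
    have hwlat : (fun _ : Fin (m+2) => (1:ℝ)) ∈ intPts (m+2) := fun k => ⟨1, by norm_num⟩
    exact hQhollow' _ ⟨hw, hwlat⟩
end

section
/- For every hollow lattice d-polytope P ⊂ ℝ^d there exist an integer d' with 1 ≤ d' ≤ d and a maximal hollow lattice d'-polytope Q ⊂ ℝ^{d'} such that the lattice width of P is at most the lattice width of Q. -/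
open MeasureTheory
open scoped ENNReal

namespace St10

noncomputable section
open Set Metric Filter

variable {n : ℕ}

/-- Coercion of an integer vector to a real vector. -/
def zc {n : ℕ} (z : Fin n → ℤ) : Fin n → ℝ := fun i => (z i : ℝ)

lemma zc_mem (z : Fin n → ℤ) : zc z ∈ intPts n := fun i => ⟨z i, rfl⟩

lemma mem_intPts_iff {x : Fin n → ℝ} : x ∈ intPts n ↔ ∃ z, x = zc z :=
  ⟨fun h => ⟨fun i => (h i).choose, funext fun i => (h i).choose_spec⟩,
   fun ⟨z, hz⟩ => hz ▸ zc_mem z⟩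

lemma zc_injective : Function.Injective (zc (n := n)) := fun a b h =>
  funext fun i => Int.cast_injective (congrFun h i)

@[simp] lemma zc_add (a b : Fin n → ℤ) : zc (a + b) = zc a + zc b := by
  funext i; simp [zc]

@[simp] lemma zc_sub (a b : Fin n → ℤ) : zc (a - b) = zc a - zc b := by
  funext i; simp [zc]

@[simp] lemma zc_neg (a : Fin n → ℤ) : zc (-a) = - zc a := by
  funext i; simp [zc]

@[simp] lemma zc_zero : zc (0 : Fin n → ℤ) = 0 := by
  funext i; simp [zc]

lemma intPts_add {x y : Fin n → ℝ} (hx : x ∈ intPts n) (hy : y ∈ intPts n) :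
    x + y ∈ intPts n := by
  obtain ⟨a, rfl⟩ := mem_intPts_iff.1 hx
  obtain ⟨b, rfl⟩ := mem_intPts_iff.1 hy
  rw [← zc_add]; exact zc_mem _

lemma intPts_sub {x y : Fin n → ℝ} (hx : x ∈ intPts n) (hy : y ∈ intPts n) :
    x - y ∈ intPts n := by
  obtain ⟨a, rfl⟩ := mem_intPts_iff.1 hx
  obtain ⟨b, rfl⟩ := mem_intPts_iff.1 hy
  rw [← zc_sub]; exact zc_mem _

lemma intPts_neg {x : Fin n → ℝ} (hx : x ∈ intPts n) : -x ∈ intPts n := by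
  obtain ⟨a, rfl⟩ := mem_intPts_iff.1 hx
  rw [← zc_neg]; exact zc_mem _

lemma intPts_zero : (0 : Fin n → ℝ) ∈ intPts n := zc_zero ▸ zc_mem 0

/-- basics about lattice polytopes -/
lemma lp_compact {P : Set (Fin n → ℝ)} (h : IsLatticePolytope P) : IsCompact P := by
  obtain ⟨V, hVf, -, -, rfl⟩ := h
  exact hVf.isCompact_convexHull ℝ

lemma lp_convex {P : Set (Fin n → ℝ)} (h : IsLatticePolytope P) : Convex ℝ P := by
  obtain ⟨V, -, -, -, rfl⟩ := h
  exact convex_convexHull ℝ V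

lemma lp_nonempty {P : Set (Fin n → ℝ)} (h : IsLatticePolytope P) : P.Nonempty := by
  obtain ⟨V, -, hVne, -, rfl⟩ := h
  exact hVne.mono (subset_convexHull ℝ V)

lemma hollow_mono {P Q : Set (Fin n → ℝ)} (hPQ : P ⊆ Q) (hQ : Hollow Q) : Hollow P := by
  rw [Hollow, eq_empty_iff_forall_notMem] at *
  exact fun x hx => hQ x ⟨interior_mono hPQ hx.1, hx.2⟩

lemma hollow_not_mem {P : Set (Fin n → ℝ)} (hP : Hollow P) {x : Fin n → ℝ}
    (hx : x ∈ interior P) (hx' : x ∈ intPts n) : False := by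
  rw [Hollow, eq_empty_iff_forall_notMem] at hP
  exact hP x ⟨hx, hx'⟩

lemma width_mono {A B : Set (Fin n → ℝ)} (hA : A.Nonempty) (hAB : A ⊆ B)
    (hB : IsCompact B) : latticeWidth A ≤ latticeWidth B := by
  refine iInf_mono fun u => ?_
  have hc : Continuous (fun x : Fin n → ℝ => ∑ i, (u.1 i : ℝ) * x i) :=
    continuous_finset_sum _ fun i _ => continuous_const.mul (continuous_apply i)
  apply ENNReal.ofReal_le_ofReal
  have h1 : sSup ((fun x => ∑ i, (u.1 i : ℝ) * x i) '' A) ≤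
      sSup ((fun x => ∑ i, (u.1 i : ℝ) * x i) '' B) :=
    csSup_le_csSup (hB.image hc).bddAbove (hA.image _) (Set.image_mono hAB)
  have h2 : sInf ((fun x => ∑ i, (u.1 i : ℝ) * x i) '' B) ≤
      sInf ((fun x => ∑ i, (u.1 i : ℝ) * x i) '' A) :=
    csInf_le_csInf (hB.image hc).bddBelow (hA.image _) (Set.image_mono hAB)
  linarith

lemma finite_lattice_bounded (r : ℝ) :
    (intPts n ∩ closedBall (0 : Fin n → ℝ) r).Finite := by
  have hsub : (intPts n ∩ closedBall (0 : Fin n → ℝ) r) ⊆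
      zc '' ↑(Finset.Icc (fun _ : Fin n => (-⌈r⌉ : ℤ)) fun _ => ⌈r⌉) := by
    rintro x ⟨hx, hxb⟩
    obtain ⟨z, rfl⟩ := mem_intPts_iff.1 hx
    refine ⟨z, ?_, rfl⟩
    simp only [Finset.coe_Icc, Set.mem_Icc]
    rw [mem_closedBall_zero_iff] at hxb
    constructor <;> intro i <;>
    · have h1 : |(z i : ℝ)| ≤ r := by
        have := norm_le_pi_norm (zc z) i
        simpa [zc, Real.norm_eq_abs] using this.trans hxb
      rw [abs_le] at h1
      have hceil : (z i : ℝ) ≤ (⌈r⌉ : ℝ) := h1.2.trans (Int.le_ceil r)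
      have hceil' : ((-⌈r⌉ : ℤ) : ℝ) ≤ (z i : ℝ) := by
        push_cast
        exact (neg_le_neg (Int.le_ceil r)).trans h1.1
      first
        | exact_mod_cast hceil'
        | exact_mod_cast hceil
  exact (((Finset.Icc _ _).finite_toSet).image _).subset hsub

lemma lp_eq_hull_lattice {P : Set (Fin n → ℝ)} (h : IsLatticePolytope P) :
    P = convexHull ℝ (P ∩ intPts n) := by
  obtain ⟨V, hVf, hVne, hVsub, rfl⟩ := h
  apply le_antisymm
  · exact convexHull_mono (fun v hv => ⟨subset_convexHull ℝ V hv, hVsub hv⟩)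
  · calc convexHull ℝ (convexHull ℝ V ∩ intPts n)
        ⊆ convexHull ℝ (convexHull ℝ V) := convexHull_mono Set.inter_subset_left
      _ = convexHull ℝ V := (convex_convexHull ℝ V).convexHull_eq

lemma caseA {P : Set (Fin n → ℝ)} (hP : IsLatticePolytope P) (hfull : IsFullDim P)
    (hhol : Hollow P) (N : ℝ)
    (hbd : ∀ R : Set (Fin n → ℝ), IsLatticePolytope R → IsFullDim R → Hollow R → P ⊆ R →
      R ⊆ closedBall 0 N) :
    ∃ Q : Set (Fin n → ℝ), IsLatticePolytope Q ∧ IsFullDim Q ∧ Hollow Q ∧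
      (∀ R, IsLatticePolytope R → IsFullDim R → Hollow R → ¬ Q ⊂ R) ∧
      latticeWidth P ≤ latticeWidth Q := by
  classical
  set PP : Set (Set (Fin n → ℝ)) :=
    {R | (IsLatticePolytope R ∧ IsFullDim R ∧ Hollow R) ∧ P ⊆ R} with hPP
  have hPmem : P ∈ PP := ⟨⟨hP, hfull, hhol⟩, subset_rfl⟩
  have hinj : Set.InjOn (fun R => R ∩ intPts n) PP := by
    intro R1 h1 R2 h2 heq
    have e1 := lp_eq_hull_lattice h1.1.1
    have e2 := lp_eq_hull_lattice h2.1.1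
    rw [e1, e2]
    simp only at heq
    rw [heq]
  have hfin : PP.Finite := by
    apply Set.Finite.of_finite_image ?_ hinj
    apply Set.Finite.subset ((finite_lattice_bounded (n := n) N).finite_subsets)
    rintro t ⟨R, hR, rfl⟩
    intro x hx
    exact ⟨hx.2, hbd R hR.1.1 hR.1.2.1 hR.1.2.2 hR.2 hx.1⟩
  obtain ⟨Q, hQmem, hQmax⟩ := Set.Finite.exists_maximal hfin ⟨P, hPmem⟩
  refine ⟨Q, hQmem.1.1, hQmem.1.2.1, hQmem.1.2.2, ?_, ?_⟩
  · intro R hR1 hR2 hR3 hQR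
    have hRmem : R ∈ PP := ⟨⟨hR1, hR2, hR3⟩, hQmem.2.trans hQR.subset⟩
    exact hQR.ne (le_antisymm hQR.subset (hQmax hRmem hQR.subset))
  · exact width_mono (lp_nonempty hP) hQmem.2 (lp_compact hQmem.1.1)

/-! ### The closed additive subgroup generated by a ray direction and the lattice -/

def Sset (v : Fin n → ℝ) : Set (Fin n → ℝ) :=
  {y | ∃ t : ℝ, 0 ≤ t ∧ ∃ z ∈ intPts n, y = t • v + z}

def Hset (v : Fin n → ℝ) : Set (Fin n → ℝ) := closure (Sset v)

lemma Sset_add {v x y : Fin n → ℝ} (hx : x ∈ Sset v) (hy : y ∈ Sset v) :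
    x + y ∈ Sset v := by
  obtain ⟨t, ht, z, hz, rfl⟩ := hx
  obtain ⟨t', ht', z', hz', rfl⟩ := hy
  exact ⟨t + t', by linarith, z + z', intPts_add hz hz', by rw [add_smul]; abel⟩

lemma intPts_subset_Sset {v : Fin n → ℝ} : intPts n ⊆ Sset v :=
  fun z hz => ⟨0, le_rfl, z, hz, by simp⟩

lemma smul_mem_Sset {v : Fin n → ℝ} {t : ℝ} (ht : 0 ≤ t) : t • v ∈ Sset v :=
  ⟨t, ht, 0, intPts_zero, by simp⟩

lemma Hset_closed (v : Fin n → ℝ) : IsClosed (Hset v) := isClosed_closure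

lemma Sset_subset_Hset {v : Fin n → ℝ} : Sset v ⊆ Hset v := subset_closure

lemma Hset_zero (v : Fin n → ℝ) : (0 : Fin n → ℝ) ∈ Hset v :=
  Sset_subset_Hset (intPts_subset_Sset intPts_zero)

lemma Hset_add {v x y : Fin n → ℝ} (hx : x ∈ Hset v) (hy : y ∈ Hset v) :
    x + y ∈ Hset v := by
  rw [Hset, mem_closure_iff_seq_limit] at hx hy ⊢
  obtain ⟨a, ha, hal⟩ := hx
  obtain ⟨b, hb, hbl⟩ := hy
  exact ⟨fun k => a k + b k, fun k => Sset_add (ha k) (hb k), hal.add hbl⟩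

lemma near_lattice (v : Fin n → ℝ) {δ : ℝ} (hδ : 0 < δ) (T : ℝ) :
    ∃ s : ℝ, T ≤ s ∧ ∃ z ∈ intPts n, ‖s • v - z‖ < δ := by
  classical
  set T₁ : ℝ := max T 0 + 1 with hT₁def
  have hT₁ : 0 < T₁ := by
    have := le_max_right T (0:ℝ); simp only [hT₁def]; linarith
  have hTT₁ : T ≤ T₁ := by
    have := le_max_left T (0:ℝ); simp only [hT₁def]; linarith
  set b : ℕ → (Fin n → ℝ) := fun k i => Int.fract ((k : ℝ) * T₁ * v i) with hbdef
  have hbmem : ∀ k, b k ∈ Set.pi Set.univ fun _ : Fin n => Icc (0:ℝ) 1 := by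
    intro k i _
    exact ⟨Int.fract_nonneg _, (Int.fract_lt_one _).le⟩
  obtain ⟨x, -, φ, hφ, hconv⟩ :=
    (isCompact_univ_pi fun _ : Fin n => isCompact_Icc).tendsto_subseq hbmem
  rw [Metric.tendsto_atTop] at hconv
  obtain ⟨K, hK⟩ := hconv (δ/2) (by linarith)
  have h1 := hK K le_rfl
  have h2 := hK (K+1) (Nat.le_succ K)
  simp only [Function.comp_apply] at h1 h2
  have hml : φ K < φ (K+1) := hφ (Nat.lt_succ_self K)
  have hgap : (1:ℝ) ≤ (φ (K+1) : ℝ) - (φ K : ℝ) := by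
    have : (φ K : ℝ) + 1 ≤ (φ (K+1) : ℝ) := by exact_mod_cast hml
    linarith
  refine ⟨((φ (K+1) : ℝ) - (φ K : ℝ)) * T₁, ?_,
    zc (fun i => ⌊(φ (K+1) : ℝ) * T₁ * v i⌋ - ⌊(φ K : ℝ) * T₁ * v i⌋), zc_mem _, ?_⟩
  · calc T ≤ T₁ := hTT₁
      _ = 1 * T₁ := (one_mul _).symm
      _ ≤ ((φ (K+1) : ℝ) - (φ K : ℝ)) * T₁ := by
          apply mul_le_mul_of_nonneg_right hgap hT₁.le
  · have hident : (((φ (K+1) : ℝ) - (φ K : ℝ)) * T₁) • v -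
        zc (fun i => ⌊(φ (K+1) : ℝ) * T₁ * v i⌋ - ⌊(φ K : ℝ) * T₁ * v i⌋)
        = b (φ (K+1)) - b (φ K) := by
      funext i
      simp only [Pi.sub_apply, Pi.smul_apply, smul_eq_mul, zc, Int.cast_sub, hbdef, Int.fract]
      ring
    rw [hident]
    have htri : dist (b (φ (K+1))) (b (φ K)) ≤
        dist (b (φ (K+1))) x + dist (b (φ K)) x := dist_triangle_right _ _ _
    rw [← dist_eq_norm]
    linarith

lemma Hset_neg {v : Fin n → ℝ} {x : Fin n → ℝ} (hx : x ∈ Hset v) : -x ∈ Hset v := by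
  have key : ∀ y ∈ Sset v, -y ∈ Hset v := by
    rintro y ⟨t, ht, z, hz, rfl⟩
    rw [Hset, Metric.mem_closure_iff]
    intro ε hε
    obtain ⟨s, hs, z', hz', hnear⟩ := near_lattice v hε t
    refine ⟨(s - t) • v + (-z - z'), ⟨s - t, by linarith, -z - z',
      intPts_sub (intPts_neg hz) hz', rfl⟩, ?_⟩
    rw [dist_eq_norm]
    have hcalc : -(t • v + z) - ((s - t) • v + (-z - z')) = -(s • v - z') := by
      rw [sub_smul]; abel
    rw [hcalc, norm_neg]
    exact hnear
  rw [Hset, mem_closure_iff_seq_limit] at hx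
  obtain ⟨a, ha, hal⟩ := hx
  exact (Hset_closed v).mem_of_tendsto hal.neg
    (Filter.Eventually.of_forall fun k => key _ (ha k))

lemma Hset_sub {v x y : Fin n → ℝ} (hx : x ∈ Hset v) (hy : y ∈ Hset v) :
    x - y ∈ Hset v := by
  rw [sub_eq_add_neg]; exact Hset_add hx (Hset_neg hy)

lemma Hset_nsmul {v : Fin n → ℝ} (k : ℕ) {x : Fin n → ℝ} (hx : x ∈ Hset v) :
    (k : ℝ) • x ∈ Hset v := by
  induction k with
  | zero => simpa using Hset_zero v
  | succ k ih =>
      have : ((k+1 : ℕ) : ℝ) • x = (k : ℝ) • x + x := by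
        push_cast; rw [add_smul, one_smul]
      rw [this]; exact Hset_add ih hx

lemma Hset_zsmul {v : Fin n → ℝ} (k : ℤ) {x : Fin n → ℝ} (hx : x ∈ Hset v) :
    (k : ℝ) • x ∈ Hset v := by
  obtain ⟨m, rfl | rfl⟩ := Int.eq_nat_or_neg k
  · exact_mod_cast Hset_nsmul m hx
  · have : (((-(m:ℤ)) : ℤ) : ℝ) • x = -(((m:ℕ) : ℝ) • x) := by push_cast; rw [neg_smul]
    rw [this]; exact Hset_neg (Hset_nsmul m hx)

lemma v_mem_W {v : Fin n → ℝ} (s : ℝ) : s • v ∈ Hset v := by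
  rcases le_or_gt 0 s with hs | hs
  · exact Sset_subset_Hset (smul_mem_Sset hs)
  · have : s • v = -((-s) • v) := by rw [neg_smul, neg_neg]
    rw [this]
    exact Hset_neg (Sset_subset_Hset (smul_mem_Sset (by linarith)))

lemma line_of_small {v : Fin n → ℝ} {h : ℕ → (Fin n → ℝ)}
    (hH : ∀ k, h k ∈ Hset v) (hne : ∀ k, h k ≠ 0)
    (hlim : Filter.Tendsto (fun k => ‖h k‖) atTop (nhds 0)) :
    ∃ u : Fin n → ℝ, ‖u‖ = 1 ∧ (∀ s : ℝ, s • u ∈ Hset v) ∧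
      ∃ ψ : ℕ → ℕ, StrictMono ψ ∧
        Filter.Tendsto (fun k => ‖h (ψ k)‖⁻¹ • h (ψ k)) atTop (nhds u) := by
  have humem : ∀ k, ‖h k‖⁻¹ • h k ∈ sphere (0 : Fin n → ℝ) 1 := by
    intro k
    rw [mem_sphere_zero_iff_norm]
    exact norm_smul_inv_norm (hne k)
  obtain ⟨u, hu, ψ, hψ, hconv⟩ :=
    (isCompact_sphere (0 : Fin n → ℝ) 1).tendsto_subseq humem
  rw [mem_sphere_zero_iff_norm] at hu
  simp only [Function.comp_def] at hconv
  refine ⟨u, hu, ?_, ψ, hψ, hconv⟩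
  intro s
  set a : ℕ → (Fin n → ℝ) := fun k => ((⌊s / ‖h (ψ k)‖⌋ : ℤ) : ℝ) • h (ψ k) with hadef
  have haH : ∀ k, a k ∈ Hset v := fun k => Hset_zsmul _ (hH (ψ k))
  have hkey : ∀ k, ‖a k - s • u‖ ≤
      ‖h (ψ k)‖ + |s| * ‖(‖h (ψ k)‖⁻¹ • h (ψ k)) - u‖ := by
    intro k
    have hr : (0:ℝ) < ‖h (ψ k)‖ := norm_pos_iff.2 (hne (ψ k))
    have hru : ‖h (ψ k)‖ • (‖h (ψ k)‖⁻¹ • h (ψ k)) = h (ψ k) := by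
      rw [smul_smul, mul_inv_cancel₀ (ne_of_gt hr), one_smul]
    have hnuk : ‖(‖h (ψ k)‖⁻¹ • h (ψ k))‖ = 1 := norm_smul_inv_norm (hne (ψ k))
    have hsplit : a k - s • u =
        ((⌊s / ‖h (ψ k)‖⌋ : ℝ) * ‖h (ψ k)‖ - s) • (‖h (ψ k)‖⁻¹ • h (ψ k)) +
        s • ((‖h (ψ k)‖⁻¹ • h (ψ k)) - u) := by
      rw [hadef]
      rw [sub_smul, mul_smul, hru, smul_sub]
      abel
    rw [hsplit]
    have h1 : ‖((⌊s / ‖h (ψ k)‖⌋ : ℝ) * ‖h (ψ k)‖ - s) • (‖h (ψ k)‖⁻¹ • h (ψ k))‖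
        ≤ ‖h (ψ k)‖ := by
      rw [norm_smul, hnuk, mul_one, Real.norm_eq_abs]
      have hc1 : ((⌊s / ‖h (ψ k)‖⌋ : ℤ) : ℝ) ≤ s / ‖h (ψ k)‖ := Int.floor_le _
      have hc2 : s / ‖h (ψ k)‖ < ((⌊s / ‖h (ψ k)‖⌋ : ℤ) : ℝ) + 1 := Int.lt_floor_add_one _
      have hm1 : ((⌊s / ‖h (ψ k)‖⌋ : ℤ) : ℝ) * ‖h (ψ k)‖ ≤ s := (le_div_iff₀ hr).1 hc1
      have hm2 : s < (((⌊s / ‖h (ψ k)‖⌋ : ℤ) : ℝ) + 1) * ‖h (ψ k)‖ := (div_lt_iff₀ hr).1 hc2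
      rw [abs_le]
      constructor
      · nlinarith
      · nlinarith
    calc ‖((⌊s / ‖h (ψ k)‖⌋ : ℝ) * ‖h (ψ k)‖ - s) • (‖h (ψ k)‖⁻¹ • h (ψ k)) +
        s • ((‖h (ψ k)‖⁻¹ • h (ψ k)) - u)‖
        ≤ ‖((⌊s / ‖h (ψ k)‖⌋ : ℝ) * ‖h (ψ k)‖ - s) • (‖h (ψ k)‖⁻¹ • h (ψ k))‖ +
          ‖s • ((‖h (ψ k)‖⁻¹ • h (ψ k)) - u)‖ := norm_add_le _ _
      _ ≤ ‖h (ψ k)‖ + |s| * ‖(‖h (ψ k)‖⁻¹ • h (ψ k)) - u‖ := by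
          have h2 : ‖s • ((‖h (ψ k)‖⁻¹ • h (ψ k)) - u)‖
              = |s| * ‖(‖h (ψ k)‖⁻¹ • h (ψ k)) - u‖ := by
            rw [norm_smul, Real.norm_eq_abs]
          rw [h2]
          exact add_le_add h1 le_rfl
  have hblim : Filter.Tendsto
      (fun k => ‖h (ψ k)‖ + |s| * ‖(‖h (ψ k)‖⁻¹ • h (ψ k)) - u‖) atTop (nhds 0) := by
    have l1 : Filter.Tendsto (fun k => ‖h (ψ k)‖) atTop (nhds 0) :=
      hlim.comp hψ.tendsto_atTop
    have l2 : Filter.Tendsto (fun k => ‖(‖h (ψ k)‖⁻¹ • h (ψ k)) - u‖) atTop (nhds 0) :=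
      (tendsto_iff_norm_sub_tendsto_zero).1 hconv
    have l3 := l2.const_mul |s|
    rw [mul_zero] at l3
    simpa using l1.add l3
  have halim : Filter.Tendsto a atTop (nhds (s • u)) := by
    rw [tendsto_iff_norm_sub_tendsto_zero]
    exact squeeze_zero (fun k => norm_nonneg _) hkey hblim
  exact (Hset_closed v).mem_of_tendsto halim (Filter.Eventually.of_forall haH)

lemma floor_div_eq_abs_lt {a b β : ℝ} (hβ : 0 < β) (h : ⌊a/β⌋ = ⌊b/β⌋) : |a - b| < β := by
  have hca1 : ((⌊a/β⌋ : ℤ) : ℝ) ≤ a/β := Int.floor_le _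
  have hca2 : a/β < ((⌊a/β⌋ : ℤ) : ℝ) + 1 := Int.lt_floor_add_one _
  have hcb1 : ((⌊b/β⌋ : ℤ) : ℝ) ≤ b/β := Int.floor_le _
  have hcb2 : b/β < ((⌊b/β⌋ : ℤ) : ℝ) + 1 := Int.lt_floor_add_one _
  have hj' : ((⌊a/β⌋ : ℤ) : ℝ) = ((⌊b/β⌋ : ℤ) : ℝ) := by rw [h]
  have habs : |a/β - b/β| < 1 := by
    rw [abs_lt]; constructor <;> linarith
  have heq : a - b = (a/β - b/β) * β := by field_simp
  rw [heq, abs_mul, abs_of_pos hβ]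
  calc |a/β - b/β| * β < 1 * β := mul_lt_mul_of_pos_right habs hβ
    _ = β := one_mul β

lemma packing_contradiction {k m : ℕ} (hk : k ≤ m)
    (g : (Fin (m+1) → ℤ) → (Fin k → ℝ)) {δ₁ CC : ℝ} (hδ₁ : 0 < δ₁) (hCC : 0 ≤ CC)
    (hsep : ∀ z z' : Fin (m+1) → ℤ, z ≠ z' → δ₁ ≤ ‖g z - g z'‖)
    (hgrow : ∀ z : Fin (m+1) → ℤ, ‖g z‖ ≤ CC * (‖zc z‖ + 1)) : False := by
  classical
  set β : ℝ := δ₁ / 2 with hβdef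
  have hβ : 0 < β := by positivity
  set Φ : (Fin (m+1) → ℤ) → (Fin k → ℤ) := fun z j => ⌊g z j / β⌋ with hΦdef
  have hΦinj : Function.Injective Φ := by
    intro z z' hzz
    by_contra hne
    have hlt : ‖g z - g z'‖ < β := by
      rw [pi_norm_lt_iff hβ]
      intro j
      have hj : ⌊g z j / β⌋ = ⌊g z' j / β⌋ := congrFun hzz j
      rw [Pi.sub_apply, Real.norm_eq_abs]
      exact floor_div_eq_abs_lt hβ hj
    have := hsep z z' hne
    rw [hβdef] at hlt
    linarith
  have key : ∀ N : ℕ, ((N:ℝ) + 1) ≤ (2 * CC / β + 5) ^ m := by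
    intro N
    set cstar : ℝ := CC * ((N:ℝ)+1) with hcstardef
    have hcstar : 0 ≤ cstar := by positivity
    set B : ℤ := ⌈cstar / β⌉ + 1 with hBdef
    have hB1 : 1 ≤ B := by
      have : (0:ℤ) ≤ ⌈cstar / β⌉ := Int.ceil_nonneg (by positivity)
      omega
    set A : Finset (Fin (m+1) → ℤ) :=
      Finset.Icc (0 : Fin (m+1) → ℤ) (fun _ => (N:ℤ)) with hAdef
    set BB : Finset (Fin k → ℤ) :=
      Finset.Icc (fun _ : Fin k => -B) (fun _ => B) with hBBdef
    have hmaps : ∀ z ∈ A, Φ z ∈ BB := by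
      intro z hz
      rw [hAdef, Finset.mem_Icc] at hz
      have hz1 := Pi.le_def.1 hz.1
      have hz2 := Pi.le_def.1 hz.2
      have hzn : ‖zc z‖ ≤ (N:ℝ) := by
        apply (pi_norm_le_iff_of_nonneg (by positivity)).2
        intro i
        rw [Real.norm_eq_abs, abs_le]
        constructor
        · have h0 : (0:ℝ) ≤ (z i : ℝ) := by exact_mod_cast hz1 i
          have hN0 : (0:ℝ) ≤ (N:ℝ) := Nat.cast_nonneg N
          simp only [zc]; linarith
        · have : (z i : ℝ) ≤ ((N:ℤ):ℝ) := by exact_mod_cast hz2 i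
          simpa [zc] using this
      have hgz : ‖g z‖ ≤ cstar := by
        calc ‖g z‖ ≤ CC * (‖zc z‖ + 1) := hgrow z
          _ ≤ cstar := by rw [hcstardef]; nlinarith
      have hcoord : ∀ j, |g z j| ≤ cstar := by
        intro j
        calc |g z j| = ‖g z j‖ := (Real.norm_eq_abs _).symm
          _ ≤ ‖g z‖ := norm_le_pi_norm _ j
          _ ≤ cstar := hgz
      rw [hBBdef, Finset.mem_Icc]
      constructor <;> rw [Pi.le_def] <;> intro j
      · -- -B ≤ Φ z j
        have h5 : g z j / β - 1 < (⌊g z j / β⌋ : ℝ) := Int.sub_one_lt_floor _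
        have h6 : -(cstar / β) ≤ g z j / β := by
          rw [← neg_div]
          apply (div_le_div_iff_of_pos_right hβ).2
          linarith [(abs_le.1 (hcoord j)).1]
        have h7 : ((-B : ℤ) : ℝ) ≤ -(cstar/β) - 1 := by
          rw [hBdef]
          push_cast
          linarith [Int.le_ceil (cstar / β)]
        have : ((-B : ℤ) : ℝ) < (⌊g z j / β⌋ : ℝ) := by linarith
        exact_mod_cast this.le
      · -- Φ z j ≤ B
        have h5 : (⌊g z j / β⌋ : ℝ) ≤ g z j / β := Int.floor_le _
        have h6 : g z j / β ≤ cstar / β := by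
          apply (div_le_div_iff_of_pos_right hβ).2
          linarith [(abs_le.1 (hcoord j)).2]
        have h7 : cstar / β ≤ ((B:ℤ):ℝ) := by
          rw [hBdef]; push_cast
          linarith [Int.le_ceil (cstar / β)]
        have : (⌊g z j / β⌋ : ℝ) ≤ ((B:ℤ):ℝ) := by linarith
        exact_mod_cast this
    have hcard : A.card ≤ BB.card :=
      Finset.card_le_card_of_injOn Φ hmaps (Function.Injective.injOn hΦinj)
    have hcardA : A.card = (N+1)^(m+1) := by
      rw [hAdef, Pi.card_Icc]
      have heach : ∀ i : Fin (m+1),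
          (Finset.Icc ((0 : Fin (m+1) → ℤ) i) ((fun _ => (N:ℤ)) i)).card = N+1 := by
        intro i
        simp only [Pi.zero_apply]
        rw [Int.card_Icc]
        omega
      rw [Finset.prod_congr rfl (fun i _ => heach i)]
      rw [Finset.prod_const, Finset.card_univ, Fintype.card_fin]
    have hcardBB : BB.card = ((2*B+1).toNat)^k := by
      rw [hBBdef, Pi.card_Icc]
      have heach : ∀ j : Fin k,
          (Finset.Icc ((fun _ : Fin k => -B) j) ((fun _ : Fin k => B) j)).card
            = (2*B+1).toNat := by
        intro j
        simp only
        rw [Int.card_Icc]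
        congr 1
        ring
      rw [Finset.prod_congr rfl (fun j _ => heach j)]
      rw [Finset.prod_const, Finset.card_univ, Fintype.card_fin]
    have hbase1 : 1 ≤ (2*B+1).toNat := by omega
    have hfinal : (N+1)^(m+1) ≤ ((2*B+1).toNat)^m := by
      calc (N+1)^(m+1) = A.card := hcardA.symm
        _ ≤ BB.card := hcard
        _ = ((2*B+1).toNat)^k := hcardBB
        _ ≤ ((2*B+1).toNat)^m := Nat.pow_le_pow_right hbase1 hk
    have hBR : ((2*B+1).toNat : ℝ) ≤ (2 * CC / β + 5) * ((N:ℝ)+1) := by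
      have h8 : ((2*B+1).toNat : ℝ) = 2*(B:ℝ)+1 := by
        have h9 : ((2*B+1).toNat : ℤ) = 2*B+1 := Int.toNat_of_nonneg (by omega)
        exact_mod_cast congrArg (fun x : ℤ => (x:ℝ)) h9
      rw [h8, hBdef]
      push_cast
      have h9 := Int.ceil_lt_add_one (cstar / β)
      have hN1 : (1:ℝ) ≤ (N:ℝ)+1 := by
        have : (0:ℝ) ≤ (N:ℝ) := Nat.cast_nonneg N
        linarith
      have h10 : cstar / β = (CC/β) * ((N:ℝ)+1) := by
        rw [hcstardef]; ring
      have h11 : (CC/β) * ((N:ℝ)+1) ≥ 0 := by positivity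
      have h12 : (5:ℝ) ≤ 5*((N:ℝ)+1) := by linarith
      have h13 : (2*CC/β)*((N:ℝ)+1) = 2*(CC/β*((N:ℝ)+1)) := by ring
      have h14 : (2*CC/β+5)*((N:ℝ)+1) = (2*CC/β)*((N:ℝ)+1) + 5*((N:ℝ)+1) := by ring
      linarith
    have hfinR : (((N:ℝ)+1))^(m+1) ≤ ((2 * CC / β + 5) * ((N:ℝ)+1))^m := by
      have hcast : (((N+1)^(m+1) : ℕ) : ℝ) ≤ ((((2*B+1).toNat)^m : ℕ) : ℝ) := by
        exact_mod_cast hfinal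
      push_cast at hcast
      calc (((N:ℝ)+1))^(m+1) ≤ (((2*B+1).toNat : ℝ))^m := by
            convert hcast using 2 <;> push_cast <;> ring
        _ ≤ ((2 * CC / β + 5) * ((N:ℝ)+1))^m := by
            apply pow_le_pow_left₀ (by positivity) hBR
    have hpow : (0:ℝ) < (((N:ℝ)+1))^m := by positivity
    have hexp : (((N:ℝ)+1))^(m+1) = ((N:ℝ)+1) * (((N:ℝ)+1))^m := by ring
    rw [hexp, mul_pow] at hfinR
    have hfinR2 : ((N:ℝ)+1) * (((N:ℝ)+1))^m ≤ (2 * CC / β + 5)^m * (((N:ℝ)+1))^m :=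
      hfinR
    exact le_of_mul_le_mul_right (by linarith [hfinR2]) hpow
  -- contradiction: take N large
  set D : ℝ := (2 * CC / β + 5) ^ m with hDdef
  have hD0 : 0 ≤ D := by positivity
  have := key ⌈D⌉₊
  have hceil : D ≤ (⌈D⌉₊ : ℝ) := Nat.le_ceil D
  linarith

lemma exists_w {m : ℕ} (v : Fin (m+1) → ℝ) (hv : ‖v‖ = 1) :
    ∃ w : Fin (m+1) → ℤ, w ≠ 0 ∧ ∀ s : ℝ, s • zc w ∈ Hset v := by
  classical
  by_contra hcon
  push_neg at hcon
  have hWZ : ∀ z : Fin (m+1) → ℤ, (∀ s : ℝ, s • zc z ∈ Hset v) → z = 0 := by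
    intro z hz
    by_contra hz0
    obtain ⟨s, hs⟩ := hcon z hz0
    exact hs (hz s)
  let W : Submodule ℝ (Fin (m+1) → ℝ) :=
    { carrier := {x | ∀ s : ℝ, s • x ∈ Hset v}
      add_mem' := fun {x y} hx hy s => by rw [smul_add]; exact Hset_add (hx s) (hy s)
      zero_mem' := fun s => by rw [smul_zero]; exact Hset_zero v
      smul_mem' := fun c x hx s => by rw [smul_smul]; exact hx (s * c) }
  have hWmem : ∀ x : Fin (m+1) → ℝ, x ∈ W ↔ ∀ s : ℝ, s • x ∈ Hset v := fun x => Iff.rfl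
  have hvW : v ∈ W := fun s => v_mem_W s
  have hv0 : v ≠ 0 := fun h => by simp [h] at hv
  obtain ⟨U, hUc⟩ := Submodule.exists_isCompl W
  let q : (Fin (m+1) → ℝ) →ₗ[ℝ] U := Submodule.linearProjOfIsCompl U W hUc.symm
  have hqker : ∀ x : Fin (m+1) → ℝ, q x = 0 ↔ x ∈ W := fun x =>
    Submodule.linearProjOfIsCompl_apply_eq_zero_iff hUc.symm
  have hqproj : ∀ u : U, q (u : Fin (m+1) → ℝ) = u := fun u =>
    Submodule.linearProjOfIsCompl_apply_left hUc.symm u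
  have hdecomp : ∀ x : Fin (m+1) → ℝ, x - (q x : Fin (m+1) → ℝ) ∈ W := by
    intro x
    rw [← hqker]
    rw [map_sub, hqproj (q x), sub_self]
  have hWH : ∀ x, x ∈ W → x ∈ Hset v := fun x hx => by
    have := hx 1; rwa [one_smul] at this
  have hqH : ∀ z : Fin (m+1) → ℤ, ((q (zc z) : Fin (m+1) → ℝ)) ∈ Hset v := by
    intro z
    have h1 : zc z ∈ Hset v := Sset_subset_Hset (intPts_subset_Sset (zc_mem z))
    have h2 := hWH _ (hdecomp (zc z))
    have h3 : (q (zc z) : Fin (m+1) → ℝ) = zc z - (zc z - (q (zc z) : Fin (m+1) → ℝ)) := by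
      abel
    rw [h3]; exact Hset_sub h1 h2
  by_cases hsep : ∃ δ₀ > (0:ℝ), ∀ z : Fin (m+1) → ℤ,
      q (zc z) = 0 ∨ δ₀ ≤ ‖(q (zc z) : Fin (m+1) → ℝ)‖
  · -- separated case: counting/packing contradiction
    obtain ⟨δ₀, hδ₀, hsep⟩ := hsep
    have hWbot : W ≠ ⊥ := by
      intro hb; rw [hb] at hvW; exact hv0 ((Submodule.mem_bot ℝ).1 hvW)
    have hWpos : Module.finrank ℝ W ≠ 0 := fun h0 => hWbot (Submodule.finrank_eq_zero.1 h0)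
    have hsum := Submodule.finrank_add_eq_of_isCompl hUc
    have htot : Module.finrank ℝ (Fin (m+1) → ℝ) = m + 1 := Module.finrank_fin_fun ℝ
    have hkm : Module.finrank ℝ U ≤ m := by
      rw [htot] at hsum; omega
    let bU := Module.finBasis ℝ U
    let ψ : U ≃ₗ[ℝ] (Fin (Module.finrank ℝ U) → ℝ) := bU.equivFun
    let ψc := LinearMap.toContinuousLinearMap (ψ : U →ₗ[ℝ] (Fin (Module.finrank ℝ U) → ℝ))
    let ψic := LinearMap.toContinuousLinearMap ((ψ.symm : (Fin (Module.finrank ℝ U) → ℝ) →ₗ[ℝ] U))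
    let qc := LinearMap.toContinuousLinearMap q
    have hψc : ∀ x : U, ψc x = ψ x := fun x => rfl
    have hψic : ∀ y, ψic y = ψ.symm y := fun y => rfl
    have hqc : ∀ x, qc x = q x := fun x => rfl
    set g : (Fin (m+1) → ℤ) → (Fin (Module.finrank ℝ U) → ℝ) :=
      fun z => ψ (q (zc z)) with hgdef
    have hsep2 : ∀ z z' : Fin (m+1) → ℤ, z ≠ z' →
        δ₀ / (‖ψic‖ + 1) ≤ ‖g z - g z'‖ := by
      intro z z' hne
      have hzz : z - z' ≠ 0 := sub_ne_zero.2 hne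
      have hq0 : q (zc (z - z')) ≠ 0 := by
        intro h0
        exact hzz (hWZ _ ((hqker _).1 h0))
      have hd : δ₀ ≤ ‖(q (zc (z - z')) : Fin (m+1) → ℝ)‖ :=
        (hsep (z - z')).resolve_left hq0
      have hdiff : q (zc (z - z')) = q (zc z) - q (zc z') := by
        rw [zc_sub, map_sub]
      have hnorm_eq : ‖(q (zc (z - z')) : Fin (m+1) → ℝ)‖ = ‖q (zc z) - q (zc z')‖ := by
        rw [hdiff]; rfl
      have hback : ‖q (zc z) - q (zc z')‖ ≤ ‖ψic‖ * ‖g z - g z'‖ := by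
        have h1 : q (zc z) - q (zc z') = ψic (g z - g z') := by
          rw [hψic, hgdef]
          simp only [← map_sub]
          rw [LinearEquiv.symm_apply_apply]
        rw [h1]
        exact ψic.le_opNorm _
      have hpos : (0:ℝ) < ‖ψic‖ + 1 := by positivity
      rw [div_le_iff₀ hpos]
      have h2 : ‖ψic‖ * ‖g z - g z'‖ ≤ (‖ψic‖ + 1) * ‖g z - g z'‖ := by
        have := norm_nonneg (g z - g z')
        nlinarith
      calc δ₀ ≤ ‖(q (zc (z - z')) : Fin (m+1) → ℝ)‖ := hd
        _ = ‖q (zc z) - q (zc z')‖ := hnorm_eq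
        _ ≤ ‖ψic‖ * ‖g z - g z'‖ := hback
        _ ≤ (‖ψic‖ + 1) * ‖g z - g z'‖ := h2
        _ = ‖g z - g z'‖ * (‖ψic‖ + 1) := mul_comm _ _
    have hgrow : ∀ z : Fin (m+1) → ℤ, ‖g z‖ ≤ (‖ψc‖ * ‖qc‖ + 1) * (‖zc z‖ + 1) := by
      intro z
      have h1 : ‖g z‖ ≤ ‖ψc‖ * ‖q (zc z)‖ := by
        rw [hgdef]
        simp only [← hψc]
        exact ψc.le_opNorm _
      have h2 : ‖q (zc z)‖ ≤ ‖qc‖ * ‖zc z‖ := by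
        rw [← hqc]
        exact qc.le_opNorm _
      have hn1 : (0:ℝ) ≤ ‖ψc‖ := ψc.opNorm_nonneg
      have hn2 : (0:ℝ) ≤ ‖qc‖ := qc.opNorm_nonneg
      have hn3 : (0:ℝ) ≤ ‖zc z‖ := norm_nonneg _
      have hn4 : (0:ℝ) ≤ ‖q (zc z)‖ := norm_nonneg _
      nlinarith
    exact packing_contradiction hkm g (by positivity) (by positivity) hsep2 hgrow
  · -- accumulation case: small elements give a unit vector in W ⊓ U
    push_neg at hsep
    have hsel : ∀ j : ℕ, ∃ z : Fin (m+1) → ℤ,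
        q (zc z) ≠ 0 ∧ ‖(q (zc z) : Fin (m+1) → ℝ)‖ < 1/((j:ℝ)+1) := by
      intro j
      obtain ⟨z, hz1, hz2⟩ := hsep (1/((j:ℝ)+1)) (by positivity)
      exact ⟨z, hz1, hz2⟩
    choose zs hz0 hzs using hsel
    set hseq : ℕ → (Fin (m+1) → ℝ) := fun j => (q (zc (zs j)) : Fin (m+1) → ℝ) with hseqdef
    have hH : ∀ j, hseq j ∈ Hset v := fun j => hqH _
    have hne : ∀ j, hseq j ≠ 0 := by
      intro j h0
      rw [hseqdef] at h0
      simp only [ZeroMemClass.coe_eq_zero] at h0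
      exact hz0 j h0
    have hlim : Filter.Tendsto (fun j => ‖hseq j‖) atTop (nhds 0) := by
      apply squeeze_zero (fun j => norm_nonneg _) (fun j => (hzs j).le)
      exact tendsto_one_div_add_atTop_nhds_zero_nat
    obtain ⟨u, hu1, huH, ψ', hψ', hconv⟩ := line_of_small hH hne hlim
    have huU : u ∈ U := by
      have hcl : IsClosed (U : Set (Fin (m+1) → ℝ)) := Submodule.closed_of_finiteDimensional U
      apply hcl.mem_of_tendsto hconv
      apply Filter.Eventually.of_forall
      intro j
      exact U.smul_mem _ (SetLike.coe_mem _)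
    have huW : u ∈ W := huH
    have hu0 : u = 0 := by
      have hdisj := hUc.disjoint
      exact (Submodule.disjoint_def.1 hdisj) u huW huU
    rw [hu0] at hu1
    simp at hu1

/-! ### Integer shears and construction of a lattice-surjective projection -/

def shearL (a b : Fin n) (c : ℝ) : (Fin n → ℝ) →ₗ[ℝ] (Fin n → ℝ) where
  toFun x := Function.update x a (x a + c * x b)
  map_add' x y := by
    funext i
    rcases eq_or_ne i a with rfl | hi
    · simp only [Function.update_self, Pi.add_apply]
      ring
    · simp only [Function.update_of_ne hi, Pi.add_apply]
  map_smul' r x := by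
    funext i
    rcases eq_or_ne i a with rfl | hi
    · simp only [Function.update_self, Pi.smul_apply, RingHom.id_apply, smul_eq_mul]
      ring
    · simp only [Function.update_of_ne hi, Pi.smul_apply, RingHom.id_apply, smul_eq_mul]

lemma shearL_apply_self (a b : Fin n) (c : ℝ) (x : Fin n → ℝ) :
    shearL a b c x a = x a + c * x b := by
  simp [shearL, Function.update_self]

lemma shearL_apply_ne (a b : Fin n) (c : ℝ) (x : Fin n → ℝ) {i : Fin n} (hi : i ≠ a) :
    shearL a b c x i = x i := by
  simp [shearL, Function.update_of_ne hi]

lemma shearL_zc (a b : Fin n) (k : ℤ) (z : Fin n → ℤ) :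
    shearL a b (k : ℝ) (zc z) = zc (Function.update z a (z a + k * z b)) := by
  funext i
  rcases eq_or_ne i a with rfl | hi
  · rw [shearL_apply_self]
    simp only [zc, Function.update_self]
    push_cast; ring
  · rw [shearL_apply_ne _ _ _ _ hi]
    simp only [zc, Function.update_of_ne hi]

lemma shearL_inv (a b : Fin n) (hab : b ≠ a) (c : ℝ) (x : Fin n → ℝ) :
    shearL a b (-c) (shearL a b c x) = x := by
  funext i
  rcases eq_or_ne i a with rfl | hi
  · rw [shearL_apply_self, shearL_apply_self, shearL_apply_ne _ _ _ _ hab]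
    ring
  · rw [shearL_apply_ne _ _ _ _ hi, shearL_apply_ne _ _ _ _ hi]

lemma exists_proj_fuel : ∀ (fuel : ℕ) (m : ℕ) (w : Fin (m+1) → ℤ),
    (∑ i, (w i).natAbs) ≤ fuel → w ≠ 0 →
    ∃ π : (Fin (m+1) → ℝ) →ₗ[ℝ] (Fin m → ℝ),
      (∀ z : Fin (m+1) → ℤ, π (zc z) ∈ intPts m) ∧
      (∀ y : Fin m → ℤ, ∃ z : Fin (m+1) → ℤ, π (zc z) = zc y) ∧
      (∀ x : Fin (m+1) → ℝ, π x = 0 ↔ ∃ s : ℝ, x = s • zc w) := by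
  intro fuel
  induction fuel with
  | zero =>
      intro m w hw hw0
      exfalso
      apply hw0
      funext i
      have : (w i).natAbs = 0 := by
        have := Finset.sum_eq_zero_iff.1 (Nat.le_zero.1 hw) i (Finset.mem_univ i)
        exact this
      simpa [Int.natAbs_eq_zero] using this
  | succ fuel ih =>
      intro m w hw hw0
      classical
      by_cases hsingle : ∃ i₀ : Fin (m+1), ∀ i, i ≠ i₀ → w i = 0
      · -- single nonzero coordinate: delete it
        obtain ⟨i₀, hi₀⟩ := hsingle
        have hwi₀ : w i₀ ≠ 0 := by
          intro h0
          apply hw0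
          funext i
          rcases eq_or_ne i i₀ with rfl | hi
          · exact h0
          · exact hi₀ i hi
        refine ⟨LinearMap.funLeft ℝ ℝ (Fin.succAbove i₀), ?_, ?_, ?_⟩
        · intro z
          intro j
          exact ⟨z (i₀.succAbove j), rfl⟩
        · intro y
          refine ⟨fun i => if h : i = i₀ then 0 else
            y (Fin.exists_succAbove_eq h).choose, ?_⟩
          funext j
          have hne : i₀.succAbove j ≠ i₀ := Fin.succAbove_ne i₀ j
          simp only [LinearMap.funLeft_apply, zc, dif_neg hne]
          congr 1
          have hspec := (Fin.exists_succAbove_eq hne).choose_spec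
          exact congrArg y (Fin.succAbove_right_injective hspec)
        · intro x
          constructor
          · intro hx
            refine ⟨x i₀ / (w i₀ : ℝ), ?_⟩
            funext i
            rcases eq_or_ne i i₀ with rfl | hi
            · simp only [Pi.smul_apply, smul_eq_mul, zc]
              rw [div_mul_cancel₀]
              exact_mod_cast hwi₀
            · obtain ⟨j, hj⟩ := Fin.exists_succAbove_eq hi
              have h1 : x i = 0 := by
                have := congrFun hx j
                simpa [LinearMap.funLeft_apply, hj] using this
              have h2 : w i = 0 := hi₀ i hi
              simp [h1, zc, h2]
          · rintro ⟨s, rfl⟩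
            funext j
            have hne : i₀.succAbove j ≠ i₀ := Fin.succAbove_ne i₀ j
            have h2 : w (i₀.succAbove j) = 0 := hi₀ _ hne
            simp [LinearMap.funLeft_apply, zc, h2]
      · -- two nonzero coordinates: Euclid step
        push_neg at hsingle
        have hex : ∃ a, w a ≠ 0 := by
          by_contra hall
          push_neg at hall
          exact hw0 (funext fun i => hall i)
        obtain ⟨a₀, ha₀⟩ := hex
        obtain ⟨b₀, hb₀ne, hb₀⟩ := hsingle a₀
        -- choose (a, b) with |w b| ≤ |w a|
        obtain ⟨a, b, hab, hwa, hwb, hba⟩ :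
            ∃ a b : Fin (m+1), b ≠ a ∧ w a ≠ 0 ∧ w b ≠ 0 ∧
              (w b).natAbs ≤ (w a).natAbs := by
          rcases le_total ((w b₀).natAbs) ((w a₀).natAbs) with h | h
          · exact ⟨a₀, b₀, hb₀ne, ha₀, hb₀, h⟩
          · exact ⟨b₀, a₀, fun hh => hb₀ne hh.symm, hb₀, ha₀, h⟩
        set k : ℤ := w a / w b with hkdef
        set r : ℤ := w a % w b with hrdef
        have hdiv : r + w b * k = w a := Int.emod_add_mul_ediv (w a) (w b)
        have hrabs : r.natAbs < (w b).natAbs := by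
          have h1 : r = w a % w b := hrdef
          have habs : w a % w b = w a % ((w b).natAbs : ℤ) := by
            rcases (w b).natAbs_eq with h | h
            · rw [← h]
            · conv_lhs => rw [h]
              rw [Int.emod_neg]
          have hpos : (0:ℤ) < ((w b).natAbs : ℤ) := by
            have := Int.natAbs_pos.2 hwb
            exact_mod_cast this
          have h2 : 0 ≤ w a % ((w b).natAbs : ℤ) := Int.emod_nonneg _ (by omega)
          have h3 : w a % ((w b).natAbs : ℤ) < ((w b).natAbs : ℤ) :=
            Int.emod_lt_of_pos _ hpos
          rw [h1, habs]
          omega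
        set w' : Fin (m+1) → ℤ := Function.update w a r with hw'def
        have hw'b : w' b = w b := by rw [hw'def, Function.update_of_ne hab]
        have hw'0 : w' ≠ 0 := by
          intro h0
          apply hwb
          rw [← hw'b, h0, Pi.zero_apply]
        have hsum : (∑ i, (w' i).natAbs) < ∑ i, (w i).natAbs := by
          rw [hw'def]
          rw [← Finset.sum_erase_add _ _ (Finset.mem_univ a),
              ← Finset.sum_erase_add _ _ (Finset.mem_univ a)]
          have heq : ∑ i ∈ Finset.univ.erase a, ((Function.update w a r) i).natAbs
              = ∑ i ∈ Finset.univ.erase a, (w i).natAbs := by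
            apply Finset.sum_congr rfl
            intro i hi
            rw [Function.update_of_ne (Finset.ne_of_mem_erase hi)]
          rw [heq, Function.update_self]
          have : r.natAbs < (w a).natAbs := lt_of_lt_of_le hrabs hba
          omega
        have hfuel' : (∑ i, (w' i).natAbs) ≤ fuel := by omega
        obtain ⟨π', hlat', honto', hker'⟩ := ih m w' hfuel' hw'0
        set σ := shearL a b (((-k : ℤ) : ℝ)) with hσdef
        set τ := shearL a b ((k : ℝ)) with hτdef
        have hτσ : ∀ x, τ (σ x) = x := by
          intro x
          rw [hσdef, hτdef]
          have : ((k:ℤ):ℝ) = -(((-k : ℤ)):ℝ) := by push_cast; ring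
          rw [this]
          exact shearL_inv a b hab _ x
        have hστ : ∀ x, σ (τ x) = x := by
          intro x
          rw [hσdef, hτdef]
          have : (((-k : ℤ)):ℝ) = -((k:ℤ):ℝ) := by push_cast; ring
          rw [this]
          exact shearL_inv a b hab _ x
        have hσzc : ∀ z : Fin (m+1) → ℤ,
            σ (zc z) = zc (Function.update z a (z a + (-k) * z b)) := by
          intro z
          rw [hσdef]
          exact shearL_zc a b (-k) z
        have hτzc : ∀ z : Fin (m+1) → ℤ,
            τ (zc z) = zc (Function.update z a (z a + k * z b)) := by
          intro z
          rw [hτdef]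
          exact shearL_zc a b k z
        have hσw : σ (zc w) = zc w' := by
          rw [hσzc, hw'def]
          have hval : w a + (-k) * w b = r := by linear_combination (-1:ℤ) * hdiv
          rw [hval]
        refine ⟨π'.comp σ, ?_, ?_, ?_⟩
        · intro z
          rw [LinearMap.comp_apply, hσzc]
          exact hlat' _
        · intro y
          obtain ⟨z', hz'⟩ := honto' y
          refine ⟨Function.update z' a (z' a + k * z' b), ?_⟩
          rw [LinearMap.comp_apply, hσzc]
          have harg : Function.update (Function.update z' a (z' a + k * z' b)) a
              ((Function.update z' a (z' a + k * z' b)) a +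
                (-k) * (Function.update z' a (z' a + k * z' b)) b) = z' := by
            funext i
            rcases eq_or_ne i a with rfl | hi
            · rw [Function.update_self, Function.update_self,
                Function.update_of_ne hab]
              ring
            · rw [Function.update_of_ne hi, Function.update_of_ne hi]
          rw [harg]
          exact hz'
        · intro x
          rw [LinearMap.comp_apply, hker' (σ x)]
          constructor
          · rintro ⟨s, hs⟩
            refine ⟨s, ?_⟩
            have hτw' : τ (zc w') = zc w := by
              rw [hτzc]
              have harg2 : Function.update w' a (w' a + k * w' b) = w := by
                funext i
                rcases eq_or_ne i a with rfl | hi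
                · rw [Function.update_self]
                  have e1 : w' i = r := by rw [hw'def, Function.update_self]
                  rw [e1, hw'b]
                  linear_combination hdiv
                · rw [Function.update_of_ne hi, hw'def, Function.update_of_ne hi]
              rw [harg2]
            have h5 := congrArg τ hs
            rw [hτσ] at h5
            rw [h5, LinearMap.map_smul, hτw']
          · rintro ⟨s, rfl⟩
            exact ⟨s, by rw [LinearMap.map_smul, hσw]⟩

lemma exists_proj {m : ℕ} (w : Fin (m+1) → ℤ) (hw0 : w ≠ 0) :
    ∃ π : (Fin (m+1) → ℝ) →ₗ[ℝ] (Fin m → ℝ),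
      (∀ z : Fin (m+1) → ℤ, π (zc z) ∈ intPts m) ∧
      (∀ y : Fin m → ℤ, ∃ z : Fin (m+1) → ℤ, π (zc z) = zc y) ∧
      (∀ x : Fin (m+1) → ℝ, π x = 0 ↔ ∃ s : ℝ, x = s • zc w) :=
  exists_proj_fuel (∑ i, (w i).natAbs) m w le_rfl hw0

/-! ### Transfer of properties along the projection -/

lemma zc_single (i : Fin n) : zc (Pi.single i (1:ℤ)) = Pi.single i (1:ℝ) := by
  funext j
  rcases eq_or_ne j i with rfl | hj
  · simp [zc]
  · simp [zc, Pi.single_eq_of_ne hj]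

lemma proj_lp {m : ℕ} (π : (Fin (m+1) → ℝ) →ₗ[ℝ] (Fin m → ℝ))
    (hlat : ∀ z : Fin (m+1) → ℤ, π (zc z) ∈ intPts m)
    {P : Set (Fin (m+1) → ℝ)} (hP : IsLatticePolytope P) :
    IsLatticePolytope (π '' P) := by
  obtain ⟨V, hVf, hVne, hVsub, rfl⟩ := hP
  refine ⟨π '' V, hVf.image _, hVne.image _, ?_, ?_⟩
  · rintro y ⟨x, hx, rfl⟩
    obtain ⟨z, rfl⟩ := mem_intPts_iff.1 (hVsub hx)
    exact hlat z
  · rw [π.image_convexHull]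

lemma proj_surj {m : ℕ} (π : (Fin (m+1) → ℝ) →ₗ[ℝ] (Fin m → ℝ))
    (honto : ∀ y : Fin m → ℤ, ∃ z : Fin (m+1) → ℤ, π (zc z) = zc y) :
    Function.Surjective π := by
  have hrange : ∀ j : Fin m, Pi.single j (1:ℝ) ∈ LinearMap.range π := by
    intro j
    obtain ⟨z, hz⟩ := honto (Pi.single j 1)
    exact ⟨zc z, by rw [hz, zc_single]⟩
  intro y
  have hmem : y ∈ LinearMap.range π := by
    have hy : y = ∑ j, y j • (Pi.single j (1:ℝ) : Fin m → ℝ) := by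
      funext i
      rw [Finset.sum_apply]
      simp [Pi.single_apply]
    rw [hy]
    exact Submodule.sum_mem _ fun j _ => Submodule.smul_mem _ _ (hrange j)
  exact hmem

lemma proj_fulldim {m : ℕ} (π : (Fin (m+1) → ℝ) →ₗ[ℝ] (Fin m → ℝ))
    (hsurj : Function.Surjective π) {P : Set (Fin (m+1) → ℝ)}
    (hfull : IsFullDim P) : IsFullDim (π '' P) := by
  unfold IsFullDim at *
  have h1 : π '' P = π.toAffineMap '' P := by
    rw [LinearMap.coe_toAffineMap]
  have hs : Function.Surjective π.toAffineMap := by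
    rwa [LinearMap.coe_toAffineMap]
  rw [h1]
  exact AffineMap.span_eq_top_of_surjective _ hs hfull

lemma interior_image_lift {m : ℕ} (π : (Fin (m+1) → ℝ) →ₗ[ℝ] (Fin m → ℝ))
    {P : Set (Fin (m+1) → ℝ)} (hconv : Convex ℝ P)
    {x₀ : Fin (m+1) → ℝ} (hx₀ : x₀ ∈ interior P) {y : Fin m → ℝ}
    (hy : y ∈ interior (π '' P)) : ∃ x ∈ interior P, π x = y := by
  obtain ⟨r, hr, hball⟩ := Metric.isOpen_iff.1 isOpen_interior y hy
  set θ : ℝ := r / (2 * (‖y - π x₀‖ + 1)) with hθdef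
  have hθpos : 0 < θ := by positivity
  have hy' : y + θ • (y - π x₀) ∈ π '' P := by
    apply interior_subset
    apply hball
    rw [mem_ball, dist_eq_norm]
    have : y + θ • (y - π x₀) - y = θ • (y - π x₀) := by abel
    rw [this, norm_smul, Real.norm_eq_abs, abs_of_pos hθpos]
    rw [hθdef]
    rw [div_mul_eq_mul_div, div_lt_iff₀ (by positivity)]
    nlinarith [norm_nonneg (y - π x₀)]
  obtain ⟨x', hx', hπx'⟩ := hy'
  have h1θ : (0:ℝ) < 1 + θ := by positivity
  refine ⟨(θ/(1+θ)) • x₀ + (1/(1+θ)) • x', ?_, ?_⟩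
  · apply hconv.combo_interior_self_mem_interior hx₀ hx' (by positivity)
      (by positivity)
    field_simp
    ring
  · rw [map_add, LinearMap.map_smul, LinearMap.map_smul, hπx']
    rw [smul_add, smul_smul]
    have hexp : (θ/(1+θ)) • π x₀ + ((1/(1+θ)) • y + (1/(1+θ) * θ) • (y - π x₀)) = y := by
      rw [smul_sub]
      have e1 : (θ/(1+θ)) • π x₀ - (1/(1+θ) * θ) • π x₀ = 0 := by
        rw [← sub_smul]
        have : θ/(1+θ) - 1/(1+θ) * θ = 0 := by ring
        rw [this, zero_smul]
      have e2 : (1/(1+θ)) • y + (1/(1+θ) * θ) • y = y := by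
        rw [← add_smul]
        have : 1/(1+θ) + 1/(1+θ) * θ = 1 := by field_simp
        rw [this, one_smul]
      calc (θ/(1+θ)) • π x₀ + ((1/(1+θ)) • y + ((1/(1+θ) * θ) • y - (1/(1+θ) * θ) • π x₀))
          = ((θ/(1+θ)) • π x₀ - (1/(1+θ) * θ) • π x₀) + ((1/(1+θ)) • y + (1/(1+θ) * θ) • y) := by
            abel
        _ = 0 + y := by rw [e1, e2]
        _ = y := zero_add y
    exact hexp

lemma width_proj {m : ℕ} (π : (Fin (m+1) → ℝ) →ₗ[ℝ] (Fin m → ℝ))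
    (hlat : ∀ z : Fin (m+1) → ℤ, π (zc z) ∈ intPts m)
    (honto : ∀ y : Fin m → ℤ, ∃ z : Fin (m+1) → ℤ, π (zc z) = zc y)
    (P : Set (Fin (m+1) → ℝ)) :
    latticeWidth P ≤ latticeWidth (π '' P) := by
  classical
  have hcol : ∀ i : Fin (m+1), ∃ col : Fin m → ℤ, π (zc (Pi.single i 1)) = zc col := by
    intro i
    obtain ⟨z, hz⟩ := mem_intPts_iff.1 (hlat (Pi.single i 1))
    exact ⟨z, hz⟩
  choose col hcol using hcol
  rw [latticeWidth, latticeWidth]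
  apply le_iInf
  rintro ⟨u', hu'⟩
  set u : Fin (m+1) → ℤ := fun i => ∑ j, u' j * col i j with hudef
  have hπdecomp : ∀ x : Fin (m+1) → ℝ, π x = ∑ i, x i • zc (col i) := by
    intro x
    have hx : x = ∑ i, x i • zc (Pi.single i (1:ℤ)) := by
      simp only [zc_single]
      exact pi_eq_sum_univ x |>.trans (by
        apply Finset.sum_congr rfl
        intro i _
        congr 1
        funext j
        rcases eq_or_ne j i with rfl | hj
        · simp
        · simp [Pi.single_eq_of_ne hj, if_neg (Ne.symm hj)])
    conv_lhs => rw [hx]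
    rw [map_sum]
    apply Finset.sum_congr rfl
    intro i _
    rw [LinearMap.map_smul, hcol]
  have hkey : ∀ x : Fin (m+1) → ℝ, (∑ j, (u' j : ℝ) * (π x) j) = ∑ i, (u i : ℝ) * x i := by
    intro x
    rw [hπdecomp]
    have h1 : ∀ j, (∑ i, x i • zc (col i)) j = ∑ i, x i * (col i j : ℝ) := by
      intro j
      rw [Finset.sum_apply]
      apply Finset.sum_congr rfl
      intro i _
      simp [zc]
    simp only [h1, Finset.mul_sum]
    rw [Finset.sum_comm]
    apply Finset.sum_congr rfl
    intro i _
    rw [hudef]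
    push_cast
    rw [Finset.sum_mul]
    apply Finset.sum_congr rfl
    intro j _
    ring
  have hune : u ≠ 0 := by
    intro hu0
    apply hu'
    obtain ⟨z, hz⟩ := honto u'
    have h2 := hkey (zc z)
    rw [hz] at h2
    have h3 : (∑ j, (u' j : ℝ) * (zc u') j) = 0 := by
      rw [h2]
      apply Finset.sum_eq_zero
      intro i _
      rw [hu0]
      simp
    have h4 : (∑ j, ((u' j : ℝ))^2) = 0 := by
      rw [← h3]
      apply Finset.sum_congr rfl
      intro j _
      simp [zc]
      ring
    funext j
    have h5 := (Finset.sum_eq_zero_iff_of_nonneg (fun j _ => sq_nonneg ((u' j : ℝ)))).1 h4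
      j (Finset.mem_univ j)
    have h6 : (u' j : ℝ) = 0 := by
      have := sq_eq_zero_iff.1 h5
      exact this
    exact_mod_cast h6
  apply iInf_le_of_le ⟨u, hune⟩
  apply le_of_eq
  have himg : ((fun y => ∑ j, (u' j : ℝ) * y j) '' (π '' P))
      = ((fun x => ∑ i, (u i : ℝ) * x i) '' P) := by
    rw [Set.image_image]
    apply Set.image_congr
    intro x _
    exact hkey x
  rw [himg]

lemma far_point {R : Set (Fin n → ℝ)} (hR : IsLatticePolytope R) {N : ℝ}
    (hnot : ¬ R ⊆ closedBall 0 N) :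
    ∃ q, q ∈ intPts n ∧ q ∈ R ∧ N < ‖q‖ := by
  by_contra h
  push_neg at h
  apply hnot
  obtain ⟨V, hVf, hVne, hVsub, rfl⟩ := hR
  apply convexHull_min ?_ (convex_closedBall 0 N)
  intro v hv
  rw [mem_closedBall_zero_iff]
  exact h v (hVsub hv) (subset_convexHull _ _ hv)

lemma caseB {m : ℕ} {P : Set (Fin (m+1) → ℝ)}
    (hP : IsLatticePolytope P) (hfull : IsFullDim P) (hhol : Hollow P)
    (hfar : ∀ N : ℕ, ∃ q, q ∈ intPts (m+1) ∧ ((N:ℝ) < ‖q‖ ∧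
      Hollow (convexHull ℝ (P ∪ {q})))) :
    ∃ T : Set (Fin m → ℝ), IsLatticePolytope T ∧ IsFullDim T ∧ Hollow T ∧
      latticeWidth P ≤ latticeWidth T := by
  classical
  -- interior point and ball
  obtain ⟨x₀, hx₀⟩ := ((lp_convex hP).interior_nonempty_iff_affineSpan_eq_top).2 hfull
  -- far hollow points
  choose q hqI hq using hfar
  set K₀ : ℕ := ⌈‖x₀‖⌉₊ + 1 with hK₀def
  set Q : ℕ → (Fin (m+1) → ℝ) := fun j => q (j + K₀) with hQdef
  set R : ℕ → ℝ := fun j => ‖Q j - x₀‖ with hRdef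
  have hRge : ∀ j : ℕ, (j:ℝ) + 1 ≤ R j := by
    intro j
    have h1 : ((j + K₀ : ℕ) : ℝ) < ‖Q j‖ := (hq (j + K₀)).1
    have h2 : ‖x₀‖ ≤ (⌈‖x₀‖⌉₊ : ℝ) := Nat.le_ceil _
    have h3 : ‖Q j‖ - ‖x₀‖ ≤ R j := by
      rw [hRdef]
      exact (norm_sub_norm_le _ _)
    have h4 : ((j + K₀ : ℕ) : ℝ) = (j:ℝ) + (⌈‖x₀‖⌉₊ : ℝ) + 1 := by
      rw [hK₀def]; push_cast; ring
    linarith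
  have hRpos : ∀ j : ℕ, 0 < R j := fun j => lt_of_lt_of_le (by positivity) (hRge j)
  set d : ℕ → (Fin (m+1) → ℝ) := fun j => (R j)⁻¹ • (Q j - x₀) with hddef
  have hdmem : ∀ j : ℕ, d j ∈ sphere (0 : Fin (m+1) → ℝ) 1 := by
    intro j
    rw [mem_sphere_zero_iff_norm, hddef]
    simp only
    rw [norm_smul, Real.norm_eq_abs, abs_of_pos (inv_pos.2 (hRpos j))]
    have hRr : ‖Q j - x₀‖ = R j := rfl
    rw [hRr]
    exact inv_mul_cancel₀ (ne_of_gt (hRpos j))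
  obtain ⟨v, hv, φ, hφ, hdconv⟩ :=
    (isCompact_sphere (0 : Fin (m+1) → ℝ) 1).tendsto_subseq hdmem
  rw [mem_sphere_zero_iff_norm] at hv
  simp only [Function.comp_def] at hdconv
  -- the tube around the ray from any ball in P is lattice-free
  have htube : ∀ (x : Fin (m+1) → ℝ) (ρ : ℝ), 0 < ρ → ball x ρ ⊆ P →
      ∀ t : ℝ, 0 ≤ t → ∀ y ∈ ball (x + t • v) (ρ/4), y ∉ intPts (m+1) := by
    intro x ρ hρ hsub t ht y hyball hyI
    rw [Metric.tendsto_atTop] at hdconv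
    obtain ⟨J₁, hJ₁⟩ := hdconv (ρ/(8*(t+1))) (by positivity)
    set j : ℕ := max J₁ (⌈2*t⌉₊ + ⌈8*t*(‖x₀ - x‖+1)/ρ⌉₊) with hjdef
    have hjJ₁ : J₁ ≤ j := le_max_left _ _
    have hjc : (⌈2*t⌉₊ + ⌈8*t*(‖x₀ - x‖+1)/ρ⌉₊ : ℕ) ≤ j := le_max_right _ _
    have hRj : 0 < R (φ j) := hRpos _
    have hRjge : (j:ℝ) + 1 ≤ R (φ j) := by
      have := hRge (φ j)
      have hφj : (j:ℝ) ≤ ((φ j : ℕ) : ℝ) := by exact_mod_cast hφ.le_apply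
      linarith
    have hR2t : 2*t + 1 ≤ R (φ j) := by
      have h1 : (2*t : ℝ) ≤ (⌈2*t⌉₊ : ℝ) := Nat.le_ceil _
      have h2 : ((⌈2*t⌉₊ : ℕ) : ℝ) ≤ (j:ℝ) := by
        exact_mod_cast le_trans (Nat.le_add_right _ _) hjc
      linarith
    have hR8t : 8*t*(‖x₀ - x‖+1)/ρ + 1 ≤ R (φ j) := by
      have h1 : (8*t*(‖x₀ - x‖+1)/ρ : ℝ) ≤ (⌈8*t*(‖x₀ - x‖+1)/ρ⌉₊ : ℝ) := Nat.le_ceil _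
      have h2 : ((⌈8*t*(‖x₀ - x‖+1)/ρ⌉₊ : ℕ) : ℝ) ≤ (j:ℝ) := by
        exact_mod_cast le_trans (Nat.le_add_left _ _) hjc
      linarith
    have hdist : dist (d (φ j)) v < ρ/(8*(t+1)) := hJ₁ j hjJ₁
    set lam : ℝ := t / R (φ j) with hlamdef
    have hlam0 : 0 ≤ lam := div_nonneg ht hRj.le
    have hlamhalf : lam ≤ 1/2 := by
      rw [hlamdef, div_le_iff₀ hRj]
      linarith
    have h1lam : (0:ℝ) < 1 - lam := by linarith
    have hlamR : lam * R (φ j) = t := div_mul_cancel₀ t (ne_of_gt hRj)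
    have hlamx : lam * ‖x₀ - x‖ < ρ/8 := by
      have h8 : 8*t*(‖x₀ - x‖+1) < ρ * R (φ j) := by
        have he : ρ * (8*t*(‖x₀ - x‖+1)/ρ + 1) = 8*t*(‖x₀-x‖+1) + ρ := by
          field_simp
        nlinarith [mul_le_mul_of_nonneg_left hR8t hρ.le]
      rw [hlamdef, div_mul_eq_mul_div, div_lt_iff₀ hRj]
      nlinarith [norm_nonneg (x₀ - x)]
    have hdv : ‖t • v - t • d (φ j)‖ < ρ/8 := by
      rw [← smul_sub, norm_smul, Real.norm_eq_abs, abs_of_nonneg ht]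
      have h1 : ‖v - d (φ j)‖ < ρ/(8*(t+1)) := by
        rw [norm_sub_rev, ← dist_eq_norm]
        exact hdist
      have h2 : t * ‖v - d (φ j)‖ ≤ t * (ρ/(8*(t+1))) :=
        mul_le_mul_of_nonneg_left h1.le ht
      have h3 : t * (ρ/(8*(t+1))) < ρ/8 := by
        rw [← mul_div_assoc]
        rw [div_lt_div_iff₀ (by positivity) (by norm_num : (0:ℝ) < 8)]
        nlinarith
      linarith
    -- the ball is inside the hollow hull
    have hsubset : ball (x + t • v) (ρ/4) ⊆ convexHull ℝ (P ∪ {Q (φ j)}) := by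
      intro y' hy'
      set wv : Fin (m+1) → ℝ := y' - x - t • d (φ j) - lam • (x₀ - x) with hwvdef
      set p : Fin (m+1) → ℝ := x + (1 - lam)⁻¹ • wv with hpdef
      have hwvbound : ‖wv‖ < ρ/2 := by
        have hsplit : wv = (y' - (x + t • v)) + (t • v - t • d (φ j)) - lam • (x₀ - x) := by
          rw [hwvdef]; abel
        rw [hsplit]
        have htri : ‖(y' - (x + t • v)) + (t • v - t • d (φ j)) - lam • (x₀ - x)‖ ≤
            ‖y' - (x + t • v)‖ + ‖t • v - t • d (φ j)‖ + ‖lam • (x₀ - x)‖ := by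
          calc ‖(y' - (x + t • v)) + (t • v - t • d (φ j)) - lam • (x₀ - x)‖
              ≤ ‖(y' - (x + t • v)) + (t • v - t • d (φ j))‖ + ‖lam • (x₀ - x)‖ :=
                norm_sub_le _ _
            _ ≤ ‖y' - (x + t • v)‖ + ‖t • v - t • d (φ j)‖ + ‖lam • (x₀ - x)‖ := by
                have := norm_add_le (y' - (x + t • v)) (t • v - t • d (φ j))
                linarith
        have hb1 : ‖y' - (x + t • v)‖ < ρ/4 := by
          rw [← dist_eq_norm]; exact hy'
        have hb3 : ‖lam • (x₀ - x)‖ < ρ/8 := by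
          rw [norm_smul, Real.norm_eq_abs, abs_of_nonneg hlam0]
          exact hlamx
        linarith
      have hpball : p ∈ ball x ρ := by
        rw [mem_ball, dist_eq_norm, hpdef, add_sub_cancel_left, norm_smul,
          Real.norm_eq_abs, abs_of_pos (inv_pos.2 h1lam)]
        have hinv2 : (1 - lam)⁻¹ ≤ 2 := by
          have h2 : (1:ℝ)/2 ≤ 1 - lam := by linarith
          calc (1 - lam)⁻¹ ≤ ((1:ℝ)/2)⁻¹ := by
                apply inv_anti₀ (by norm_num) h2
            _ = 2 := by norm_num
        calc (1 - lam)⁻¹ * ‖wv‖ ≤ 2 * ‖wv‖ :=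
              mul_le_mul_of_nonneg_right hinv2 (norm_nonneg _)
          _ < 2 * (ρ/2) := by linarith
          _ = ρ := by ring
      have hpP : p ∈ P := hsub hpball
      have e1 : (1 - lam) • p = (1 - lam) • x + wv := by
        rw [hpdef, smul_add, smul_smul, mul_inv_cancel₀ (ne_of_gt h1lam), one_smul]
      have eQ : R (φ j) • d (φ j) = Q (φ j) - x₀ := by
        rw [hddef]
        exact smul_inv_smul₀ (ne_of_gt hRj) _
      have e2 : lam • Q (φ j) = t • d (φ j) + lam • x₀ := by
        have hQeq : Q (φ j) = R (φ j) • d (φ j) + x₀ := by rw [eQ]; abel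
        rw [hQeq, smul_add, smul_smul, hlamR]
      have hcombo : (1 - lam) • p + lam • Q (φ j) = y' := by
        rw [e1, e2, hwvdef, sub_smul, one_smul, smul_sub]
        abel
      have hmem : (1 - lam) • p + lam • Q (φ j) ∈ convexHull ℝ (P ∪ {Q (φ j)}) := by
        apply (convex_convexHull ℝ (P ∪ {Q (φ j)}))
          (subset_convexHull _ _ (Or.inl hpP))
          (subset_convexHull _ _ (Or.inr rfl))
          (by linarith) hlam0 (by ring)
      rwa [hcombo] at hmem
    have hint : ball (x + t • v) (ρ/4) ⊆ interior (convexHull ℝ (P ∪ {Q (φ j)})) :=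
      interior_maximal hsubset isOpen_ball
    exact hollow_not_mem (hq (φ j + K₀)).2 (hint hyball) hyI
  -- the integer direction
  obtain ⟨w, hw0, hwH⟩ := exists_w v hv
  -- absorption
  have habs : ∀ (x : Fin (m+1) → ℝ) (ρ : ℝ), 0 < ρ → ball x ρ ⊆ P → ∀ s : ℝ,
      x + s • zc w ∉ intPts (m+1) := by
    intro x ρ hρ hsub s hyI
    have hsH := hwH s
    rw [Hset, Metric.mem_closure_iff] at hsH
    obtain ⟨b, hbS, hdistb⟩ := hsH (ρ/8) (by positivity)
    obtain ⟨t, ht, z, hzI, rfl⟩ := hbS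
    have hyz : (x + s • zc w) - z ∈ ball (x + t • v) (ρ/4) := by
      rw [mem_ball, dist_eq_norm]
      have hre : (x + s • zc w) - z - (x + t • v) = s • zc w - (t • v + z) := by abel
      rw [hre, ← dist_eq_norm]
      calc dist (s • zc w) (t • v + z) < ρ/8 := hdistb
        _ < ρ/4 := by linarith
    exact htube x ρ hρ hsub t ht _ hyz (intPts_sub hyI hzI)
  -- project
  obtain ⟨π, hlat, honto, hker⟩ := exists_proj w hw0
  refine ⟨π '' P, proj_lp π hlat hP, proj_fulldim π (proj_surj π honto) hfull, ?_,
    width_proj π hlat honto P⟩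
  rw [Hollow, Set.eq_empty_iff_forall_notMem]
  rintro y ⟨hyint, hyI⟩
  obtain ⟨x, hxint, hπx⟩ := interior_image_lift π (lp_convex hP) hx₀ hyint
  obtain ⟨ρ, hρ, hρball⟩ := Metric.isOpen_iff.1 isOpen_interior x hxint
  obtain ⟨zy, hzy⟩ := mem_intPts_iff.1 hyI
  obtain ⟨zq, hzq⟩ := honto zy
  have hker0 : π (zc zq - x) = 0 := by
    rw [map_sub, hzq, hπx, hzy, sub_self]
  obtain ⟨s, hs⟩ := (hker _).1 hker0
  have heq : x + s • zc w = zc zq := by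
    rw [← hs]; abel
  apply habs x ρ hρ (hρball.trans interior_subset) s
  rw [heq]
  exact zc_mem zq

lemma dichotomy {m : ℕ} {P : Set (Fin (m+1) → ℝ)} (hP : IsLatticePolytope P)
    (hfull : IsFullDim P) (hhol : Hollow P) :
    (∃ Q : Set (Fin (m+1) → ℝ), IsLatticePolytope Q ∧ IsFullDim Q ∧ Hollow Q ∧
      (∀ R, IsLatticePolytope R → IsFullDim R → Hollow R → ¬ Q ⊂ R) ∧
      latticeWidth P ≤ latticeWidth Q) ∨
    (∃ T : Set (Fin m → ℝ), IsLatticePolytope T ∧ IsFullDim T ∧ Hollow T ∧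
      latticeWidth P ≤ latticeWidth T) := by
  by_cases hA : ∃ N : ℕ, ∀ R : Set (Fin (m+1) → ℝ), IsLatticePolytope R → IsFullDim R →
      Hollow R → P ⊆ R → R ⊆ closedBall 0 (N:ℝ)
  · obtain ⟨N, hN⟩ := hA
    exact Or.inl (caseA hP hfull hhol (N:ℝ) hN)
  · right
    push_neg at hA
    apply caseB hP hfull hhol
    intro N
    obtain ⟨R, hR1, hR2, hR3, hRP, hRb⟩ := hA N
    obtain ⟨qq, hqI, hqR, hqN⟩ := far_point hR1 hRb
    refine ⟨qq, hqI, hqN, ?_⟩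
    apply hollow_mono ?_ hR3
    apply convexHull_min ?_ (lp_convex hR1)
    rintro x (hx | rfl)
    · exact hRP hx
    · exact hqR

lemma dim_zero_absurd {T : Set (Fin 0 → ℝ)} (hT1 : IsLatticePolytope T)
    (hT3 : Hollow T) : False := by
  have hTne := lp_nonempty hT1
  have hTuniv : T = Set.univ := by
    apply Set.eq_univ_of_forall
    intro x
    obtain ⟨y, hy⟩ := hTne
    rwa [Subsingleton.elim x y]
  rw [Hollow, hTuniv, interior_univ, Set.eq_empty_iff_forall_notMem] at hT3
  exact hT3 0 ⟨trivial, fun i => i.elim0⟩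

lemma main : ∀ (m : ℕ) (P : Set (Fin (m+1) → ℝ)),
    IsLatticePolytope P → IsFullDim P → Hollow P →
    ∃ d' : ℕ, 1 ≤ d' ∧ d' ≤ m+1 ∧ ∃ Q : Set (Fin d' → ℝ),
      IsLatticePolytope Q ∧ IsFullDim Q ∧ Hollow Q ∧
      (∀ R : Set (Fin d' → ℝ), IsLatticePolytope R → IsFullDim R → Hollow R → ¬ Q ⊂ R) ∧
      latticeWidth P ≤ latticeWidth Q := by
  intro m
  induction m with
  | zero =>
      intro P hP hfull hhol
      rcases dichotomy hP hfull hhol with ⟨Q, h1, h2, h3, h4, h5⟩ | ⟨T, hT1, hT2, hT3, hT4⟩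
      · exact ⟨1, le_rfl, le_rfl, Q, h1, h2, h3, h4, h5⟩
      · exact absurd hT3 (fun h => dim_zero_absurd hT1 h)
  | succ m' ihm =>
      intro P hP hfull hhol
      rcases dichotomy hP hfull hhol with ⟨Q, h1, h2, h3, h4, h5⟩ | ⟨T, hT1, hT2, hT3, hT4⟩
      · exact ⟨m'+2, by omega, le_rfl, Q, h1, h2, h3, h4, h5⟩
      · obtain ⟨d', hd1, hd2, Q, hQ1, hQ2, hQ3, hQ4, hQ5⟩ := ihm T hT1 hT2 hT3
        exact ⟨d', hd1, by omega, Q, hQ1, hQ2, hQ3, hQ4, le_trans hT4 hQ5⟩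

end

end St10

/-- For every hollow lattice `d`-polytope `P` there are `1 ≤ d' ≤ d` and a maximal
hollow lattice `d'`-polytope `Q` with `latticeWidth P ≤ latticeWidth Q`. -/
theorem latticeWidth_le_maximal (d : ℕ) (P : Set (Fin d → ℝ))
    (hP : IsLatticePolytope P) (hfull : IsFullDim P) (hhollow : Hollow P) :
    ∃ d' : ℕ, 1 ≤ d' ∧ d' ≤ d ∧ ∃ Q : Set (Fin d' → ℝ),
      IsLatticePolytope Q ∧ IsFullDim Q ∧ Hollow Q ∧
      (∀ R : Set (Fin d' → ℝ), IsLatticePolytope R → IsFullDim R → Hollow R → ¬ Q ⊂ R) ∧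
      latticeWidth P ≤ latticeWidth Q := by
  cases d with
  | zero => exact absurd hhollow (fun h => St10.dim_zero_absurd hP h)
  | succ m => exact St10.main m P hP hfull hhollow
end

section
/- (Kannan–Lovász theorem, lattice polytope version.) Let s ≥ 1 be an integer and let P ⊂ ℝ^d be an s-hollow lattice d-polytope. Let 0 = Δ_0 < Δ_1 < ⋯ < Δ_d ≤ 1 be real numbers. Then there exist an index i ∈ {0, …, d−1} and a surjective affine map π : ℝ^d → ℝ^{d−i} with π(ℤ^d) = ℤ^{d−i} whose kernel direction space is spanned by vectors in sℤ^d, such that: (1) no point w ∈ interior(π(P)) ∩ sℤ^{d−i} is δ-central in π(P) for any δ > Δ_i; and (2) the (d−i)-dimensional Lebesgue volume of π(P) is at most s^{d−i}/(Δ_{i+1} − Δ_i)^{d−i}. -/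
open MeasureTheory
open scoped ENNReal

namespace KL

/-- cast an integer vector to a real vector -/
def latv {d : ℕ} (v : Fin d → ℤ) : Fin d → ℝ := fun i => (v i : ℝ)

lemma latv_mem_intPts {d : ℕ} (v : Fin d → ℤ) : latv v ∈ intPts d := fun i => ⟨v i, rfl⟩

lemma mem_intPts_iff {d : ℕ} {x : Fin d → ℝ} : x ∈ intPts d ↔ ∃ v : Fin d → ℤ, x = latv v := by
  constructor
  · intro h; choose v hv using h; exact ⟨v, funext hv⟩
  · rintro ⟨v, rfl⟩; exact latv_mem_intPts v

lemma mem_sPts_iff {s d : ℕ} {x : Fin d → ℝ} :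
    x ∈ sPts s d ↔ ∃ v : Fin d → ℤ, x = (s : ℝ) • latv v := by
  constructor
  · intro h; choose v hv using h
    exact ⟨v, funext fun i => by simpa [latv] using hv i⟩
  · rintro ⟨v, rfl⟩; exact fun i => ⟨v i, by simp [latv]⟩

lemma sPts_zero {s d : ℕ} : (0 : Fin d → ℝ) ∈ sPts s d := fun i => ⟨0, by simp⟩

lemma sPts_add {s d : ℕ} {a b : Fin d → ℝ} (ha : a ∈ sPts s d) (hb : b ∈ sPts s d) :
    a + b ∈ sPts s d := by
  intro i
  obtain ⟨x, hx⟩ := ha i; obtain ⟨y, hy⟩ := hb i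
  refine ⟨x + y, ?_⟩
  have : (a + b) i = a i + b i := rfl
  rw [this, hx, hy]; push_cast; ring

lemma sPts_sub {s d : ℕ} {a b : Fin d → ℝ} (ha : a ∈ sPts s d) (hb : b ∈ sPts s d) :
    a - b ∈ sPts s d := by
  intro i
  obtain ⟨x, hx⟩ := ha i; obtain ⟨y, hy⟩ := hb i
  refine ⟨x - y, ?_⟩
  have : (a - b) i = a i - b i := rfl
  rw [this, hx, hy]; push_cast; ring

lemma sPts_smul_latv {s d : ℕ} (k : ℤ) (v : Fin d → ℤ) :
    ((s : ℝ) * (k : ℝ)) • latv v ∈ sPts s d := by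
  intro i
  refine ⟨k * v i, ?_⟩
  have : (((s : ℝ) * (k : ℝ)) • latv v) i = ((s : ℝ) * (k : ℝ)) * (v i : ℝ) := rfl
  rw [this]; push_cast; ring

/-- The covering property: the fiber of `π` through `p₀`, scaled by `t`, covers the direction
space of the fiber modulo the lattice `sℤ^d ∩ ker π`. -/
def Cov (s : ℕ) {d n : ℕ} (P : Set (Fin d → ℝ)) (π : (Fin d → ℝ) →ₗ[ℝ] (Fin n → ℝ))
    (p₀ : Fin d → ℝ) (t : ℝ) : Prop :=
  p₀ ∈ P ∧ ∀ u : Fin d → ℝ, π u = 0 →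
    ∃ p ∈ P, π p = π p₀ ∧ ∃ l, l ∈ sPts s d ∧ π l = 0 ∧ u = t • (p - p₀) + l

section Cov

variable {d n s : ℕ} {P : Set (Fin d → ℝ)} {π : (Fin d → ℝ) →ₗ[ℝ] (Fin n → ℝ)}
  {p₀ : Fin d → ℝ} {t : ℝ}

lemma Cov.mono (hconv : Convex ℝ P) (h : Cov s P π p₀ t) (h0 : 0 ≤ t) {t' : ℝ} (htt' : t ≤ t') :
    Cov s P π p₀ t' := by
  obtain ⟨hp₀, hc⟩ := h
  rcases eq_or_lt_of_le htt' with rfl | hlt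
  · exact ⟨hp₀, hc⟩
  have ht'0 : 0 < t' := lt_of_le_of_lt h0 hlt
  refine ⟨hp₀, fun u hu => ?_⟩
  obtain ⟨p, hp, hπp, l, hl, hπl, hrep⟩ := hc u hu
  refine ⟨(t / t') • p + (1 - t / t') • p₀,
    hconv hp hp₀ (by positivity) (by rw [sub_nonneg, div_le_one ht'0]; exact htt') (by ring),
    ?_, l, hl, hπl, ?_⟩
  · simp only [map_add, _root_.map_smul, hπp]
    module
  · rw [hrep]
    congr 1
    have ht'ne : t' ≠ 0 := ne_of_gt ht'0
    match_scalars <;> (field_simp; try ring)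

lemma Cov.scale (hconv : Convex ℝ P) (h : Cov s P π p₀ t) {r : Fin d → ℝ} (hr : r ∈ P)
    {a : ℝ} (ha : 0 < a) (ha1 : a ≤ 1) :
    Cov s P π (a • p₀ + (1 - a) • r) (t / a) := by
  obtain ⟨hp₀, hc⟩ := h
  have hane : a ≠ 0 := ne_of_gt ha
  refine ⟨hconv hp₀ hr ha.le (by linarith) (by ring), fun u hu => ?_⟩
  obtain ⟨p, hp, hπp, l, hl, hπl, hrep⟩ := hc u hu
  refine ⟨a • p + (1 - a) • r, hconv hp hr ha.le (by linarith) (by ring), ?_, l, hl, hπl, ?_⟩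
  · simp only [map_add, _root_.map_smul, hπp]
  · rw [hrep]
    congr 1
    match_scalars <;> (field_simp; try ring)

/-- Key contradiction: a covered fiber at scale `t < 1` over a point of `s·ℤ` whose fiber
meets the interior of `P` yields an interior `s`-lattice point, contradicting hollowness. -/
lemma cov_contra (hconv : Convex ℝ P) (hhollow : SHollow s P)
    (hcov : Cov s P π p₀ t) (ht0 : 0 ≤ t) (ht1 : t < 1)
    {ω : Fin d → ℝ} (hω : ω ∈ sPts s d) (hπω : π ω = π p₀)
    {x₀ : Fin d → ℝ} (hx₀ : x₀ ∈ interior P) (hπx₀ : π x₀ = π p₀) : False := by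
  obtain ⟨hp₀, hc⟩ := hcov
  have hu : π (ω - (1 - t) • x₀ - t • p₀) = 0 := by
    simp only [map_sub, _root_.map_smul, hπω, hπx₀]
    module
  obtain ⟨p, hp, hπp, l, hl, hπl, hrep⟩ := hc _ hu
  have hpt : ω - l = (1 - t) • x₀ + t • p := by
    linear_combination (norm := module) hrep
  have hmem : ω - l ∈ interior P := by
    rw [hpt]
    exact hconv.combo_interior_self_mem_interior hx₀ hp (by linarith) ht0 (by ring)
  have hsp : ω - l ∈ sPts s d := sPts_sub hω hl
  exact Set.eq_empty_iff_forall_notMem.mp hhollow _ ⟨hmem, hsp⟩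

end Cov

section Proj

variable {d n s : ℕ}

lemma surj_of_lat (π : (Fin d → ℝ) →ₗ[ℝ] (Fin n → ℝ)) (hlat : π '' intPts d = intPts n) :
    Function.Surjective π := by
  have hre : ∀ y ∈ intPts n, ∃ x, π x = y := by
    intro y hy
    rw [← hlat] at hy
    obtain ⟨x, _, hx⟩ := hy
    exact ⟨x, hx⟩
  have hr : LinearMap.range π = ⊤ := by
    rw [← top_le_iff]
    intro y _
    rw [pi_eq_sum_univ y]
    refine Submodule.sum_mem _ fun i _ => Submodule.smul_mem _ _ ?_
    obtain ⟨x, hx⟩ := hre (fun j => if i = j then (1:ℝ) else 0)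
      (fun j => ⟨if i = j then 1 else 0, by split <;> simp [*]⟩)
    exact ⟨x, hx⟩
  exact LinearMap.range_eq_top.mp hr

lemma exists_interior_preimage (π : (Fin d → ℝ) →ₗ[ℝ] (Fin n → ℝ))
    (hsurj : Function.Surjective π) {P : Set (Fin d → ℝ)} (hconv : Convex ℝ P)
    {x₁ : Fin d → ℝ} (hx₁ : x₁ ∈ interior P) {w : Fin n → ℝ}
    (hw : w ∈ interior (π '' P)) : ∃ x₀ ∈ interior P, π x₀ = w := by
  set y₁ := π x₁ with hy₁
  by_cases hwy : w = y₁
  · exact ⟨x₁, hx₁, hwy.symm⟩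
  obtain ⟨ε, hε, hball⟩ := Metric.isOpen_iff.mp isOpen_interior w hw
  have hny : 0 < ‖w - y₁‖ := by
    rw [norm_pos_iff, sub_ne_zero]; exact hwy
  set ε' := ε / (2 * ‖w - y₁‖) with hε'
  have hε'0 : 0 < ε' := by positivity
  have hw' : w + ε' • (w - y₁) ∈ π '' P := by
    apply interior_subset
    apply hball
    rw [Metric.mem_ball, dist_eq_norm]
    have : w + ε' • (w - y₁) - w = ε' • (w - y₁) := by module
    rw [this, norm_smul, Real.norm_eq_abs, abs_of_pos hε'0, hε']
    rw [div_mul_eq_mul_div]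
    rw [div_lt_iff₀ (by positivity)]
    nlinarith [hny, hε]
  obtain ⟨x', hx', hπx'⟩ := hw'
  set lam := 1 / (1 + ε') with hlam
  have h1ε : (0:ℝ) < 1 + ε' := by linarith
  have hlam0 : 0 < lam := by positivity
  have hlam1 : lam < 1 := by
    rw [hlam, div_lt_one h1ε]; linarith
  refine ⟨(1 - lam) • x₁ + lam • x', hconv.combo_interior_self_mem_interior hx₁ hx'
    (by linarith) hlam0.le (by ring), ?_⟩
  simp only [map_add, _root_.map_smul, hπx']
  rw [← hy₁]
  have : (1 + ε') • w = (1 + ε') • ((1 - lam) • y₁ + lam • (w + ε' • (w - y₁))) := by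
    have hl : (1 + ε') • (lam • (w + ε' • (w - y₁))) = w + ε' • (w - y₁) := by
      rw [smul_smul, hlam]
      field_simp
      simp only [one_smul]
    rw [smul_add, hl]
    have h1l : (1 + ε') • ((1 - lam) • y₁) = ε' • y₁ := by
      rw [smul_smul]
      congr 1
      rw [hlam]
      field_simp
      ring
    rw [h1l]
    module
  have := smul_right_injective (Fin n → ℝ) (ne_of_gt h1ε) this
  exact this.symm

/-- there is an `s`-lattice point in the fiber over any point of `s·ℤ^n` -/
lemma exists_sPts_preimage (π : (Fin d → ℝ) →ₗ[ℝ] (Fin n → ℝ))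
    (hlat : π '' intPts d = intPts n) {w : Fin n → ℝ} (hw : w ∈ sPts s n) :
    ∃ ω ∈ sPts s d, π ω = w := by
  obtain ⟨v, rfl⟩ := mem_sPts_iff.mp hw
  have : latv v ∈ π '' intPts d := hlat ▸ latv_mem_intPts v
  obtain ⟨u, hu, hπu⟩ := this
  obtain ⟨u', rfl⟩ := mem_intPts_iff.mp hu
  refine ⟨(s : ℝ) • latv u', mem_sPts_iff.mpr ⟨u', rfl⟩, ?_⟩
  rw [_root_.map_smul, hπu]

end Proj

section NoCentral

variable {d n s : ℕ}

/-- Conclusion (1): given the covering invariant at scale `t`, no `s`-lattice point in the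
interior of `π(P)` is `δ`-central for `δ > t`. -/
lemma no_central (hn : n ≠ 0) {P : Set (Fin d → ℝ)} (hconv : Convex ℝ P)
    (hcpt : IsCompact P) (hne : P.Nonempty) (hhollow : SHollow s P)
    (hint : (interior P).Nonempty)
    {π : (Fin d → ℝ) →ₗ[ℝ] (Fin n → ℝ)} (hlat : π '' intPts d = intPts n)
    {p₀ : Fin d → ℝ} {t : ℝ} (hcov : Cov s P π p₀ t) (ht0 : 0 ≤ t)
    {w : Fin n → ℝ} (hw : w ∈ interior (π '' P)) (hwsp : w ∈ sPts s n)
    {δ : ℝ} (hδ : t < δ)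
    (hcent : ∀ y ∈ π '' P, ∃ z ∈ π '' P, z - w = δ • (z - y)) : False := by
  have hπcont : Continuous π := π.continuous_of_finiteDimensional
  have hQcpt : IsCompact (π '' P) := hcpt.image hπcont
  have hQne : (π '' P).Nonempty := hne.image _
  rcases lt_or_ge δ 1 with hδ1 | hδ1
  · -- use the covering invariant
    have hδ0 : 0 < δ := lt_of_le_of_lt ht0 hδ
    have hy₀ : π p₀ ∈ π '' P := ⟨p₀, hcov.1, rfl⟩
    obtain ⟨z, hz, hzc⟩ := hcent (π p₀) hy₀
    have hw' : w = δ • (π p₀) + (1 - δ) • z := by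
      linear_combination (norm := module) -hzc
    obtain ⟨r, hr, hπr⟩ := hz
    have hcov2 := hcov.scale hconv hr hδ0 hδ1.le
    have hπb : π (δ • p₀ + (1 - δ) • r) = w := by
      simp only [map_add, _root_.map_smul, hπr]
      rw [hw']
    obtain ⟨x₁, hx₁⟩ := hint
    obtain ⟨ω, hω, hπω⟩ := exists_sPts_preimage π hlat hwsp
    obtain ⟨x₀, hx₀, hπx₀⟩ := exists_interior_preimage π (surj_of_lat π hlat) hconv hx₁ hw
    exact cov_contra hconv hhollow hcov2 (by positivity)
      (by rw [div_lt_one hδ0]; exact hδ) hω (by rw [hπω, hπb])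
      hx₀ (by rw [hπx₀, hπb])
  · -- δ ≥ 1 : direct geometric contradiction using a maximizer of the first coordinate
    set i0 : Fin n := ⟨0, Nat.pos_of_ne_zero hn⟩
    obtain ⟨y, hyQ, hymax⟩ := hQcpt.exists_isMaxOn hQne
      ((continuous_apply i0).continuousOn)
    -- w i0 < y i0
    obtain ⟨ε, hε, hball⟩ := Metric.isOpen_iff.mp isOpen_interior w hw
    have hwball : w + (ε/2) • (Pi.single i0 1 : Fin n → ℝ) ∈ π '' P := by
      apply interior_subset
      apply hball
      rw [Metric.mem_ball, dist_eq_norm]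
      have : w + (ε/2) • (Pi.single i0 1 : Fin n → ℝ) - w = (ε/2) • (Pi.single i0 1 : Fin n → ℝ) := by module
      rw [this, norm_smul, Real.norm_eq_abs, abs_of_pos (by linarith)]
      have : ‖(Pi.single i0 1 : Fin n → ℝ)‖ = 1 := by
        simp [Pi.norm_single]
      rw [this]
      linarith
    have hwy : w i0 < y i0 := by
      have h1 := hymax hwball
      have h2 : (w + (ε/2) • (Pi.single i0 1 : Fin n → ℝ)) i0 = w i0 + ε/2 := by
        simp [Pi.single_apply]
      simp only [IsMaxOn, IsMaxFilter] at h1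
      calc w i0 < w i0 + ε/2 := by linarith
        _ = (w + (ε/2) • (Pi.single i0 1 : Fin n → ℝ)) i0 := h2.symm
        _ ≤ y i0 := h1
    obtain ⟨z, hz, hzc⟩ := hcent y hyQ
    have hzy : z i0 ≤ y i0 := hymax hz
    have hco : z i0 - w i0 = δ * (z i0 - y i0) := by
      have := congrFun hzc i0
      simpa using this
    nlinarith [hco, hzy, hδ1, hwy]

end NoCentral

section Chord

/-- Blichfeldt-type chord lemma: a convex body of volume `> c^N` contains a chord of
lattice-direction length `> c`. -/
lemma exists_chord {N : ℕ} (hN : 0 < N) {Q : Set (Fin N → ℝ)} (hconv : Convex ℝ Q)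
    (hne : Q.Nonempty) (hcpt : IsCompact Q)
    {c : ℝ} (hc : 0 < c) (hvol : ENNReal.ofReal (c ^ N) < volume Q) :
    ∃ (m : Fin N → ℤ) (q : Fin N → ℝ) (β : ℝ), m ≠ 0 ∧ c < β ∧ q ∈ Q ∧ q + β • latv m ∈ Q := by
  classical
  open Pointwise in
  obtain ⟨xs, hxs⟩ := hne
  have hfin : volume Q ≠ ⊤ := hcpt.measure_lt_top.ne
  set V : ℝ := (volume Q).toReal with hV
  have hcV : c ^ N < V := by
    rw [← ENNReal.ofReal_lt_iff_lt_toReal (by positivity) hfin]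
    exact hvol
  have hV0 : 0 < V := lt_trans (by positivity) hcV
  set η : ℝ := (V - c ^ N) / (2 * N * V) with hη
  clear_value η
  have hN0 : (0:ℝ) < N := by exact_mod_cast hN
  have hη0 : 0 < η := by
    rw [hη]
    apply div_pos (by linarith) (by positivity)
  have hN1 : (1:ℝ) ≤ N := by exact_mod_cast hN
  have hη1 : η < 1 := by
    rw [hη, div_lt_one (by positivity)]
    nlinarith [pow_pos hc N, mul_le_mul_of_nonneg_right hN1 hV0.le]
  have h1η : (0:ℝ) < 1 - η := by linarith
  have hηN : c ^ N < (1 - η) ^ N * V := by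
    have hb : 1 + (N:ℝ) * (-η) ≤ (1 + (-η)) ^ N := by
      apply one_add_mul_le_pow
      linarith
    have h1 : 1 - (N:ℝ) * η ≤ (1 - η)^N := by
      have e1 : 1 + (N:ℝ) * (-η) = 1 - N * η := by ring
      have e2 : (1 + (-η)) = 1 - η := by ring
      rw [e1, e2] at hb
      exact hb
    have h2 : (N:ℝ) * η * V = (V - c^N)/2 := by
      rw [hη]
      field_simp
    nlinarith [pow_pos hc N]
  -- the shrunken and rescaled body
  set S : Set (Fin N → ℝ) := AffineMap.homothety xs (1 - η) '' Q with hS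
  set T : Set (Fin N → ℝ) := c⁻¹ • S with hT
  have hdim : Module.finrank ℝ (Fin N → ℝ) = N := by
    simp [Module.finrank_fintype_fun_eq_card]
  have hvolS : volume S = ENNReal.ofReal ((1-η)^N) * volume Q := by
    rw [hS, Measure.addHaar_image_homothety, hdim, abs_of_pos (pow_pos h1η N)]
  have hvolT : volume T = ENNReal.ofReal ((c⁻¹)^N) * volume S := by
    rw [hT, Measure.addHaar_smul, hdim, abs_of_pos (pow_pos (inv_pos.mpr hc) N)]
  have hT1 : 1 < volume T := by
    have hA : ENNReal.ofReal (c ^ N) < ENNReal.ofReal ((1-η)^N) * volume Q := by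
      calc ENNReal.ofReal (c ^ N) < ENNReal.ofReal ((1-η)^N * V) := by
            rw [ENNReal.ofReal_lt_ofReal_iff (by nlinarith [pow_pos hc N])]
            exact hηN
        _ = ENNReal.ofReal ((1-η)^N) * ENNReal.ofReal V := by
            rw [ENNReal.ofReal_mul (by positivity)]
        _ = ENNReal.ofReal ((1-η)^N) * volume Q := by
            rw [hV, ENNReal.ofReal_toReal hfin]
    calc (1:ℝ≥0∞) = ENNReal.ofReal ((c⁻¹)^N) * ENNReal.ofReal (c^N) := by
          rw [← ENNReal.ofReal_mul (pow_nonneg (inv_nonneg.mpr hc.le) N)]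
          rw [show (c⁻¹)^N * c^N = 1 by rw [← mul_pow, inv_mul_cancel₀ hc.ne', one_pow]]
          simp
      _ < ENNReal.ofReal ((c⁻¹)^N) * (ENNReal.ofReal ((1-η)^N) * volume Q) := by
          exact ENNReal.mul_lt_mul_right
            (ne_of_gt (ENNReal.ofReal_pos.mpr (pow_pos (inv_pos.mpr hc) N)))
            ENNReal.ofReal_ne_top hA
      _ = volume T := by rw [hvolT, hvolS]
  -- Blichfeldt
  set b := Pi.basisFun ℝ (Fin N) with hb
  have hvolF : volume (ZSpan.fundamentalDomain b) = 1 := by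
    rw [ZSpan.volume_fundamentalDomain]
    have : (Matrix.of ⇑b) = (1 : Matrix (Fin N) (Fin N) ℝ) := by
      ext i j
      simp [hb, Pi.basisFun_apply, Matrix.one_apply, Pi.single_apply, eq_comm]
    rw [this]
    simp
  have hScpt : IsCompact S := hcpt.image (AffineMap.homothety xs (1-η)).continuous_of_finiteDimensional
  have hTcpt : IsCompact T := by
    rw [hT]
    exact hScpt.smul _
  have hTmeas : NullMeasurableSet T volume := hTcpt.measurableSet.nullMeasurableSet
  haveI : Countable ↥(Submodule.span ℤ (Set.range ⇑b)).toAddSubgroup :=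
    (inferInstance : Countable ↥(Submodule.span ℤ (Set.range ⇑b)))
  have fund := ZSpan.isAddFundamentalDomain' b volume
  obtain ⟨x, y, hxy, hndis⟩ := exists_pair_mem_lattice_not_disjoint_vadd fund hTmeas
    (by rw [hvolF]; exact hT1)
  obtain ⟨u, hu1, hu2⟩ := Set.not_disjoint_iff.mp hndis
  obtain ⟨t1, ht1, hu1'⟩ := hu1
  obtain ⟨t2, ht2, hu2'⟩ := hu2
  -- z := t1 - t2 = y - x is a nonzero lattice vector
  set z : Fin N → ℝ := t1 - t2 with hz
  have h8 : (x:Fin N → ℝ) + t1 = (y:Fin N → ℝ) + t2 := by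
    have h9 := hu1'.trans hu2'.symm
    simpa [AddSubgroup.vadd_def, vadd_eq_add] using h9
  have hzval : z = (y:Fin N → ℝ) - (x:Fin N → ℝ) := by
    rw [hz]
    linear_combination (norm := module) h8
  have hzspan : z ∈ Submodule.span ℤ (Set.range ⇑b) := by
    rw [hzval]
    have hy2 : (y:Fin N → ℝ) ∈ Submodule.span ℤ (Set.range ⇑b) := y.2
    have hx2 : (x:Fin N → ℝ) ∈ Submodule.span ℤ (Set.range ⇑b) := x.2
    exact Submodule.sub_mem _ hy2 hx2
  have hzne : z ≠ 0 := by
    rw [hzval, sub_ne_zero]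
    intro hcontra
    exact hxy (Subtype.ext hcontra.symm)
  obtain ⟨m, hmz⟩ : ∃ m : Fin N → ℤ, z = latv m := by
    have := (Module.Basis.mem_span_iff_repr_mem ℤ b z).mp hzspan
    choose mm hmm using this
    refine ⟨mm, funext fun i => ?_⟩
    have h1 := hmm i
    rw [Pi.basisFun_repr] at h1
    exact h1.symm
  have hmne : m ≠ 0 := by
    rintro rfl
    apply hzne
    rw [hmz]
    funext i
    simp [latv]
  -- pull back to Q
  obtain ⟨s1, hs1, hts1⟩ := Set.mem_smul_set.mp ht1
  obtain ⟨s2, hs2, hts2⟩ := Set.mem_smul_set.mp ht2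
  have hsdiff : s1 - s2 = c • latv m := by
    have h1 : c • t1 = s1 := by
      rw [← hts1, smul_smul, mul_inv_cancel₀ (ne_of_gt hc), one_smul]
    have h2 : c • t2 = s2 := by
      rw [← hts2, smul_smul, mul_inv_cancel₀ (ne_of_gt hc), one_smul]
    have h3 : c • z = s1 - s2 := by
      rw [hz, smul_sub, h1, h2]
    rw [← h3, hmz]
  obtain ⟨q1, hq1, hsq1⟩ := hs1
  obtain ⟨q2, hq2, hsq2⟩ := hs2
  have hqdiff : (1 - η) • (q1 - q2) = c • latv m := by
    rw [← hsdiff, ← hsq1, ← hsq2]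
    simp only [AffineMap.homothety_apply, vsub_eq_sub, vadd_eq_add]
    module
  set β : ℝ := c / (1 - η) with hβ
  refine ⟨m, q2, β, hmne, ?_, hq2, ?_⟩
  · rw [hβ, lt_div_iff₀ h1η]
    nlinarith
  · have h10 : q2 + β • latv m = q1 := by
      have h4 : q1 - q2 = β • latv m := by
        have h5 : (1-η)⁻¹ • ((1-η) • (q1 - q2)) = q1 - q2 := by
          rw [smul_smul, inv_mul_cancel₀ (ne_of_gt h1η), one_smul]
        rw [← h5, hqdiff, smul_smul, hβ]
        congr 1
        field_simp
      linear_combination (norm := module) -h4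
    rw [h10]
    exact hq1

end Chord

section Rho

/-- Smith normal form construction of a lattice projection killing a given integer direction. -/
lemma exists_rho {n : ℕ} {m : Fin (n + 1) → ℤ} (hm : m ≠ 0) :
    ∃ (ρ : (Fin (n + 1) → ℝ) →ₗ[ℝ] (Fin n → ℝ)) (v : Fin (n + 1) → ℤ) (cI : ℤ),
      cI ≠ 0 ∧ m = cI • v ∧ ρ '' intPts (n + 1) = intPts n ∧
      LinearMap.ker ρ = Submodule.span ℝ {latv v} := by
  classical
  set N : Submodule ℤ (Fin (n+1) → ℤ) := Submodule.span ℤ {m} with hN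
  obtain ⟨r, snf⟩ := N.smithNormalForm (Pi.basisFun ℤ (Fin (n+1)))
  have hmN : m ∈ N := Submodule.mem_span_singleton_self m
  -- r = 1
  have hr1 : r = 1 := by
    rcases Nat.lt_or_ge r 1 with h0 | h1
    · exfalso
      have hre : r = 0 := by omega
      subst hre
      have h0 : (⟨m, hmN⟩ : N) = 0 := by
        apply snf.bN.repr.injective
        apply Finsupp.ext
        intro i
        exact absurd i.2 (by omega)
      have : m = 0 := congrArg Subtype.val h0
      exact hm this
    rcases Nat.lt_or_ge r 2 with h2 | h2
    · omega
    exfalso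
    set i0 : Fin r := ⟨0, by omega⟩
    set i1 : Fin r := ⟨1, by omega⟩
    obtain ⟨k₀, hk₀⟩ := Submodule.mem_span_singleton.mp (snf.bN i0).2
    obtain ⟨k₁, hk₁⟩ := Submodule.mem_span_singleton.mp (snf.bN i1).2
    have hb1ne : snf.bN i1 ≠ 0 := Module.Basis.ne_zero _ _
    have hk₁ne : k₁ ≠ 0 := by
      rintro rfl
      apply hb1ne
      apply Subtype.ext
      rw [← hk₁]
      simp
    have hb0 : k₁ • snf.bN i0 = k₀ • snf.bN i1 := by
      apply Subtype.ext
      push_cast [Submodule.coe_smul]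
      rw [← hk₀, ← hk₁, smul_smul, smul_smul, mul_comm]
    have hrepr := congrArg (snf.bN.repr) hb0
    rw [_root_.map_smul, _root_.map_smul, Module.Basis.repr_self, Module.Basis.repr_self] at hrepr
    have hat := DFunLike.congr_fun hrepr i0
    have hne : i1 ≠ i0 := by
      simp only [i0, i1, ne_eq, Fin.mk.injEq]
      omega
    simp [Finsupp.single_apply, hne] at hat
    exact hk₁ne hat
  subst hr1
  -- the primitive direction and its multiplier
  set i₀ : Fin (n+1) := snf.f 0 with hi₀
  set v : Fin (n+1) → ℤ := snf.bM i₀ with hv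
  have hmrep : m = (snf.bN.repr ⟨m, hmN⟩ 0 * snf.a 0) • v := by
    have h1 : (⟨m, hmN⟩ : N) = snf.bN.repr ⟨m, hmN⟩ 0 • snf.bN 0 := by
      conv_lhs => rw [← snf.bN.sum_repr ⟨m, hmN⟩]
      rw [Fin.sum_univ_one]
    have h2 : m = (snf.bN.repr ⟨m, hmN⟩ 0 : ℤ) • ((snf.bN 0 : N) : Fin (n+1) → ℤ) := by
      have h3 := congrArg Subtype.val h1
      simpa using h3
    rw [snf.snf 0, smul_smul] at h2
    exact h2
  set cI : ℤ := snf.bN.repr ⟨m, hmN⟩ 0 * snf.a 0 with hcI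
  have hcIne : cI ≠ 0 := by
    rintro h
    apply hm
    rw [hmrep, h, zero_smul]
  -- matrices
  set e := Pi.basisFun ℤ (Fin (n+1)) with he
  set A : Matrix (Fin (n+1)) (Fin (n+1)) ℤ := e.toMatrix ⇑snf.bM with hA
  set B : Matrix (Fin (n+1)) (Fin (n+1)) ℤ := snf.bM.toMatrix ⇑e with hB
  have hAB : A * B = 1 := Module.Basis.toMatrix_mul_toMatrix_flip e snf.bM
  have hBA : B * A = 1 := Module.Basis.toMatrix_mul_toMatrix_flip snf.bM e
  have hAcol : ∀ i j, A i j = snf.bM j i := by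
    intro i j
    rw [hA, Module.Basis.toMatrix_apply]
    simp [he]
  set AR : Matrix (Fin (n+1)) (Fin (n+1)) ℝ := A.map (Int.cast : ℤ → ℝ) with hAR
  set BR : Matrix (Fin (n+1)) (Fin (n+1)) ℝ := B.map (Int.cast : ℤ → ℝ) with hBR
  have hcastmulmat : ∀ C D : Matrix (Fin (n+1)) (Fin (n+1)) ℤ, C * D = 1 →
      C.map (Int.cast : ℤ → ℝ) * D.map (Int.cast : ℤ → ℝ) = 1 := by
    intro C D hCD
    ext i j
    have h1 : ((C * D) i j : ℝ) = ((1 : Matrix (Fin (n+1)) (Fin (n+1)) ℤ) i j : ℝ) := by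
      rw [hCD]
    rw [Matrix.mul_apply] at h1
    push_cast at h1
    rw [Matrix.mul_apply]
    simp only [Matrix.map_apply]
    rw [h1]
    by_cases hij : i = j <;> simp [Matrix.one_apply, hij]
  have hABR : AR * BR = 1 := hcastmulmat A B hAB
  have hBAR : BR * AR = 1 := hcastmulmat B A hBA
  -- casting commutes with mulVec
  have hcastmul : ∀ (C : Matrix (Fin (n+1)) (Fin (n+1)) ℤ) (w : Fin (n+1) → ℤ),
      (C.map (Int.cast : ℤ → ℝ)).mulVec (latv w) = latv (C.mulVec w) := by
    intro C w
    funext i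
    simp only [Matrix.mulVec, dotProduct, Matrix.map_apply, latv]
    push_cast
    rfl
  set ρ : (Fin (n+1) → ℝ) →ₗ[ℝ] (Fin n → ℝ) :=
    (LinearMap.funLeft ℝ ℝ (Fin.succAbove i₀)).comp (Matrix.mulVecLin BR) with hρ
  have hρapp : ∀ x : Fin (n+1) → ℝ, ρ x = fun j => BR.mulVec x (i₀.succAbove j) := by
    intro x
    rfl
  -- latv v is the i₀ column of AR
  have hvcol : AR.mulVec (Pi.single i₀ 1) = latv v := by
    funext i
    rw [Matrix.mulVec_single]
    simp only [Matrix.map_apply, mul_one, hAcol, latv, hAR]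
    simp [Matrix.col, hAcol, v]
  have hABv : ∀ x : Fin (n+1) → ℝ, AR.mulVec (BR.mulVec x) = x := by
    intro x
    rw [Matrix.mulVec_mulVec, hABR, Matrix.one_mulVec]
  have hBAv : ∀ x : Fin (n+1) → ℝ, BR.mulVec (AR.mulVec x) = x := by
    intro x
    rw [Matrix.mulVec_mulVec, hBAR, Matrix.one_mulVec]
  refine ⟨ρ, v, cI, hcIne, hmrep, ?_, ?_⟩
  · -- lattice image
    apply Set.eq_of_subset_of_subset
    · rintro y ⟨x, hx, rfl⟩
      obtain ⟨w, rfl⟩ := mem_intPts_iff.mp hx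
      rw [hρapp, hcastmul]
      exact fun j => ⟨(B.mulVec w) (i₀.succAbove j), rfl⟩
    · intro y hy
      obtain ⟨w, rfl⟩ := mem_intPts_iff.mp hy
      set wh : Fin (n+1) → ℤ := i₀.insertNth 0 w with hwh
      refine ⟨latv (A.mulVec wh), latv_mem_intPts _, ?_⟩
      rw [hρapp]
      have h1 : BR.mulVec (latv (A.mulVec wh)) = latv wh := by
        have h2 : latv (A.mulVec wh) = AR.mulVec (latv wh) := (hcastmul A wh).symm
        rw [h2, hBAv]
      rw [h1]
      funext j
      simp only [latv, hwh, Fin.insertNth_apply_succAbove]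
  · -- kernel
    apply le_antisymm
    · intro x hx
      have hx0 : ∀ j, BR.mulVec x (i₀.succAbove j) = 0 := by
        intro j
        have h5 := congrFun (LinearMap.mem_ker.mp hx) j
        rw [hρapp] at h5
        simpa using h5
      have hsingle : BR.mulVec x = Pi.single i₀ (BR.mulVec x i₀) := by
        funext j'
        rcases eq_or_ne j' i₀ with rfl | hne
        · simp
        · obtain ⟨j, rfl⟩ := Fin.exists_succAbove_eq hne
          rw [hx0 j, Pi.single_apply, if_neg (i₀.succAbove_ne j)]
      have hxv : x = (BR.mulVec x i₀) • latv v := by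
        have h7 : (Pi.single i₀ (BR.mulVec x i₀) : Fin (n+1) → ℝ)
            = (BR.mulVec x i₀) • (Pi.single i₀ 1 : Fin (n+1) → ℝ) := by
          funext j'
          rw [Pi.smul_apply, Pi.single_apply, Pi.single_apply]
          split <;> simp
        have h6 : AR.mulVec (Pi.single i₀ (BR.mulVec x i₀)) = (BR.mulVec x i₀) • latv v := by
          rw [h7, Matrix.mulVec_smul, hvcol]
        calc x = AR.mulVec (BR.mulVec x) := (hABv x).symm
          _ = AR.mulVec (Pi.single i₀ (BR.mulVec x i₀)) := by rw [← hsingle]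
          _ = _ := h6
      rw [hxv]
      exact Submodule.smul_mem _ _ (Submodule.mem_span_singleton_self _)
    · rw [Submodule.span_le]
      rintro x hx
      simp only [Set.mem_singleton_iff] at hx
      subst hx
      have : ρ (latv v) = 0 := by
        rw [hρapp, ← hvcol, hBAv]
        funext j
        simp [Pi.single_apply, i₀.succAbove_ne j]
      exact LinearMap.mem_ker.mpr this

end Rho

section Interp

variable {d n s : ℕ}

/-- interval of length `≥ s` contains a multiple of `s` -/
lemma exists_int_multiple_mem {s : ℕ} (hs : 1 ≤ s) {a b : ℝ} (h : a + s ≤ b) :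
    ∃ k : ℤ, a ≤ s * k ∧ s * k ≤ b := by
  have hs0 : (0:ℝ) < s := by exact_mod_cast hs
  refine ⟨⌈a / s⌉, ?_, ?_⟩
  · rw [mul_comm, ← div_le_iff₀ hs0]
    exact Int.le_ceil _
  · have h1 : (⌈a / s⌉ : ℝ) < a / s + 1 := Int.ceil_lt_add_one _
    have h2 : (s:ℝ) * (a / s + 1) = a + s := by field_simp
    nlinarith

/-- The interpolation lemma: from the covering invariant for `π` and a long chord of `π(P)` in
the integer direction `v`, obtain the covering invariant for `ρ ∘ π`. -/
lemma interp (hs : 1 ≤ s) {P : Set (Fin d → ℝ)} (hPconv : Convex ℝ P)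
    {π : (Fin d → ℝ) →ₗ[ℝ] (Fin (n + 1) → ℝ)} {ρ : (Fin (n + 1) → ℝ) →ₗ[ℝ] (Fin n → ℝ)}
    {v : Fin (n + 1) → ℤ} (hker : LinearMap.ker ρ = Submodule.span ℝ {latv v})
    {vt : Fin d → ℝ} (hvt : vt ∈ intPts d) (hπvt : π vt = latv v)
    {p₀ : Fin d → ℝ} {t : ℝ} (hcov : Cov s P π p₀ t) (ht0 : 0 ≤ t)
    {q : Fin (n + 1) → ℝ} {L : ℝ} (hq : q ∈ π '' P) (hq' : q + L • latv v ∈ π '' P) (hL : 0 < L)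
    {h : ℝ} (hh0 : 0 < h) (hh1 : h < 1)
    {t' : ℝ} (ht'1 : t / (1 - h) ≤ t') (ht'2 : (s : ℝ) / (h * L) ≤ t') :
    ∃ p₁, Cov s P (ρ.comp π) p₁ t' := by
  have hs0 : (0:ℝ) < s := by exact_mod_cast hs
  have hh1' : (0:ℝ) < 1 - h := by linarith
  have ht'0 : (0:ℝ) < t' := lt_of_lt_of_le (by positivity) ht'2
  have hvker : ρ (latv v) = 0 := by
    have : latv v ∈ LinearMap.ker ρ := by
      rw [hker]; exact Submodule.mem_span_singleton_self _
    exact this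
  obtain ⟨vt', hvt'⟩ := mem_intPts_iff.mp hvt
  obtain ⟨r0, hr0, hπr0⟩ := id hq
  set p₁ := (1 - h) • p₀ + h • r0 with hp₁
  have hp₁P : p₁ ∈ P := hPconv hcov.1 hr0 (by linarith) (by linarith) (by ring)
  refine ⟨p₁, hp₁P, ?_⟩
  intro u hu
  have h2 : π u ∈ Submodule.span ℝ {latv v} := by
    rw [← hker]
    exact LinearMap.mem_ker.mpr hu
  obtain ⟨c, hc⟩ := Submodule.mem_span_singleton.mp h2
  have hsL : (s:ℝ) ≤ t' * (h * L) := by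
    rw [div_le_iff₀ (by positivity)] at ht'2
    linarith
  obtain ⟨k, hk1, hk2⟩ := exists_int_multiple_mem hs (show (c - t' * (h * L)) + s ≤ c by linarith)
  set τ : ℝ := (c - s * k) / t' with hτ
  have hτ0 : 0 ≤ τ := div_nonneg (by linarith) ht'0.le
  have hτL : τ ≤ h * L := by
    rw [div_le_iff₀ ht'0]
    linarith
  have ht'τ : t' * τ = c - s * k := by
    rw [hτ]
    field_simp
  -- the point on the chord
  have hQconv : Convex ℝ (π '' P) := hPconv.linear_image π
  have hmidQ : q + (τ / h) • latv v ∈ π '' P := by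
    have hμ0 : 0 ≤ τ / (h * L) := div_nonneg hτ0 (by positivity)
    have hμ1 : τ / (h * L) ≤ 1 := by
      rw [div_le_one (by positivity)]
      exact hτL
    have hcomb := hQconv hq hq' (by linarith : (0:ℝ) ≤ 1 - τ / (h * L)) hμ0 (by ring)
    have he : (1 - τ / (h * L)) • q + (τ / (h * L)) • (q + L • latv v)
        = q + (τ / h) • latv v := by
      match_scalars <;> (field_simp; try ring)
    rwa [he] at hcomb
  obtain ⟨rτ, hrτ, hπrτ⟩ := hmidQ
  set pτ := (1 - h) • p₀ + h • rτ with hpτ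
  have hcovτ : Cov s P π pτ t' := by
    have hsc := hcov.scale hPconv hrτ hh1' (by linarith)
    have e : (1:ℝ) - (1 - h) = h := by ring
    rw [e] at hsc
    exact hsc.mono hPconv (by positivity) ht'1
  have hπdiff : π pτ - π p₁ = τ • latv v := by
    rw [hpτ, hp₁]
    simp only [map_add, _root_.map_smul, hπrτ, hπr0]
    have : (τ / h) * h = τ := by field_simp
    match_scalars <;> (field_simp; try ring)
  have hu' : π (u - ((s:ℝ) * (k:ℝ)) • vt - t' • (pτ - p₁)) = 0 := by
    simp only [map_sub, _root_.map_smul, hπvt]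
    rw [← hc, hπdiff]
    have : c • latv v - ((s:ℝ) * (k:ℝ)) • latv v - t' • τ • latv v
        = (c - (s:ℝ) * k - t' * τ) • latv v := by module
    rw [this, ht'τ]
    have : (c - (s:ℝ) * k - (c - (s:ℝ) * k)) = 0 := by ring
    rw [this, zero_smul]
  obtain ⟨p, hp, hπp, l, hl, hπl, hrep⟩ := hcovτ.2 _ hu'
  refine ⟨p, hp, ?_, l + ((s:ℝ) * (k:ℝ)) • vt, ?_, ?_, ?_⟩
  · show ρ (π p) = ρ (π p₁)
    rw [hπp]
    have : π pτ = π p₁ + τ • latv v := by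
      rw [← hπdiff]; module
    rw [this, map_add, _root_.map_smul, hvker, smul_zero, add_zero]
  · rw [hvt']
    exact sPts_add hl (sPts_smul_latv k vt')
  · show ρ (π (l + ((s:ℝ) * (k:ℝ)) • vt)) = 0
    simp only [map_add, _root_.map_smul, hπl, hπvt, hvker, smul_zero, add_zero,
      zero_add, map_zero]
  · have hrep' : u - ((s:ℝ) * (k:ℝ)) • vt - t' • (pτ - p₁) = t' • (p - pτ) + l := hrep
    linear_combination (norm := module) hrep'

lemma kerspan_comp {π : (Fin d → ℝ) →ₗ[ℝ] (Fin (n + 1) → ℝ)}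
    {ρ : (Fin (n + 1) → ℝ) →ₗ[ℝ] (Fin n → ℝ)} {v : Fin (n + 1) → ℤ}
    (hkπ : Submodule.span ℝ ((LinearMap.ker π : Set (Fin d → ℝ)) ∩ sPts s d) = LinearMap.ker π)
    (hkerρ : LinearMap.ker ρ = Submodule.span ℝ {latv v})
    {vt : Fin d → ℝ} (hvt : vt ∈ intPts d) (hπvt : π vt = latv v) (hs : 1 ≤ s) :
    Submodule.span ℝ ((LinearMap.ker (ρ.comp π) : Set (Fin d → ℝ)) ∩ sPts s d)
      = LinearMap.ker (ρ.comp π) := by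
  have hs0 : (0:ℝ) < s := by exact_mod_cast hs
  obtain ⟨vt', rfl⟩ := mem_intPts_iff.mp hvt
  apply le_antisymm
  · rw [Submodule.span_le]
    rintro x ⟨hx1, _⟩
    exact hx1
  · intro u hu
    have h1 : ρ (π u) = 0 := hu
    have h2 : π u ∈ Submodule.span ℝ {latv v} := by
      rw [← hkerρ]; exact LinearMap.mem_ker.mpr h1
    obtain ⟨c, hc⟩ := Submodule.mem_span_singleton.mp h2
    have hvker : ρ (latv v) = 0 := by
      have : latv v ∈ LinearMap.ker ρ := by
        rw [hkerρ]; exact Submodule.mem_span_singleton_self _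
      exact this
    have hsplit : u = (u - c • latv vt') + c • latv vt' := by module
    rw [hsplit]
    refine Submodule.add_mem _ ?_ ?_
    · have hk : u - c • latv vt' ∈ LinearMap.ker π := by
        rw [LinearMap.mem_ker, map_sub, _root_.map_smul, hπvt, ← hc, sub_self]
      rw [← hkπ] at hk
      refine Submodule.span_mono ?_ hk
      rintro x ⟨hx1, hx2⟩
      refine ⟨?_, hx2⟩
      have : π x = 0 := hx1
      show ρ (π x) = 0
      rw [this, map_zero]
    · have hmem : ((s:ℝ) * ((1:ℤ):ℝ)) • latv vt' ∈ sPts s d := sPts_smul_latv 1 vt'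
      have hker2 : ((s:ℝ) * ((1:ℤ):ℝ)) • latv vt' ∈ LinearMap.ker (ρ.comp π) := by
        rw [LinearMap.mem_ker, LinearMap.comp_apply, _root_.map_smul, hπvt, _root_.map_smul,
          hvker, smul_zero]
      have hbase : ((s:ℝ) * ((1:ℤ):ℝ)) • latv vt'
          ∈ Submodule.span ℝ ((LinearMap.ker (ρ.comp π) : Set (Fin d → ℝ)) ∩ sPts s d) :=
        Submodule.subset_span ⟨hker2, hmem⟩
      have := Submodule.smul_mem _ (c / ((s:ℝ) * ((1:ℤ):ℝ))) hbase
      have he : (c / ((s:ℝ) * ((1:ℤ):ℝ))) • (((s:ℝ) * ((1:ℤ):ℝ)) • latv vt') = c • latv vt' := by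
        rw [smul_smul]
        congr 1
        field_simp
      rwa [he] at this

end Interp

lemma latv_zsmul {d : ℕ} (k : ℤ) (v : Fin d → ℤ) : latv (k • v) = (k : ℝ) • latv v := by
  funext i
  simp only [latv, Pi.smul_apply, smul_eq_mul]
  push_cast
  ring

section Assemble

lemma final_package {d s : ℕ} {P : Set (Fin d → ℝ)} {Δi Δi1 : ℝ} {n m : ℕ} (e : n = m)
    (π : (Fin d → ℝ) →ₗ[ℝ] (Fin n → ℝ))
    (h1 : Function.Surjective π) (h2 : ⇑π '' intPts d = intPts n)
    (h3 : Submodule.span ℝ ((LinearMap.ker π : Set (Fin d → ℝ)) ∩ sPts s d) = LinearMap.ker π)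
    (h4 : ∀ w ∈ interior (⇑π '' P) ∩ sPts s n, ∀ δ : ℝ, Δi < δ →
      ¬ (∀ y ∈ ⇑π '' P, ∃ z ∈ ⇑π '' P, z - w = δ • (z - y)))
    (h5 : volume (⇑π '' P) ≤ ENNReal.ofReal ((s : ℝ) ^ n / (Δi1 - Δi) ^ n)) :
    ∃ π' : (Fin d → ℝ) →ᵃ[ℝ] (Fin m → ℝ),
      Function.Surjective π' ∧ ⇑π' '' intPts d = intPts m ∧
      Submodule.span ℝ ((LinearMap.ker π'.linear : Set (Fin d → ℝ)) ∩ sPts s d)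
        = LinearMap.ker π'.linear ∧
      (∀ w ∈ interior (⇑π' '' P) ∩ sPts s m, ∀ δ : ℝ, Δi < δ →
        ¬ (∀ y ∈ ⇑π' '' P, ∃ z ∈ ⇑π' '' P, z - w = δ • (z - y))) ∧
      volume (⇑π' '' P) ≤ ENNReal.ofReal ((s : ℝ) ^ m / (Δi1 - Δi) ^ m) := by
  subst e
  refine ⟨π.toAffineMap, ?_, ?_, ?_, ?_, ?_⟩ <;>
    simp only [LinearMap.coe_toAffineMap, LinearMap.toAffineMap_linear]
  · exact h1
  · exact h2
  · exact h3
  · exact h4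
  · exact h5

set_option maxHeartbeats 2000000 in
lemma loop (d s : ℕ) (hs : 1 ≤ s) (P : Set (Fin d → ℝ))
    (hconv : Convex ℝ P) (hcpt : IsCompact P) (hne : P.Nonempty)
    (hint : (interior P).Nonempty) (hhollow : SHollow s P)
    (Δ : ℕ → ℝ) (hΔ0 : Δ 0 = 0) (hmono : ∀ j < d, Δ j < Δ (j + 1)) (hΔd : Δ d ≤ 1) :
    ∀ n i : ℕ, i + n = d →
    ∀ π : (Fin d → ℝ) →ₗ[ℝ] (Fin n → ℝ),
      ⇑π '' intPts d = intPts n →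
      Submodule.span ℝ ((LinearMap.ker π : Set (Fin d → ℝ)) ∩ sPts s d) = LinearMap.ker π →
      (∃ p₀ t, 0 ≤ t ∧ t ≤ Δ i ∧ (i = 0 ∨ t < Δ i) ∧ Cov s P π p₀ t) →
      ∃ i' < d, ∃ π' : (Fin d → ℝ) →ᵃ[ℝ] (Fin (d - i') → ℝ),
        Function.Surjective π' ∧ ⇑π' '' intPts d = intPts (d - i') ∧
        Submodule.span ℝ ((LinearMap.ker π'.linear : Set (Fin d → ℝ)) ∩ sPts s d)
          = LinearMap.ker π'.linear ∧
        (∀ w ∈ interior (⇑π' '' P) ∩ sPts s (d - i'), ∀ δ : ℝ, Δ i' < δ →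
          ¬ (∀ y ∈ ⇑π' '' P, ∃ z ∈ ⇑π' '' P, z - w = δ • (z - y))) ∧
        volume (⇑π' '' P) ≤
          ENNReal.ofReal ((s : ℝ) ^ (d - i') / (Δ (i' + 1) - Δ i') ^ (d - i')) := by
  have hΔnn : ∀ j, j ≤ d → 0 ≤ Δ j := by
    intro j
    induction j with
    | zero => intro _; rw [hΔ0]
    | succ k ihk =>
      intro hk
      have h1 := hmono k (by omega)
      have h2 := ihk (by omega)
      linarith
  intro n
  induction n with
  | zero =>
    intro i hi π hlat hker hinv
    exfalso
    obtain ⟨p₀, t, ht0, htle, hdisj, hcov⟩ := hinv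
    have hid : i = d := by omega
    have ht1 : t < 1 := by
      rcases hdisj with h0 | hlt
      · subst h0
        rw [hΔ0] at htle
        linarith
      · subst hid
        linarith
    obtain ⟨x₀, hx₀⟩ := hint
    exact cov_contra hconv hhollow hcov ht0 ht1 sPts_zero (Subsingleton.elim _ _)
      hx₀ (Subsingleton.elim _ _)
  | succ n ih =>
    intro i hi π hlat hker hinv
    obtain ⟨p₀, t, ht0, htle, _, hcov⟩ := hinv
    have hiled : i < d := by omega
    have hgap : 0 < Δ (i + 1) - Δ i := by
      have := hmono i hiled
      linarith
    rcases le_or_gt (volume (⇑π '' P))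
      (ENNReal.ofReal ((s : ℝ) ^ (n+1) / (Δ (i + 1) - Δ i) ^ (n+1))) with hvle | hvgt
    · refine ⟨i, hiled, ?_⟩
      refine final_package (show n + 1 = d - i by omega) π (surj_of_lat π hlat) hlat hker
        ?_ hvle
      rintro w ⟨hw1, hw2⟩ δ hδ hcent
      exact no_central (Nat.succ_ne_zero n) hconv hcpt hne hhollow hint hlat hcov ht0
        hw1 hw2 (lt_of_le_of_lt htle hδ) hcent
    · -- step: find a long lattice chord and project along it
      have hs0 : (0:ℝ) < s := by exact_mod_cast hs
      obtain ⟨g, hg⟩ : ∃ g : ℝ, g = Δ (i + 1) - Δ i := ⟨_, rfl⟩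
      have hgap' : 0 < g := by rw [hg]; exact hgap
      obtain ⟨c, hcdef⟩ : ∃ c : ℝ, c = (s : ℝ) / g := ⟨_, rfl⟩
      have hc : 0 < c := by rw [hcdef]; exact div_pos hs0 hgap'
      have hQconv : Convex ℝ (⇑π '' P) := hconv.linear_image π
      have hQcpt : IsCompact (⇑π '' P) := hcpt.image π.continuous_of_finiteDimensional
      have hQne : (⇑π '' P).Nonempty := hne.image _
      have hvol' : ENNReal.ofReal (c ^ (n+1)) < volume (⇑π '' P) := by
        rw [hcdef, hg, div_pow]
        exact hvgt
      obtain ⟨mv, q, β, hmne, hcβ, hqm, hqm'⟩ :=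
        exists_chord (Nat.succ_pos n) hQconv hQne hQcpt hc hvol'
      obtain ⟨ρ, v, cI, hcIne, hmcv, hρlat, hρker⟩ := exists_rho hmne
      -- rewrite the chord in terms of v
      have hlatm : latv mv = (cI : ℝ) • latv v := by
        rw [hmcv, latv_zsmul]
      obtain ⟨q', L, hq'1, hq'2, hLc⟩ :
          ∃ q' L, q' ∈ ⇑π '' P ∧ q' + L • latv v ∈ ⇑π '' P ∧ c < L := by
        rcases lt_or_ge 0 cI with hpos | hneg
        · refine ⟨q, β * cI, hqm, ?_, ?_⟩
          · have he : q + (β * (cI:ℝ)) • latv v = q + β • latv mv := by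
              rw [hlatm, smul_smul]
            rw [he]
            exact hqm'
          · have h1 : (1:ℝ) ≤ (cI:ℝ) := by exact_mod_cast hpos
            nlinarith
        · have hneg' : cI < 0 := lt_of_le_of_ne hneg hcIne
          refine ⟨q + β • latv mv, β * (-cI), hqm', ?_, ?_⟩
          · have he : q + β • latv mv + (β * (-(cI:ℝ))) • latv v = q := by
              rw [hlatm, smul_smul]
              module
            rw [he]
            exact hqm
          · have h1 : (1:ℝ) ≤ -(cI:ℝ) := by
              have h2 : (cI:ℝ) ≤ -1 := by exact_mod_cast (show cI ≤ -1 by omega)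
              linarith
            nlinarith
      have hL0 : 0 < L := lt_trans hc hLc
      -- choose the interpolation parameter
      obtain ⟨D, hD⟩ : ∃ D : ℝ, D = Δ (i + 1) := ⟨_, rfl⟩
      have hΔinn : 0 ≤ Δ i := hΔnn i (by omega)
      have hD0 : 0 < D := by
        rw [hD]
        linarith
      have hDne : D ≠ 0 := ne_of_gt hD0
      have hsLg : (s:ℝ) < L * g := by
        rw [hcdef, div_lt_iff₀ hgap'] at hLc
        linarith
      have hgD : g ≤ D - t := by
        rw [hg, hD]
        linarith
      have hkey : (s:ℝ) / (L * D) < 1 - t / D := by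
        rw [div_lt_iff₀ (mul_pos hL0 hD0)]
        have e : (1 - t / D) * (L * D) = L * (D - t) := by
          field_simp
        rw [e]
        nlinarith [mul_le_mul_of_nonneg_left hgD hL0.le]
      obtain ⟨h, hh⟩ : ∃ h : ℝ, h = ((s:ℝ) / (L * D) + (1 - t / D)) / 2 := ⟨_, rfl⟩
      have hsLD0 : 0 < (s:ℝ) / (L * D) := div_pos hs0 (mul_pos hL0 hD0)
      have htD1 : t / D ≤ 1 := by
        rw [div_le_one hD0, hD]
        linarith
      have htD0 : 0 ≤ t / D := div_nonneg ht0 hD0.le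
      have hh0 : 0 < h := by
        rw [hh]
        linarith
      have hhb : h < 1 - t / D := by
        rw [hh]
        linarith
      have hh1 : h < 1 := by linarith
      obtain ⟨t'', ht''⟩ : ∃ t'' : ℝ, t'' = max (t / (1 - h)) ((s:ℝ) / (h * L)) := ⟨_, rfl⟩
      have ht''D : t'' < D := by
        rw [ht'']
        apply max_lt
        · rw [div_lt_iff₀ (show (0:ℝ) < 1 - h by linarith)]
          have h3 : t / D < 1 - h := by linarith
          rw [div_lt_iff₀ hD0] at h3
          nlinarith
        · rw [div_lt_iff₀ (mul_pos hh0 hL0)]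
          have h4 : (s:ℝ) / (L * D) < h := by rw [hh]; linarith
          rw [div_lt_iff₀ (mul_pos hL0 hD0)] at h4
          nlinarith
      have ht''0 : 0 ≤ t'' := by
        rw [ht'']
        exact le_trans (div_nonneg ht0 (by linarith)) (le_max_left _ _)
      -- lift of v
      obtain ⟨vt, hvt, hπvt⟩ : ∃ vt ∈ intPts d, π vt = latv v := by
        have hvm : latv v ∈ ⇑π '' intPts d := hlat ▸ latv_mem_intPts v
        obtain ⟨vt, hvt, hπvt⟩ := hvm
        exact ⟨vt, hvt, hπvt⟩
      obtain ⟨p₁, hcov'⟩ := interp hs hconv hρker hvt hπvt hcov ht0 hq'1 hq'2 hL0 hh0 hh1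
        (ht'' ▸ le_max_left _ _) (ht'' ▸ le_max_right _ _)
      -- recurse
      have hlat' : ⇑(ρ.comp π) '' intPts d = intPts n := by
        rw [LinearMap.coe_comp, Set.image_comp, hlat, hρlat]
      have hker' := kerspan_comp hker hρker hvt hπvt hs
      have ht''Δ : t'' < Δ (i + 1) := by rw [← hD]; exact ht''D
      exact ih (i + 1) (by omega) (ρ.comp π) hlat' hker'
        ⟨p₁, t'', ht''0, le_of_lt ht''Δ, Or.inr ht''Δ, hcov'⟩

end Assemble

end KL

/-- Kannan–Lovász, lattice polytope version. -/
theorem kannan_lovasz (d s : ℕ) (hs : 1 ≤ s) (P : Set (Fin d → ℝ))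
    (hP : IsLatticePolytope P) (hfull : IsFullDim P) (hhollow : SHollow s P)
    (Δ : ℕ → ℝ) (hΔ0 : Δ 0 = 0) (hmono : ∀ j < d, Δ j < Δ (j + 1)) (hΔd : Δ d ≤ 1) :
    ∃ i < d, ∃ π : (Fin d → ℝ) →ᵃ[ℝ] (Fin (d - i) → ℝ),
      Function.Surjective π ∧ π '' intPts d = intPts (d - i) ∧
      Submodule.span ℝ ((LinearMap.ker π.linear : Set (Fin d → ℝ)) ∩ sPts s d)
        = LinearMap.ker π.linear ∧
      (∀ w ∈ interior (π '' P) ∩ sPts s (d - i), ∀ δ : ℝ, Δ i < δ →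
        ¬ (∀ y ∈ π '' P, ∃ z ∈ π '' P, z - w = δ • (z - y))) ∧
      volume (π '' P) ≤ ENNReal.ofReal ((s : ℝ) ^ (d - i) / (Δ (i + 1) - Δ i) ^ (d - i)) := by
  classical
  obtain ⟨Vs, hVfin, hVne, hVint, hPeq⟩ := hP
  have hconv : Convex ℝ P := by rw [hPeq]; exact convex_convexHull ℝ Vs
  have hcpt : IsCompact P := by rw [hPeq]; exact hVfin.isCompact_convexHull (𝕜 := ℝ)
  have hne : P.Nonempty := by
    rw [hPeq]
    exact hVne.mono (subset_convexHull ℝ Vs)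
  have hint : (interior P).Nonempty := hconv.interior_nonempty_iff_affineSpan_eq_top.mpr hfull
  rcases Nat.eq_zero_or_pos d with rfl | hd0
  · exfalso
    obtain ⟨x, hx⟩ := hint
    exact Set.eq_empty_iff_forall_notMem.mp hhollow x ⟨hx, fun i => i.elim0⟩
  · obtain ⟨p₀, hp₀⟩ := id hne
    have hlat0 : ⇑(LinearMap.id : (Fin d → ℝ) →ₗ[ℝ] (Fin d → ℝ)) '' intPts d = intPts d := by
      simp
    have hker0 : Submodule.span ℝ
        ((LinearMap.ker (LinearMap.id : (Fin d → ℝ) →ₗ[ℝ] (Fin d → ℝ)) : Set (Fin d → ℝ))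
          ∩ sPts s d) = LinearMap.ker (LinearMap.id : (Fin d → ℝ) →ₗ[ℝ] (Fin d → ℝ)) := by
      rw [LinearMap.ker_id]
      apply le_antisymm
      · rw [Submodule.span_le]
        rintro x ⟨hx, _⟩
        exact hx
      · exact bot_le
    have hcov0 : KL.Cov s P (LinearMap.id : (Fin d → ℝ) →ₗ[ℝ] (Fin d → ℝ)) p₀ 0 := by
      refine ⟨hp₀, fun u hu => ?_⟩
      have hu0 : u = 0 := hu
      exact ⟨p₀, hp₀, rfl, 0, KL.sPts_zero, map_zero _, by simp [hu0]⟩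
    exact KL.loop d s hs P hconv hcpt hne hint hhollow Δ hΔ0 hmono hΔd d 0 (by omega)
      LinearMap.id hlat0 hker0 ⟨p₀, 0, le_refl 0, by rw [hΔ0], Or.inl rfl, hcov0⟩
end

section
/- Let P ⊂ ℝ^n be a compact convex set with nonempty interior, let w be an interior point of P, and let c > 0. If for every unit vector y ∈ ℝ^n one has sup{λ ≥ 0 : w + λ·y ∈ P} ≤ c · sup{λ ≥ 0 : w − λ·y ∈ P} (i.e. the coefficient of asymmetry of w in P is at most c), then w is (1/(c+1))-central in P: for every y ∈ P there exists z ∈ P with z − w = (1/(c+1))·(z − y). -/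
open MeasureTheory
open scoped ENNReal

/-- An interior point with coefficient of asymmetry at most `c` is
`1/(c+1)`-central. -/
theorem central_of_asymmetry (n : ℕ) (P : Set (Fin n → ℝ))
    (hcomp : IsCompact P) (hconv : Convex ℝ P)
    (w : Fin n → ℝ) (hw : w ∈ interior P) (c : ℝ) (hc : 0 < c)
    (hca : ∀ y : Fin n → ℝ, ‖y‖ = 1 →
      sSup {l : ℝ | 0 ≤ l ∧ w + l • y ∈ P} ≤ c * sSup {l : ℝ | 0 ≤ l ∧ w - l • y ∈ P}) :
    ∀ y ∈ P, ∃ z ∈ P, z - w = (1 / (c + 1)) • (z - y) := by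
  intro y hy
  have hwP : w ∈ P := interior_subset hw
  by_cases hyw : y = w
  · exact ⟨w, hwP, by simp [hyw]⟩
  set v : Fin n → ℝ := y - w with hv
  have hvne : v ≠ 0 := sub_ne_zero.mpr hyw
  have hvn : 0 < ‖v‖ := norm_pos_iff.mpr hvne
  set u : Fin n → ℝ := ‖v‖⁻¹ • v with hu
  have hun : ‖u‖ = 1 := by
    rw [hu, norm_smul, norm_inv, norm_norm, inv_mul_cancel₀ hvn.ne']
  obtain ⟨R, hR⟩ := hcomp.isBounded.subset_closedBall 0
  have hbdd : ∀ l : ℝ, ∀ s : Fin n → ℝ, w + l • s ∈ P → ‖s‖ = 1 → l ≤ R + ‖w‖ := by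
    intro l s hls hs
    by_cases hl : 0 ≤ l
    · have h1 : ‖w + l • s‖ ≤ R := by simpa using hR hls
      have : l = ‖(w + l • s) - w‖ := by
        simp [norm_smul, hs, abs_of_nonneg hl]
      rw [this]
      calc ‖(w + l • s) - w‖ ≤ ‖w + l • s‖ + ‖w‖ := norm_sub_le _ _
        _ ≤ R + ‖w‖ := by linarith
    · push_neg at hl
      have hR0 : 0 ≤ R + ‖w‖ := by
        have := hR hwP
        simp at this
        have := norm_nonneg w
        linarith
      linarith
  set S : Set ℝ := {l : ℝ | 0 ≤ l ∧ w - l • u ∈ P} with hS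
  set T : Set ℝ := {l : ℝ | 0 ≤ l ∧ w + l • u ∈ P} with hT
  have hTbdd : BddAbove T := by
    refine ⟨R + ‖w‖, fun l hl => hbdd l u hl.2 hun⟩
  have hSbdd : BddAbove S := by
    refine ⟨R + ‖w‖, fun l hl => ?_⟩
    refine hbdd l (-u) ?_ (by simpa using hun)
    simpa [sub_eq_add_neg, smul_neg] using hl.2
  have hvT : ‖v‖ ∈ T := by
    constructor
    · exact hvn.le
    · have : w + ‖v‖ • u = y := by
        rw [hu, smul_smul, mul_inv_cancel₀ hvn.ne', one_smul]
        simp [hv]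
      rw [this]; exact hy
  have hTle : ‖v‖ ≤ sSup T := le_csSup hTbdd hvT
  have hScle : ‖v‖ / c ≤ sSup S := by
    have := hca u hun
    rw [← hT, ← hS] at this
    rw [div_le_iff₀ hc]
    calc ‖v‖ ≤ sSup T := hTle
      _ ≤ c * sSup S := this
      _ = sSup S * c := mul_comm _ _
  -- sSup S ∈ S
  have hSne : S.Nonempty := ⟨0, le_refl 0, by simpa using hwP⟩
  have hSclosed : IsClosed S := by
    have : S = Set.Ici (0:ℝ) ∩ (fun l : ℝ => w - l • u) ⁻¹' P := by
      ext l; simp [hS, Set.mem_Ici, and_comm]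
    rw [this]
    exact isClosed_Ici.inter (hcomp.isClosed.preimage (by fun_prop))
  have hScompact : IsCompact S := by
    have hsub : S ⊆ Set.Icc 0 (R + ‖w‖) := by
      intro l hl
      exact ⟨hl.1, hbdd l (-u) (by simpa [sub_eq_add_neg, smul_neg] using hl.2) (by simpa using hun)⟩
    exact (isCompact_Icc).of_isClosed_subset hSclosed hsub
  have hMS : sSup S ∈ S := hScompact.sSup_mem hSne
  set M := sSup S with hM
  have hMpos : 0 < M := lt_of_lt_of_le (by positivity) hScle
  -- ‖v‖/c ∈ S by convexity
  set z : Fin n → ℝ := w - (‖v‖ / c) • u with hz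
  have hzP : z ∈ P := by
    have ht0 : 0 ≤ (‖v‖ / c) / M := by positivity
    have ht1 : (‖v‖ / c) / M ≤ 1 := by
      rw [div_le_one hMpos]; exact hScle
    have := hconv hwP hMS.2 (by linarith : (0:ℝ) ≤ 1 - (‖v‖ / c) / M) ht0 (by ring)
    have heq : (1 - (‖v‖ / c) / M) • w + ((‖v‖ / c) / M) • (w - M • u) = z := by
      rw [hz, smul_sub, smul_smul, div_mul_cancel₀ _ hMpos.ne']
      module
    rwa [heq] at this
  refine ⟨z, hzP, ?_⟩
  have huv : (‖v‖ / c) • u = c⁻¹ • v := by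
    rw [hu, smul_smul]
    congr 1
    field_simp
  have hzeq : z = w - c⁻¹ • v := by rw [hz, huv]
  have hyeq : y = w + v := by simp [hv]
  rw [hzeq, hyeq]
  have h1 : c ≠ 0 := hc.ne'
  have h2 : c + 1 ≠ 0 := by positivity
  match_scalars <;> (field_simp; try ring)
end
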